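/- arXiv:1805.06940 — 10 statements merged into one kernel-verified Lean document; each statement's English description precedes it below -/
import Mathlib

section
/- For every ω ∈ ℂ with ω ≠ 0 and every x ∈ ℝ, the Jost solution y1 admits the representation y1(x,ω) = (e^{iωd}/ω)·[ (s'(d,ω) − iω·s(d,ω))·c(x,ω) + (iω·c(d,ω) − c'(d,ω))·s(x,ω) ], where ' denotes the derivative with respect to x. -/
open Complex Filter Topology Asymptotics

/-- For a compactly supported continuous potential `q` on `[0,d]`,
for every `ω ≠ 0` and every `x ∈ ℝ`, the Jost solution `y1` admits the representation
`y1(x,ω) = (e^{iωd}/ω)·[(s'(d,ω) − iω·s(d,ω))·c(x,ω) + (iω·c(d,ω) − c'(d,ω))·s(x,ω)]`. -/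
theorem jost_y1_representation
    (d : ℝ) (hd : 0 < d) (q : ℝ → ℝ) (hq : Continuous q)
    (hqsupp : ∀ x : ℝ, x ∉ Set.Icc 0 d → q x = 0) (h : ℂ)
    (c c' s s' : ℂ → ℝ → ℂ)
    (hc : ∀ ω x, HasDerivAt (c ω) (c' ω x) x)
    (hc' : ∀ ω x, HasDerivAt (c' ω) (((q x : ℂ) - ω ^ 2) * c ω x) x)
    (hc0 : ∀ ω, c ω 0 = 1) (hc0' : ∀ ω, c' ω 0 = h)
    (hs : ∀ ω x, HasDerivAt (s ω) (s' ω x) x)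
    (hs' : ∀ ω x, HasDerivAt (s' ω) (((q x : ℂ) - ω ^ 2) * s ω x) x)
    (hs0 : ∀ ω, s ω 0 = 0) (hs0' : ∀ ω, s' ω 0 = ω)
    (y1 y1' : ℂ → ℝ → ℂ)
    (hy1 : ∀ ω, ω ≠ 0 → ∀ x, HasDerivAt (y1 ω) (y1' ω x) x)
    (hy1' : ∀ ω, ω ≠ 0 → ∀ x, HasDerivAt (y1' ω) (((q x : ℂ) - ω ^ 2) * y1 ω x) x)
    (hy1d : ∀ ω, ω ≠ 0 → y1 ω d = Complex.exp (Complex.I * ω * d))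
    (hy1d' : ∀ ω, ω ≠ 0 → y1' ω d = Complex.I * ω * Complex.exp (Complex.I * ω * d)) :
    ∀ ω : ℂ, ω ≠ 0 → ∀ x : ℝ,
      y1 ω x = Complex.exp (Complex.I * ω * d) / ω *
        ((s' ω d - Complex.I * ω * s ω d) * c ω x +
          (Complex.I * ω * c ω d - c' ω d) * s ω x) := by
  intro ω hω x
  -- Wronskian-type quantities
  set u : ℝ → ℂ := fun t => y1 ω t * s' ω t - y1' ω t * s ω t with hu
  set v : ℝ → ℂ := fun t => y1' ω t * c ω t - y1 ω t * c' ω t with hv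
  set w : ℝ → ℂ := fun t => c ω t * s' ω t - c' ω t * s ω t with hw
  have hu' : ∀ t, HasDerivAt u 0 t := by
    intro t
    have := (((hy1 ω hω t).mul (hs' ω t)).sub ((hy1' ω hω t).mul (hs ω t)))
    refine this.congr_deriv ?_
    ring
  have hv' : ∀ t, HasDerivAt v 0 t := by
    intro t
    have := (((hy1' ω hω t).mul (hc ω t)).sub ((hy1 ω hω t).mul (hc' ω t)))
    refine this.congr_deriv ?_
    ring
  have hw' : ∀ t, HasDerivAt w 0 t := by
    intro t
    have := (((hc ω t).mul (hs' ω t)).sub ((hc' ω t).mul (hs ω t)))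
    refine this.congr_deriv ?_
    ring
  have const : ∀ (f : ℝ → ℂ), (∀ t, HasDerivAt f 0 t) → ∀ a b : ℝ, f a = f b := by
    intro f hf a b
    exact is_const_of_deriv_eq_zero (fun t => (hf t).differentiableAt)
      (fun t => (hf t).deriv) a b
  have hux : u x = u d := const u hu' x d
  have hvx : v x = v d := const v hv' x d
  have hwx : w x = w 0 := const w hw' x 0
  have hw0 : w 0 = ω := by simp [hw, hc0, hs0, hs0']
  -- pointwise ring identity: u x * c x + v x * s x = y1 x * w x
  have key : u x * c ω x + v x * s ω x = y1 ω x * w x := by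
    simp only [hu, hv, hw]; ring
  have hud : u d = Complex.exp (Complex.I * ω * d) * (s' ω d - Complex.I * ω * s ω d) := by
    simp only [hu, hy1d ω hω, hy1d' ω hω]; ring
  have hvd : v d = Complex.exp (Complex.I * ω * d) * (Complex.I * ω * c ω d - c' ω d) := by
    simp only [hv, hy1d ω hω, hy1d' ω hω]; ring
  have : y1 ω x * ω = u d * c ω x + v d * s ω x := by
    rw [← hux, ← hvx, key, hwx, hw0]
  rw [hud, hvd] at this
  field_simp
  linear_combination this
end

section
/- For each fixed x ∈ ℝ, as ω → 0 in ℂ one has c(x,ω) = f0(x) + h·f1(x) + O(ω²) and c'(x,ω) = f0'(x) + h·f1'(x) + O(ω²), where ' denotes the derivative with respect to x. -/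
open Complex Filter Topology Asymptotics

/-- Two-sided Grönwall estimate with zero initial value at `0`. -/
lemma aux_gronwall_two_sided {E : Type*} [NormedAddCommGroup E] [NormedSpace ℝ E]
    {f f' : ℝ → E} (hd : ∀ t, HasDerivAt f (f' t) t) (h0 : f 0 = 0)
    (K ε : ℝ) (x : ℝ)
    (hb : ∀ t ∈ Set.uIcc 0 x, ‖f' t‖ ≤ K * ‖f t‖ + ε) :
    ‖f x‖ ≤ gronwallBound 0 K ε |x| := by
  have hcont : Continuous f := by
    rw [continuous_iff_continuousAt]; exact fun t => (hd t).continuousAt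
  rcases le_or_gt 0 x with hx | hx
  · have := norm_le_gronwallBound_of_norm_deriv_right_le (a := 0) (b := x) (δ := 0)
      hcont.continuousOn (fun t _ => (hd t).hasDerivWithinAt)
      (by simp [h0])
      (fun t ht => hb t (by rw [Set.uIcc_of_le hx]; exact Set.Ico_subset_Icc_self ht))
      x (Set.right_mem_Icc.2 hx)
    simpa [_root_.abs_of_nonneg hx] using this
  · have hg : ∀ t, HasDerivAt (fun s => f (-s)) (-f' (-t)) t := fun t => by
      simpa [Function.comp_def] using (hd (-t)).scomp t (hasDerivAt_neg t)
    have := norm_le_gronwallBound_of_norm_deriv_right_le (a := 0) (b := -x) (δ := 0)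
      (hcont.comp continuous_neg).continuousOn
      (fun t _ => (hg t).hasDerivWithinAt)
      (by simp [h0])
      (fun t ht => by
        simpa using hb (-t) (by
          rw [Set.uIcc_of_ge hx.le]
          exact ⟨by linarith [ht.2], by linarith [ht.1]⟩))
      (-x) (Set.right_mem_Icc.2 (by linarith))
    simpa [_root_.abs_of_neg hx] using this

/-- For each fixed `x`, as `ω → 0` in `ℂ`,
`c(x,ω) = f0(x) + h·f1(x) + O(ω²)` and `c'(x,ω) = f0'(x) + h·f1'(x) + O(ω²)`. -/
theorem c_small_omega_asymptotics
    (d : ℝ) (hd : 0 < d) (q : ℝ → ℝ) (hq : Continuous q)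
    (hqsupp : ∀ x : ℝ, x ∉ Set.Icc 0 d → q x = 0) (h : ℂ)
    (c c' : ℂ → ℝ → ℂ)
    (hc : ∀ ω x, HasDerivAt (c ω) (c' ω x) x)
    (hc' : ∀ ω x, HasDerivAt (c' ω) (((q x : ℂ) - ω ^ 2) * c ω x) x)
    (hc0 : ∀ ω, c ω 0 = 1) (hc0' : ∀ ω, c' ω 0 = h)
    (f0 f0' f1 f1' : ℝ → ℂ)
    (hf0 : ∀ x, HasDerivAt f0 (f0' x) x)
    (hf0' : ∀ x, HasDerivAt f0' ((q x : ℂ) * f0 x) x)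
    (hf00 : f0 0 = 1) (hf00' : f0' 0 = 0)
    (hf1 : ∀ x, HasDerivAt f1 (f1' x) x)
    (hf1' : ∀ x, HasDerivAt f1' ((q x : ℂ) * f1 x) x)
    (hf10 : f1 0 = 0) (hf10' : f1' 0 = 1) :
    ∀ x : ℝ,
      (fun ω : ℂ => c ω x - (f0 x + h * f1 x)) =O[𝓝 0] (fun ω : ℂ => ω ^ 2) ∧
      (fun ω : ℂ => c' ω x - (f0' x + h * f1' x)) =O[𝓝 0] (fun ω : ℂ => ω ^ 2) := by
  intro x
  -- global bound on q
  obtain ⟨Q, hQ0, hQ⟩ : ∃ Q : ℝ, 0 ≤ Q ∧ ∀ t, |q t| ≤ Q := by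
    obtain ⟨Q0, hQ0⟩ := (isCompact_Icc (a := (0:ℝ)) (b := d)).exists_bound_of_continuousOn
      hq.continuousOn
    refine ⟨max Q0 0, le_max_right _ _, fun t => ?_⟩
    by_cases ht : t ∈ Set.Icc 0 d
    · exact le_trans (hQ0 t ht) (le_max_left _ _)
    · simp [hqsupp t ht]
  -- bound on f0 + h f1 on the interval
  have hf0c : Continuous f0 := by
    rw [continuous_iff_continuousAt]; exact fun t => (hf0 t).continuousAt
  have hf1c : Continuous f1 := by
    rw [continuous_iff_continuousAt]; exact fun t => (hf1 t).continuousAt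
  obtain ⟨M, hM0, hM⟩ : ∃ M : ℝ, 0 ≤ M ∧ ∀ t ∈ Set.uIcc 0 x, ‖f0 t + h * f1 t‖ ≤ M := by
    obtain ⟨M0, hM0⟩ := (isCompact_uIcc (a := (0:ℝ)) (b := x)).exists_bound_of_continuousOn
      (hf0c.add (continuous_const.mul hf1c)).continuousOn
    exact ⟨max M0 0, le_max_right _ _, fun t ht => (hM0 t ht).trans (le_max_left _ _)⟩
  set K : ℝ := Q + 1 with hK
  have hKpos : 0 < K := by positivity
  have hK1 : 1 ≤ K := by simp [hK]; linarith
  set C : ℝ := M * (Real.exp (K * |x|) - 1) / K with hC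
  have key : ∀ ω : ℂ, ‖ω‖ ≤ 1 →
      ‖c ω x - (f0 x + h * f1 x)‖ ≤ C * ‖ω‖ ^ 2 ∧
      ‖c' ω x - (f0' x + h * f1' x)‖ ≤ C * ‖ω‖ ^ 2 := by
    intro ω hω
    set u : ℝ → ℂ := fun t => c ω t - (f0 t + h * f1 t) with hu
    set v : ℝ → ℂ := fun t => c' ω t - (f0' t + h * f1' t) with hv
    set E : ℝ → ℂ × ℂ := fun t => (u t, v t) with hE
    set E' : ℝ → ℂ × ℂ :=
      fun t => (v t, ((q t : ℂ) - ω ^ 2) * u t - ω ^ 2 * (f0 t + h * f1 t)) with hE'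
    have hdu : ∀ t, HasDerivAt u (v t) t := fun t =>
      (hc ω t).sub ((hf0 t).add ((hf1 t).const_mul h))
    have hdv : ∀ t, HasDerivAt v (((q t : ℂ) - ω ^ 2) * u t - ω ^ 2 * (f0 t + h * f1 t)) t := by
      intro t
      have := (hc' ω t).sub (((hf0' t).add ((hf1' t).const_mul h)))
      convert this using 1
      · rfl
      · rfl
      simp only [hu]
      ring
    have hdE : ∀ t, HasDerivAt E (E' t) t := fun t => (hdu t).prodMk (hdv t)
    have hE0 : E 0 = 0 := by
      simp [hE, hu, hv, hc0, hc0', hf00, hf00', hf10, hf10', Prod.ext_iff]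
    have bound : ∀ t ∈ Set.uIcc 0 x, ‖E' t‖ ≤ K * ‖E t‖ + ‖ω‖ ^ 2 * M := by
      intro t ht
      have hEnorm : ‖E' t‖ = max ‖v t‖
          ‖((q t : ℂ) - ω ^ 2) * u t - ω ^ 2 * (f0 t + h * f1 t)‖ := rfl
      rw [hEnorm]
      have hv_le : ‖v t‖ ≤ ‖E t‖ := norm_snd_le (E t)
      have hu_le : ‖u t‖ ≤ ‖E t‖ := norm_fst_le (E t)
      have hEt0 : 0 ≤ ‖E t‖ := norm_nonneg _
      have hω2 : ‖ω‖ ^ 2 ≤ 1 := by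
        calc ‖ω‖ ^ 2 ≤ 1 ^ 2 := by
              exact pow_le_pow_left₀ (norm_nonneg _) hω 2
          _ = 1 := one_pow 2
      have hω2' : (0:ℝ) ≤ ‖ω‖ ^ 2 := by positivity
      apply max_le
      · nlinarith [mul_nonneg hω2' hM0]
      · have h1 : ‖((q t : ℂ) - ω ^ 2) * u t - ω ^ 2 * (f0 t + h * f1 t)‖ ≤
            ‖(q t : ℂ) - ω ^ 2‖ * ‖u t‖ + ‖ω‖ ^ 2 * ‖f0 t + h * f1 t‖ := by
          calc _ ≤ ‖((q t : ℂ) - ω ^ 2) * u t‖ + ‖ω ^ 2 * (f0 t + h * f1 t)‖ :=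
                norm_sub_le _ _
            _ = ‖(q t : ℂ) - ω ^ 2‖ * ‖u t‖ + ‖ω‖ ^ 2 * ‖f0 t + h * f1 t‖ := by
                rw [norm_mul, norm_mul, norm_pow]
        have h2 : ‖(q t : ℂ) - ω ^ 2‖ ≤ K := by
          calc ‖(q t : ℂ) - ω ^ 2‖ ≤ ‖(q t : ℂ)‖ + ‖ω ^ 2‖ := norm_sub_le _ _
            _ = |q t| + ‖ω‖ ^ 2 := by rw [Complex.norm_real, Real.norm_eq_abs, norm_pow]
            _ ≤ Q + 1 := add_le_add (hQ t) hω2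
        have h3 : ‖f0 t + h * f1 t‖ ≤ M := hM t ht
        have habs : 0 ≤ |q t| := abs_nonneg _
        nlinarith [norm_nonneg ((q t : ℂ) - ω ^ 2), norm_nonneg (f0 t + h * f1 t),
          mul_le_mul h2 hu_le (norm_nonneg _) hKpos.le,
          mul_le_mul_of_nonneg_left h3 hω2']
    have hgb := aux_gronwall_two_sided hdE hE0 K (‖ω‖ ^ 2 * M) x bound
    rw [gronwallBound_of_K_ne_0 hKpos.ne'] at hgb
    have hEx : ‖E x‖ ≤ C * ‖ω‖ ^ 2 := by
      calc ‖E x‖ ≤ 0 * Real.exp (K * |x|) +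
            (‖ω‖ ^ 2 * M) / K * (Real.exp (K * |x|) - 1) := hgb
        _ = C * ‖ω‖ ^ 2 := by rw [hC]; ring
    exact ⟨le_trans (norm_fst_le (E x)) hEx, le_trans (norm_snd_le (E x)) hEx⟩
  have hball : Metric.closedBall (0:ℂ) 1 ∈ 𝓝 (0:ℂ) :=
    Metric.closedBall_mem_nhds 0 one_pos
  constructor
  · rw [isBigO_iff]
    refine ⟨C, ?_⟩
    filter_upwards [hball] with ω hω
    rw [norm_pow]
    exact (key ω (by simpa using hω)).1
  · rw [isBigO_iff]
    refine ⟨C, ?_⟩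
    filter_upwards [hball] with ω hω
    rw [norm_pow]
    exact (key ω (by simpa using hω)).2
end

section
/- For each fixed x ∈ ℝ, as ω → 0 in ℂ one has s(x,ω) = ω·f1(x) + O(ω³) and s'(x,ω) = ω·f1'(x) + O(ω³), where ' denotes the derivative with respect to x. -/
open Complex Filter Topology Asymptotics

/-- Gronwall-type estimate for a second-order linear ODE with forcing. -/
lemma key_aux (Q u : ℝ → ℂ) (g g' : ℝ → ℂ)
    (hg : ∀ t, HasDerivAt g (g' t) t)
    (hg' : ∀ t, HasDerivAt g' (Q t * g t + u t) t)
    (h0 : g 0 = 0) (h0' : g' 0 = 0)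
    {K ε b : ℝ} (hb : 0 ≤ b) (hK : 1 ≤ K) (hε : 0 ≤ ε)
    (hQ : ∀ t ∈ Set.Icc 0 b, ‖Q t‖ ≤ K) (hu : ∀ t ∈ Set.Icc 0 b, ‖u t‖ ≤ ε) :
    ‖g b‖ ≤ gronwallBound 0 K ε b ∧ ‖g' b‖ ≤ gronwallBound 0 K ε b := by
  have hder : ∀ t, HasDerivAt (fun t => (g t, g' t) : ℝ → ℂ × ℂ)
      (g' t, Q t * g t + u t) t := fun t => (hg t).prodMk (hg' t)
  have hmain := norm_le_gronwallBound_of_norm_deriv_right_le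
      (f := fun t => (g t, g' t)) (f' := fun t => (g' t, Q t * g t + u t))
      (δ := 0) (K := K) (ε := ε) (a := 0) (b := b)
      (fun t _ => (hder t).continuousAt.continuousWithinAt)
      (fun t _ => (hder t).hasDerivWithinAt)
      (by simp [h0, h0', Prod.norm_def])
      ?_
  · have hb' := hmain b (Set.right_mem_Icc.2 hb)
    rw [sub_zero] at hb'
    constructor
    · exact le_trans (by simpa using norm_fst_le ((g b, g' b) : ℂ × ℂ)) hb'
    · exact le_trans (by simpa using norm_snd_le ((g b, g' b) : ℂ × ℂ)) hb'
  · intro t ht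
    have ht' : t ∈ Set.Icc 0 b := Set.Ico_subset_Icc_self ht
    have h1 : ‖g t‖ ≤ ‖((g t, g' t) : ℂ × ℂ)‖ := by
      simpa using norm_fst_le ((g t, g' t) : ℂ × ℂ)
    have h2 : ‖g' t‖ ≤ ‖((g t, g' t) : ℂ × ℂ)‖ := by
      simpa using norm_snd_le ((g t, g' t) : ℂ × ℂ)
    have hFnn : (0:ℝ) ≤ ‖((g t, g' t) : ℂ × ℂ)‖ := norm_nonneg _
    rw [Prod.norm_def]
    apply max_le
    · nlinarith [norm_nonneg (g' t)]
    · calc ‖Q t * g t + u t‖ ≤ ‖Q t * g t‖ + ‖u t‖ := norm_add_le _ _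
        _ = ‖Q t‖ * ‖g t‖ + ‖u t‖ := by rw [norm_mul]
        _ ≤ K * ‖((g t, g' t) : ℂ × ℂ)‖ + ε := by
            have hq1 := hQ t ht'
            have hu1 := hu t ht'
            have hgn : (0:ℝ) ≤ ‖g t‖ := norm_nonneg _
            have hQn : (0:ℝ) ≤ ‖Q t‖ := norm_nonneg _
            nlinarith

/-- For each fixed `x`, as `ω → 0` in `ℂ`,
`s(x,ω) = ω·f1(x) + O(ω³)` and `s'(x,ω) = ω·f1'(x) + O(ω³)`. -/
theorem s_small_omega_asymptotics
    (d : ℝ) (hd : 0 < d) (q : ℝ → ℝ) (hq : Continuous q)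
    (hqsupp : ∀ x : ℝ, x ∉ Set.Icc 0 d → q x = 0) (h : ℂ)
    (s s' : ℂ → ℝ → ℂ)
    (hs : ∀ ω x, HasDerivAt (s ω) (s' ω x) x)
    (hs' : ∀ ω x, HasDerivAt (s' ω) (((q x : ℂ) - ω ^ 2) * s ω x) x)
    (hs0 : ∀ ω, s ω 0 = 0) (hs0' : ∀ ω, s' ω 0 = ω)
    (f1 f1' : ℝ → ℂ)
    (hf1 : ∀ x, HasDerivAt f1 (f1' x) x)
    (hf1' : ∀ x, HasDerivAt f1' ((q x : ℂ) * f1 x) x)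
    (hf10 : f1 0 = 0) (hf10' : f1' 0 = 1) :
    ∀ x : ℝ,
      (fun ω : ℂ => s ω x - ω * f1 x) =O[𝓝 0] (fun ω : ℂ => ω ^ 3) ∧
      (fun ω : ℂ => s' ω x - ω * f1' x) =O[𝓝 0] (fun ω : ℂ => ω ^ 3) := by
  intro x
  obtain ⟨Mq, hMq⟩ := isCompact_uIcc.exists_bound_of_continuousOn
      (s := Set.uIcc 0 x) hq.continuousOn
  have hcf1 : Continuous f1 :=
    continuous_iff_continuousAt.mpr fun t => (hf1 t).continuousAt
  obtain ⟨Mf, hMf⟩ := isCompact_uIcc.exists_bound_of_continuousOn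
      (s := Set.uIcc 0 x) hcf1.continuousOn
  set K : ℝ := |Mq| + 2 with hKdef
  have hK1 : (1:ℝ) ≤ K := by have := abs_nonneg Mq; simp only [hKdef]; linarith
  have hK0 : K ≠ 0 := by intro hc; rw [hc] at hK1; linarith
  set C : ℝ := |Mf| / K * (Real.exp (K * |x|) - 1) with hCdef
  have key : ∀ ω : ℂ, ‖ω‖ ≤ 1 →
      ‖s ω x - ω * f1 x‖ ≤ C * ‖ω‖ ^ 3 ∧ ‖s' ω x - ω * f1' x‖ ≤ C * ‖ω‖ ^ 3 := by
    intro ω hω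
    set ε : ℝ := |Mf| * ‖ω‖ ^ 3 with hεdef
    have hε : 0 ≤ ε := by positivity
    have hQb : ∀ t ∈ Set.uIcc 0 x, ‖(q t : ℂ) - ω ^ 2‖ ≤ K := by
      intro t ht
      have h1 : ‖(q t : ℂ)‖ ≤ |Mq| := by
        rw [Complex.norm_real]; exact le_trans (hMq t ht) (le_abs_self Mq)
      have h2 : ‖ω ^ 2‖ ≤ 1 := by
        rw [norm_pow]; exact pow_le_one₀ (norm_nonneg _) hω
      calc ‖(q t : ℂ) - ω ^ 2‖ ≤ ‖(q t : ℂ)‖ + ‖ω ^ 2‖ := norm_sub_le _ _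
        _ ≤ K := by simp only [hKdef]; linarith
    have hub : ∀ t ∈ Set.uIcc 0 x, ‖-(ω ^ 3) * f1 t‖ ≤ ε := by
      intro t ht
      rw [norm_mul, norm_neg, norm_pow, hεdef]
      have h3 : ‖f1 t‖ ≤ |Mf| := le_trans (hMf t ht) (le_abs_self Mf)
      have h4 : (0:ℝ) ≤ ‖ω‖ ^ 3 := by positivity
      have h5 : (0:ℝ) ≤ ‖f1 t‖ := norm_nonneg _
      nlinarith
    have hg1 : ∀ t, HasDerivAt (fun t => s ω t - ω * f1 t) (s' ω t - ω * f1' t) t :=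
      fun t => (hs ω t).sub ((hf1 t).const_mul ω)
    have hgode : ∀ t, HasDerivAt (fun t => s' ω t - ω * f1' t)
        (((q t : ℂ) - ω ^ 2) * (s ω t - ω * f1 t) + (-(ω ^ 3) * f1 t)) t := by
      intro t
      have hd2 := (hs' ω t).sub ((hf1' t).const_mul ω)
      have he : ((q t : ℂ) - ω ^ 2) * (s ω t - ω * f1 t) + (-(ω ^ 3) * f1 t) =
          ((q t : ℂ) - ω ^ 2) * s ω t - ω * ((q t : ℂ) * f1 t) := by ring
      rw [he]
      exact hd2
    have h0 : s ω 0 - ω * f1 0 = 0 := by simp [hs0, hf10]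
    have h0' : s' ω 0 - ω * f1' 0 = 0 := by simp [hs0', hf10']
    have hGB : gronwallBound 0 K ε |x| = C * ‖ω‖ ^ 3 := by
      rw [gronwallBound_of_K_ne_0 hK0]
      simp only [hCdef, hεdef]
      ring
    rcases le_or_gt 0 x with hx | hx
    · have hxabs : |x| = x := abs_of_nonneg hx
      have hIcc : Set.Icc 0 x = Set.uIcc 0 x := (Set.uIcc_of_le hx).symm
      have := key_aux (fun t => (q t : ℂ) - ω ^ 2) (fun t => -(ω ^ 3) * f1 t)
        (fun t => s ω t - ω * f1 t) (fun t => s' ω t - ω * f1' t)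
        hg1 hgode h0 h0' hx hK1 hε
        (fun t ht => hQb t (hIcc ▸ ht)) (fun t ht => hub t (hIcc ▸ ht))
      rw [← hGB, hxabs]
      exact this
    · have hx' : (0:ℝ) ≤ -x := by linarith
      have hxabs : |x| = -x := abs_of_neg hx
      have hmem : ∀ t ∈ Set.Icc (0:ℝ) (-x), -t ∈ Set.uIcc 0 x := by
        intro t ht
        rw [Set.uIcc_of_ge (le_of_lt hx)]
        exact ⟨by linarith [ht.2], by linarith [ht.1]⟩
      have comp1 : ∀ (G G' : ℝ → ℂ), (∀ t, HasDerivAt G (G' t) t) →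
          ∀ t : ℝ, HasDerivAt (fun t => G (-t)) (-G' (-t)) t := by
        intro G G' hG t
        have := (hG (-t)).scomp t (hasDerivAt_neg t)
        exact this.congr_deriv (by simp)
      have hg1r : ∀ t : ℝ, HasDerivAt (fun t => s ω (-t) - ω * f1 (-t))
          (-(s' ω (-t) - ω * f1' (-t))) t := comp1 _ _ hg1
      have hg2r : ∀ t : ℝ, HasDerivAt (fun t => -(s' ω (-t) - ω * f1' (-t)))
          (((q (-t) : ℂ) - ω ^ 2) * (s ω (-t) - ω * f1 (-t)) + (-(ω ^ 3) * f1 (-t))) t := by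
        intro t
        exact (comp1 _ _ hgode t).neg.congr_deriv (by rw [neg_neg])
      have := key_aux (fun t => (q (-t) : ℂ) - ω ^ 2) (fun t => -(ω ^ 3) * f1 (-t))
        (fun t => s ω (-t) - ω * f1 (-t)) (fun t => -(s' ω (-t) - ω * f1' (-t)))
        hg1r hg2r (by simpa using h0) (by simp only [neg_zero, h0']) hx' hK1 hε
        (fun t ht => hQb (-t) (hmem t ht)) (fun t ht => hub (-t) (hmem t ht))
      rw [← hGB, hxabs]
      simp only [neg_neg] at this
      refine ⟨this.1, ?_⟩
      have h2 := this.2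
      rwa [norm_neg] at h2
  have hev : ∀ᶠ ω : ℂ in 𝓝 0, ‖ω‖ ≤ 1 := by
    have hball : Metric.closedBall (0:ℂ) 1 ∈ 𝓝 (0:ℂ) :=
      Metric.closedBall_mem_nhds 0 one_pos
    filter_upwards [hball] with ω hω
    simpa [Metric.mem_closedBall, dist_zero_right] using hω
  constructor
  · apply IsBigO.of_bound C
    filter_upwards [hev] with ω hω
    rw [norm_pow]
    exact (key ω hω).1
  · apply IsBigO.of_bound C
    filter_upwards [hev] with ω hω
    rw [norm_pow]
    exact (key ω hω).2
end

section
/- For each fixed x ∈ ℝ, as ω → 0 (ω ≠ 0) one has y1(x,ω) = f0(x)f1'(d) − f0'(d)f1(x) + iω·[ f0(d)f1(x) − f0(x)f1(d) + d·( f0(x)f1'(d) − f0'(d)f1(x) ) ] + O(ω²). -/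
open Complex Filter Topology Asymptotics

private lemma gb_mono {δ δ' K ε : ℝ} (hδ0 : 0 ≤ δ) (hδ : δ ≤ δ') (hK : 0 ≤ K) (hε : 0 ≤ ε)
    {s t : ℝ} (hs : 0 ≤ s) (hst : s ≤ t) :
    gronwallBound δ K ε s ≤ gronwallBound δ' K ε t := by
  unfold gronwallBound
  split_ifs with h
  · nlinarith
  · have hKpos : 0 < K := lt_of_le_of_ne hK (Ne.symm h)
    have h1 : Real.exp (K * s) ≤ Real.exp (K * t) := Real.exp_le_exp.2 (by nlinarith)
    have h2 : (1 : ℝ) ≤ Real.exp (K * s) := by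
      rw [← Real.exp_zero]; exact Real.exp_le_exp.2 (by positivity)
    have h3 : 0 ≤ ε / K := by positivity
    nlinarith

private lemma gb_nonneg {δ K ε x : ℝ} (hδ : 0 ≤ δ) (hK : 0 ≤ K) (hε : 0 ≤ ε) (hx : 0 ≤ x) :
    0 ≤ gronwallBound δ K ε x := by
  calc (0:ℝ) ≤ gronwallBound 0 K ε 0 := by rw [gronwallBound_x0]
  _ ≤ gronwallBound δ K ε x := gb_mono le_rfl hδ hK hε le_rfl hx

private lemma gronwall_two_sided {E : Type*} [NormedAddCommGroup E] [NormedSpace ℝ E]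
    {f f' : ℝ → E} {K ε δ : ℝ} (hK : 0 ≤ K) (hε : 0 ≤ ε) {a b : ℝ}
    (hf : ∀ t, HasDerivAt f (f' t) t)
    (hδ : ‖f a‖ ≤ δ)
    (bound : ∀ t ∈ Set.uIcc a b, ‖f' t‖ ≤ K * ‖f t‖ + ε) :
    ∀ t ∈ Set.uIcc a b, ‖f t‖ ≤ gronwallBound δ K ε |b - a| := by
  have hδ0 : 0 ≤ δ := le_trans (norm_nonneg _) hδ
  rcases le_total a b with hab | hba
  · rw [Set.uIcc_of_le hab] at bound ⊢
    intro t ht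
    have h := norm_le_gronwallBound_of_norm_deriv_right_le
      (f := f) (f' := f') (a := a) (b := b)
      (fun s _ => (hf s).continuousAt.continuousWithinAt)
      (fun s _ => (hf s).hasDerivWithinAt) hδ
      (fun s hs => bound s (Set.Ico_subset_Icc_self hs)) t ht
    refine h.trans (gb_mono hδ0 le_rfl hK hε (by linarith [ht.1]) ?_)
    rw [_root_.abs_of_nonneg (show (0:ℝ) ≤ b - a by linarith)]; linarith [ht.2]
  · rw [Set.uIcc_of_ge hba] at bound ⊢
    intro t ht
    have hg' : ∀ s : ℝ, HasDerivAt (fun s => f (a + b - s)) ((-1 : ℝ) • f' (a + b - s)) s := by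
      intro s
      exact (hf (a + b - s)).scomp s ((hasDerivAt_id s).const_sub (a + b))
    have h := norm_le_gronwallBound_of_norm_deriv_right_le
      (f := fun s => f (a + b - s)) (f' := fun s => (-1 : ℝ) • f' (a + b - s))
      (a := b) (b := a)
      (fun s _ => (hg' s).continuousAt.continuousWithinAt)
      (fun s _ => (hg' s).hasDerivWithinAt)
      (by simpa using hδ)
      (fun s hs => by
        have hmem : a + b - s ∈ Set.Icc b a := ⟨by linarith [hs.2], by linarith [hs.1]⟩
        simpa [norm_smul] using bound (a + b - s) hmem)
      (a + b - t) ⟨by linarith [ht.2], by linarith [ht.1]⟩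
    have h2 : ‖f t‖ ≤ gronwallBound δ K ε (a + b - t - b) := by
      have hfix : a + b - (a + b - t) = t := by ring
      simpa [hfix] using h
    refine h2.trans (gb_mono hδ0 le_rfl hK hε (by linarith [ht.2]) ?_)
    rw [abs_of_nonpos (show b - a ≤ 0 by linarith)]; linarith [ht.1]

/-- For each fixed `x`, as `ω → 0` (`ω ≠ 0`),
`y1(x,ω) = f0(x)f1'(d) − f0'(d)f1(x)
  + iω·[f0(d)f1(x) − f0(x)f1(d) + d·(f0(x)f1'(d) − f0'(d)f1(x))] + O(ω²)`. -/
theorem jost_y1_small_omega_asymptotics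
    (d : ℝ) (hd : 0 < d) (q : ℝ → ℝ) (hq : Continuous q)
    (hqsupp : ∀ x : ℝ, x ∉ Set.Icc 0 d → q x = 0)
    (y1 y1' : ℂ → ℝ → ℂ)
    (hy1 : ∀ ω : ℂ, ω ≠ 0 → ∀ x, HasDerivAt (y1 ω) (y1' ω x) x)
    (hy1' : ∀ ω : ℂ, ω ≠ 0 → ∀ x, HasDerivAt (y1' ω) (((q x : ℂ) - ω ^ 2) * y1 ω x) x)
    (hy1d : ∀ ω : ℂ, ω ≠ 0 → y1 ω d = Complex.exp (Complex.I * ω * d))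
    (hy1d' : ∀ ω : ℂ, ω ≠ 0 → y1' ω d = Complex.I * ω * Complex.exp (Complex.I * ω * d))
    (f0 f0' f1 f1' : ℝ → ℂ)
    (hf0 : ∀ x, HasDerivAt f0 (f0' x) x)
    (hf0' : ∀ x, HasDerivAt f0' ((q x : ℂ) * f0 x) x)
    (hf00 : f0 0 = 1) (hf00' : f0' 0 = 0)
    (hf1 : ∀ x, HasDerivAt f1 (f1' x) x)
    (hf1' : ∀ x, HasDerivAt f1' ((q x : ℂ) * f1 x) x)
    (hf10 : f1 0 = 0) (hf10' : f1' 0 = 1) :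
    ∀ x : ℝ,
      (fun ω : ℂ => y1 ω x -
          (f0 x * f1' d - f0' d * f1 x +
            Complex.I * ω * (f0 d * f1 x - f0 x * f1 d +
              (d : ℂ) * (f0 x * f1' d - f0' d * f1 x))))
        =O[𝓝[≠] 0] (fun ω : ℂ => ω ^ 2) := by
  intro x
  -- global bound on q
  obtain ⟨Q, hQ0, hQ⟩ : ∃ Q : ℝ, 0 ≤ Q ∧ ∀ t : ℝ, |q t| ≤ Q := by
    obtain ⟨C, hC⟩ := (isCompact_Icc (a := (0:ℝ)) (b := d)).exists_bound_of_continuousOn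
      hq.continuousOn
    refine ⟨max C 0, le_max_right _ _, fun t => ?_⟩
    by_cases ht : t ∈ Set.Icc 0 d
    · exact le_trans (hC t ht) (le_max_left _ _)
    · rw [hqsupp t ht]; simp
  set K : ℝ := Q + 1 with hKdef
  have hK0 : (0:ℝ) ≤ K := by linarith
  have hK1 : (1:ℝ) ≤ K := by linarith
  set L : ℝ := |x - d| with hLdef
  have hL0 : (0:ℝ) ≤ L := abs_nonneg _
  -- the Wronskian is constant 1
  have hW : ∀ t : ℝ, f0 t * f1' t - f0' t * f1 t = 1 := by
    have hWd : ∀ t : ℝ, HasDerivAt (fun s => f0 s * f1' s - f0' s * f1 s) 0 t := by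
      intro t
      have h := ((hf0 t).mul (hf1' t)).sub (((hf0' t)).mul (hf1 t))
      refine h.congr_deriv ?_
      ring
    intro t
    have h := is_const_of_deriv_eq_zero (f := fun s => f0 s * f1' s - f0' s * f1 s)
      (fun s => (hWd s).differentiableAt) (fun s => (hWd s).deriv) t 0
    rw [h, hf00, hf00', hf10, hf10']
    ring
  -- fundamental solutions normalized at d
  set g0 : ℝ → ℂ := fun t => f1' d * f0 t - f0' d * f1 t with hg0def
  set g0' : ℝ → ℂ := fun t => f1' d * f0' t - f0' d * f1' t with hg0'def
  set g1 : ℝ → ℂ := fun t => f0 d * f1 t - f1 d * f0 t with hg1def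
  set g1' : ℝ → ℂ := fun t => f0 d * f1' t - f1 d * f0' t with hg1'def
  have hg0d : g0 d = 1 := by have := hW d; simp only [hg0def]; linear_combination this
  have hg0'd : g0' d = 0 := by simp only [hg0'def]; ring
  have hg1d : g1 d = 0 := by simp only [hg1def]; ring
  have hg1'd : g1' d = 1 := by have := hW d; simp only [hg1'def]; linear_combination this
  have hdg0 : ∀ t, HasDerivAt g0 (g0' t) t := fun t =>
    ((hf0 t).const_mul (f1' d)).sub ((hf1 t).const_mul (f0' d))
  have hdg0' : ∀ t, HasDerivAt g0' ((q t : ℂ) * g0 t) t := by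
    intro t
    have h := ((hf0' t).const_mul (f1' d)).sub ((hf1' t).const_mul (f0' d))
    refine h.congr_deriv ?_
    simp only [hg0def]; ring
  have hdg1 : ∀ t, HasDerivAt g1 (g1' t) t := fun t =>
    ((hf1 t).const_mul (f0 d)).sub ((hf0 t).const_mul (f1 d))
  have hdg1' : ∀ t, HasDerivAt g1' ((q t : ℂ) * g1 t) t := by
    intro t
    have h := ((hf1' t).const_mul (f0 d)).sub ((hf0' t).const_mul (f1 d))
    refine h.congr_deriv ?_
    simp only [hg1def]; ring
  -- a priori bound on (y1, y1') near ω = 0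
  set M : ℝ := gronwallBound (Real.exp d) K 0 L with hMdef
  have hM0 : 0 ≤ M := gb_nonneg (Real.exp_nonneg d) hK0 le_rfl hL0
  have hubound : ∀ ω : ℂ, ω ≠ 0 → ‖ω‖ ≤ 1 →
      ∀ t ∈ Set.uIcc d x, ‖(y1 ω t, y1' ω t)‖ ≤ M := by
    intro ω hω hω1
    have hder : ∀ t : ℝ, HasDerivAt (fun s => (y1 ω s, y1' ω s))
        (y1' ω t, ((q t : ℂ) - ω ^ 2) * y1 ω t) t :=
      fun t => (hy1 ω hω t).prodMk (hy1' ω hω t)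
    have hstart : ‖((y1 ω d, y1' ω d) : ℂ × ℂ)‖ ≤ Real.exp d := by
      rw [Prod.norm_def, hy1d ω hω, hy1d' ω hω]
      have habs : ‖Complex.exp (Complex.I * ω * ↑d)‖ ≤ Real.exp d := by
        rw [Complex.norm_exp]
        apply Real.exp_le_exp.2
        have h1 : (Complex.I * ω * (d:ℂ)).re = -ω.im * d := by simp [Complex.mul_re]
        rw [h1]
        have h2 : |ω.im| ≤ ‖ω‖ := Complex.abs_im_le_norm ω
        have : -ω.im ≤ 1 := le_trans (neg_le_abs _) (le_trans h2 hω1)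
        nlinarith
      have hsnd : ‖Complex.I * ω * Complex.exp (Complex.I * ω * ↑d)‖ ≤ Real.exp d := by
        rw [norm_mul, norm_mul, Complex.norm_I, one_mul]
        calc ‖ω‖ * ‖Complex.exp (Complex.I * ω * ↑d)‖
            ≤ 1 * (Real.exp d) := by
              apply mul_le_mul hω1 habs (norm_nonneg _) (by norm_num)
          _ = Real.exp d := one_mul _
      exact max_le habs hsnd
    have hbd : ∀ t ∈ Set.uIcc d x,
        ‖(y1' ω t, ((q t : ℂ) - ω ^ 2) * y1 ω t)‖
          ≤ K * ‖((y1 ω t, y1' ω t) : ℂ × ℂ)‖ + 0 := by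
      intro t _
      rw [add_zero, Prod.norm_def, Prod.norm_def]
      have hy1n : ‖y1 ω t‖ ≤ max ‖y1 ω t‖ ‖y1' ω t‖ := le_max_left _ _
      have hy1n' : ‖y1' ω t‖ ≤ max ‖y1 ω t‖ ‖y1' ω t‖ := le_max_right _ _
      have hmax0 : 0 ≤ max ‖y1 ω t‖ ‖y1' ω t‖ := le_trans (norm_nonneg _) hy1n
      apply max_le
      · nlinarith
      · have hcoef : ‖(q t : ℂ) - ω ^ 2‖ ≤ K := by
          calc ‖(q t : ℂ) - ω ^ 2‖ ≤ ‖(q t : ℂ)‖ + ‖ω ^ 2‖ := norm_sub_le _ _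
            _ = |q t| + ‖ω‖ ^ 2 := by rw [Complex.norm_real, norm_pow]; rfl
            _ ≤ Q + 1 := by
                have := hQ t
                have h1 : ‖ω‖ ^ 2 ≤ 1 := by nlinarith [norm_nonneg ω]
                linarith
        calc ‖((q t : ℂ) - ω ^ 2) * y1 ω t‖ = ‖(q t : ℂ) - ω ^ 2‖ * ‖y1 ω t‖ := norm_mul _ _
          _ ≤ K * max ‖y1 ω t‖ ‖y1' ω t‖ := by
              apply mul_le_mul hcoef hy1n (norm_nonneg _) hK0
    have h := gronwall_two_sided (a := d) (b := x) hK0 le_rfl hder hstart hbd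
    intro t ht
    exact h t ht
  -- the error function z and its bound
  set C : ℝ := gronwallBound 0 K M L with hCdef
  have key : ∀ ω : ℂ, ω ≠ 0 → ‖ω‖ ≤ 1 →
      ‖y1 ω x - Complex.exp (Complex.I * ω * d) * (g0 x + Complex.I * ω * g1 x)‖
        ≤ C * ‖ω‖ ^ 2 := by
    intro ω hω hω1
    set e : ℂ := Complex.exp (Complex.I * ω * d) with hedef
    set z1 : ℝ → ℂ := fun t => y1 ω t - e * (g0 t + Complex.I * ω * g1 t) with hz1def
    set z2 : ℝ → ℂ := fun t => y1' ω t - e * (g0' t + Complex.I * ω * g1' t) with hz2def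
    have hderz : ∀ t : ℝ, HasDerivAt (fun s => (z1 s, z2 s))
        (z2 t, (q t : ℂ) * z1 t - ω ^ 2 * y1 ω t) t := by
      intro t
      have h1 : HasDerivAt z1 (z2 t) t := by
        have h := (hy1 ω hω t).sub
          (((hdg0 t).add ((hdg1 t).const_mul (Complex.I * ω))).const_mul e)
        refine h.congr_deriv ?_
        all_goals simp only [hz2def]
        all_goals ring
      have h2 : HasDerivAt z2 ((q t : ℂ) * z1 t - ω ^ 2 * y1 ω t) t := by
        have h := (hy1' ω hω t).sub
          (((hdg0' t).add ((hdg1' t).const_mul (Complex.I * ω))).const_mul e)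
        refine h.congr_deriv ?_
        all_goals simp only [hz1def]
        all_goals ring
      exact h1.prodMk h2
    have hz1d : z1 d = 0 := by
      simp only [hz1def, hy1d ω hω, hg0d, hg1d, hedef]; ring
    have hz2d : z2 d = 0 := by
      simp only [hz2def, hy1d' ω hω, hg0'd, hg1'd, hedef]; ring
    have hstart : ‖((z1 d, z2 d) : ℂ × ℂ)‖ ≤ 0 := by
      rw [Prod.norm_def, hz1d, hz2d]; simp
    have hε0 : (0:ℝ) ≤ ‖ω‖ ^ 2 * M := by positivity
    have hbd : ∀ t ∈ Set.uIcc d x,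
        ‖((z2 t, (q t : ℂ) * z1 t - ω ^ 2 * y1 ω t) : ℂ × ℂ)‖
          ≤ K * ‖((z1 t, z2 t) : ℂ × ℂ)‖ + ‖ω‖ ^ 2 * M := by
      intro t ht
      rw [Prod.norm_def, Prod.norm_def]
      have hz1n : ‖z1 t‖ ≤ max ‖z1 t‖ ‖z2 t‖ := le_max_left _ _
      have hz2n : ‖z2 t‖ ≤ max ‖z1 t‖ ‖z2 t‖ := le_max_right _ _
      have hmax0 : 0 ≤ max ‖z1 t‖ ‖z2 t‖ := le_trans (norm_nonneg _) hz1n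
      apply max_le
      · nlinarith
      · have hy1M : ‖y1 ω t‖ ≤ M := by
          have := hubound ω hω hω1 t ht
          rw [Prod.norm_def] at this
          exact le_trans (le_max_left _ _) this
        calc ‖(q t : ℂ) * z1 t - ω ^ 2 * y1 ω t‖
            ≤ ‖(q t : ℂ) * z1 t‖ + ‖ω ^ 2 * y1 ω t‖ := norm_sub_le _ _
          _ = |q t| * ‖z1 t‖ + ‖ω‖ ^ 2 * ‖y1 ω t‖ := by
              rw [norm_mul, norm_mul, Complex.norm_real, norm_pow]; rfl
          _ ≤ K * max ‖z1 t‖ ‖z2 t‖ + ‖ω‖ ^ 2 * M := by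
              have h1 : |q t| * ‖z1 t‖ ≤ K * max ‖z1 t‖ ‖z2 t‖ := by
                apply mul_le_mul (by have := hQ t; linarith) hz1n (norm_nonneg _) hK0
              have h2 : ‖ω‖ ^ 2 * ‖y1 ω t‖ ≤ ‖ω‖ ^ 2 * M := by
                apply mul_le_mul_of_nonneg_left hy1M (by positivity)
              linarith
    have h := gronwall_two_sided (a := d) (b := x) hK0 hε0 hderz hstart hbd
      x (Set.right_mem_uIcc)
    have hxd : |x - d| = L := rfl
    have hbound : gronwallBound 0 K (‖ω‖ ^ 2 * M) L = ‖ω‖ ^ 2 * C := by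
      have hKne : K ≠ 0 := by positivity
      rw [hCdef, gronwallBound_of_K_ne_0 hKne, gronwallBound_of_K_ne_0 hKne]
      ring
    have hz1x : ‖z1 x‖ ≤ ‖ω‖ ^ 2 * C := by
      calc ‖z1 x‖ ≤ ‖((z1 x, z2 x) : ℂ × ℂ)‖ := by
            rw [Prod.norm_def]; exact le_max_left _ _
        _ ≤ gronwallBound 0 K (‖ω‖ ^ 2 * M) L := by rw [← hxd]; exact h
        _ = ‖ω‖ ^ 2 * C := hbound
    calc ‖y1 ω x - e * (g0 x + Complex.I * ω * g1 x)‖ = ‖z1 x‖ := rfl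
      _ ≤ ‖ω‖ ^ 2 * C := hz1x
      _ = C * ‖ω‖ ^ 2 := by ring
  -- now assemble the asymptotics
  have hsmall : ∀ᶠ ω : ℂ in 𝓝[≠] 0, ω ≠ 0 ∧ ‖ω‖ ≤ 1 ∧ ‖ω‖ * d ≤ 1 := by
    have h1 : ∀ᶠ ω : ℂ in 𝓝 0, ‖ω‖ ≤ 1 ∧ ‖ω‖ * d ≤ 1 := by
      have hr : (0:ℝ) < min 1 (1/d) := lt_min one_pos (by positivity)
      filter_upwards [Metric.closedBall_mem_nhds (0:ℂ) hr] with ω hω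
      rw [Metric.mem_closedBall, dist_zero_right] at hω
      constructor
      · exact le_trans hω (min_le_left _ _)
      · have h2 : ‖ω‖ ≤ 1/d := le_trans hω (min_le_right _ _)
        calc ‖ω‖ * d ≤ (1/d) * d := by nlinarith
          _ = 1 := by field_simp
    filter_upwards [eventually_mem_nhdsWithin, eventually_nhdsWithin_of_eventually_nhds h1]
      with ω hω h1'
    exact ⟨hω, h1'.1, h1'.2⟩
  -- split into three pieces
  have heq : ∀ ω : ℂ,
      y1 ω x - (f0 x * f1' d - f0' d * f1 x +
        Complex.I * ω * (f0 d * f1 x - f0 x * f1 d +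
          (d : ℂ) * (f0 x * f1' d - f0' d * f1 x)))
      = (y1 ω x - Complex.exp (Complex.I * ω * d) * (g0 x + Complex.I * ω * g1 x))
        + g0 x * (Complex.exp (Complex.I * ω * d) - 1 - Complex.I * ω * d)
        + Complex.I * ω * g1 x * (Complex.exp (Complex.I * ω * d) - 1) := by
    intro ω
    simp only [hg0def, hg1def]
    ring
  have hT1 : (fun ω : ℂ => y1 ω x - Complex.exp (Complex.I * ω * d) *
      (g0 x + Complex.I * ω * g1 x)) =O[𝓝[≠] 0] (fun ω : ℂ => ω ^ 2) := by
    rw [isBigO_iff]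
    refine ⟨C, ?_⟩
    filter_upwards [hsmall] with ω hω
    rw [norm_pow]
    exact key ω hω.1 hω.2.1
  have hexp2 : ∀ ω : ℂ, ‖ω‖ * d ≤ 1 →
      ‖Complex.exp (Complex.I * ω * d) - 1 - Complex.I * ω * d‖ ≤ d ^ 2 * ‖ω‖ ^ 2 := by
    intro ω hω
    have habs : ‖Complex.I * ω * d‖ ≤ 1 := by
      rw [norm_mul, norm_mul, Complex.norm_I, one_mul, Complex.norm_real, Real.norm_eq_abs,
        abs_of_pos hd]
      exact hω
    have h := Complex.exp_bound habs (n := 2) (by norm_num)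
    have hsum : (∑ m ∈ Finset.range 2, (Complex.I * ω * d) ^ m / m.factorial)
        = 1 + Complex.I * ω * d := by
      simp [Finset.sum_range_succ]
    rw [hsum] at h
    have habsval : ‖Complex.I * ω * d‖ = ‖ω‖ * d := by
      rw [norm_mul, norm_mul, Complex.norm_I, one_mul, Complex.norm_real, Real.norm_eq_abs,
        abs_of_pos hd]
    calc ‖Complex.exp (Complex.I * ω * d) - 1 - Complex.I * ω * d‖
        = ‖Complex.exp (Complex.I * ω * d) - (1 + Complex.I * ω * d)‖ := by
          rw [sub_sub]
      _ ≤ ‖Complex.I * ω * d‖ ^ 2 * ((3:ℝ) * ((2:ℝ) * 2)⁻¹) := by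
          convert h using 2 <;> norm_num
      _ ≤ d ^ 2 * ‖ω‖ ^ 2 := by
          rw [habsval]
          nlinarith [norm_nonneg ω]
  have hexp1 : ∀ ω : ℂ, ‖ω‖ * d ≤ 1 →
      ‖Complex.exp (Complex.I * ω * d) - 1‖ ≤ 2 * d * ‖ω‖ := by
    intro ω hω
    have habs : ‖Complex.I * ω * d‖ ≤ 1 := by
      rw [norm_mul, norm_mul, Complex.norm_I, one_mul, Complex.norm_real, Real.norm_eq_abs,
        abs_of_pos hd]
      exact hω
    have h := Complex.exp_bound habs (n := 1) (by norm_num)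
    have hsum : (∑ m ∈ Finset.range 1, (Complex.I * ω * d) ^ m / m.factorial) = 1 := by
      simp
    rw [hsum] at h
    have habsval : ‖Complex.I * ω * d‖ = ‖ω‖ * d := by
      rw [norm_mul, norm_mul, Complex.norm_I, one_mul, Complex.norm_real, Real.norm_eq_abs,
        abs_of_pos hd]
    calc ‖Complex.exp (Complex.I * ω * d) - 1‖
        = ‖Complex.exp (Complex.I * ω * d) - 1‖ := rfl
      _ ≤ ‖Complex.I * ω * d‖ ^ 1 * ((2:ℝ) * ((1:ℝ) * 1)⁻¹) := by
          convert h using 2 <;> norm_num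
      _ ≤ 2 * d * ‖ω‖ := by rw [habsval]; nlinarith [norm_nonneg ω]
  have hT2 : (fun ω : ℂ => g0 x * (Complex.exp (Complex.I * ω * d) - 1 - Complex.I * ω * d))
      =O[𝓝[≠] 0] (fun ω : ℂ => ω ^ 2) := by
    rw [isBigO_iff]
    refine ⟨‖g0 x‖ * d ^ 2, ?_⟩
    filter_upwards [hsmall] with ω hω
    rw [norm_pow, norm_mul]
    calc ‖g0 x‖ * ‖Complex.exp (Complex.I * ω * d) - 1 - Complex.I * ω * d‖
        ≤ ‖g0 x‖ * (d ^ 2 * ‖ω‖ ^ 2) :=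
          mul_le_mul_of_nonneg_left (hexp2 ω hω.2.2) (norm_nonneg _)
      _ = ‖g0 x‖ * d ^ 2 * ‖ω‖ ^ 2 := by ring
  have hT3 : (fun ω : ℂ => Complex.I * ω * g1 x * (Complex.exp (Complex.I * ω * d) - 1))
      =O[𝓝[≠] 0] (fun ω : ℂ => ω ^ 2) := by
    rw [isBigO_iff]
    refine ⟨‖g1 x‖ * (2 * d), ?_⟩
    filter_upwards [hsmall] with ω hω
    rw [norm_pow]
    calc ‖Complex.I * ω * g1 x * (Complex.exp (Complex.I * ω * d) - 1)‖
        = ‖ω‖ * ‖g1 x‖ * ‖Complex.exp (Complex.I * ω * d) - 1‖ := by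
          rw [norm_mul, norm_mul, norm_mul, Complex.norm_I, one_mul]
      _ ≤ ‖ω‖ * ‖g1 x‖ * (2 * d * ‖ω‖) := by
          apply mul_le_mul_of_nonneg_left (hexp1 ω hω.2.2) (by positivity)
      _ = ‖g1 x‖ * (2 * d) * ‖ω‖ ^ 2 := by ring
  have := (hT1.add hT2).add hT3
  refine this.congr' ?_ (EventuallyEq.refl _ _)
  filter_upwards with ω
  rw [heq ω]
end

section
/- As ω → 0 (ω ≠ 0), the transmission coefficient satisfies a(ω) = f0'(d)/(2iω) − (1/2)·( f0(d) − d·f0'(d) + f1'(d) ) + O(ω). In particular, a(ω) has a simple pole at the origin if and only if f0'(d) ≠ 0, i.e., if and only if zero is not a Neumann eigenvalue of −d²/dx² + q on [0,d]. -/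
open Complex Filter Topology Asymptotics

set_option maxHeartbeats 1000000

lemma pair_gronwall (M ε δ : ℝ) (hM : 1 ≤ M) (hε : 0 ≤ ε)
    (w w' F : ℝ → ℂ)
    (hw : ∀ x, HasDerivAt w (w' x) x) (hw' : ∀ x, HasDerivAt w' (F x) x)
    (d : ℝ)
    (hF : ∀ x ∈ Set.Icc (0:ℝ) d, ‖F x‖ ≤ M * max ‖w x‖ ‖w' x‖ + ε)
    (h0 : max ‖w 0‖ ‖w' 0‖ ≤ δ) :
    ∀ x ∈ Set.Icc (0:ℝ) d, max ‖w x‖ ‖w' x‖ ≤ gronwallBound δ M ε x := by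
  intro x hx
  set p : ℝ → ℂ × ℂ := fun t => (w t, w' t) with hp
  have hder : ∀ t, HasDerivAt p (w' t, F t) t := fun t => (hw t).prodMk (hw' t)
  have hcw : Continuous w := continuous_iff_continuousAt.mpr fun t => (hw t).continuousAt
  have hcw' : Continuous w' := continuous_iff_continuousAt.mpr fun t => (hw' t).continuousAt
  have hcont : ContinuousOn p (Set.Icc 0 d) := (hcw.prodMk hcw').continuousOn
  have key := norm_le_gronwallBound_of_norm_deriv_right_le (f := p)
    (f' := fun t => (w' t, F t)) (δ := δ) (K := M) (ε := ε) (a := 0) (b := d)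
    hcont (fun t _ => (hder t).hasDerivWithinAt) (by simpa [Prod.norm_def] using h0)
    (fun t ht => ?_) x hx
  · simpa [Prod.norm_def] using key
  · have ht' : t ∈ Set.Icc (0:ℝ) d := Set.Ico_subset_Icc_self ht
    have h1 : ‖w' t‖ ≤ M * max ‖w t‖ ‖w' t‖ + ε := by
      nlinarith [le_max_right ‖w t‖ ‖w' t‖, norm_nonneg (w t), norm_nonneg (w' t),
        le_max_left ‖w t‖ ‖w' t‖]
    simp only [Prod.norm_def]
    exact max_le h1 (by simpa [Prod.norm_def] using hF t ht')

lemma aux_identity (E u v A Ap B Bp r s ω dd : ℂ) (hω : ω ≠ 0)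
    (hr : r = u - (A - I*ω*B)) (hs : s = v - (Ap - I*ω*Bp)) :
    -(1/(2*I*ω))*(I*ω*E*u - E*v) - (Ap/(2*I*ω) - (1/2)*(A - dd*Ap + Bp))
    = Ap*(E-1-I*ω*dd)/(2*I*ω) - (E-1)*(A+Bp)/2 + E*s/(2*I*ω) + E/2*(I*ω*B - r) := by
  rw [hr, hs]
  field_simp [Complex.I_ne_zero]
  ring_nf

/-- As `ω → 0` (`ω ≠ 0`), the transmission coefficient satisfies
`a(ω) = f0'(d)/(2iω) − (1/2)·(f0(d) − d·f0'(d) + f1'(d)) + O(ω)`.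
In particular `a` has a simple pole at the origin (i.e. `ω·a(ω)` tends to a nonzero limit)
iff `f0'(d) ≠ 0`, iff zero is not a Neumann eigenvalue of `−d²/dx² + q` on `[0,d]`. -/
theorem transmission_coefficient_small_omega
    (d : ℝ) (hd : 0 < d) (q : ℝ → ℝ) (hq : Continuous q)
    (hqsupp : ∀ x : ℝ, x ∉ Set.Icc 0 d → q x = 0)
    (y1 y1' y2 y2' : ℂ → ℝ → ℂ)
    (hy1 : ∀ ω : ℂ, ω ≠ 0 → ∀ x, HasDerivAt (y1 ω) (y1' ω x) x)
    (hy1'' : ∀ ω : ℂ, ω ≠ 0 → ∀ x, HasDerivAt (y1' ω) (((q x : ℂ) - ω ^ 2) * y1 ω x) x)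
    (hy1d : ∀ ω : ℂ, ω ≠ 0 → y1 ω d = Complex.exp (Complex.I * ω * d))
    (hy1d' : ∀ ω : ℂ, ω ≠ 0 → y1' ω d = Complex.I * ω * Complex.exp (Complex.I * ω * d))
    (hy2 : ∀ ω : ℂ, ω ≠ 0 → ∀ x, HasDerivAt (y2 ω) (y2' ω x) x)
    (hy2'' : ∀ ω : ℂ, ω ≠ 0 → ∀ x, HasDerivAt (y2' ω) (((q x : ℂ) - ω ^ 2) * y2 ω x) x)
    (hy20 : ∀ ω : ℂ, ω ≠ 0 → y2 ω 0 = 1)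
    (hy20' : ∀ ω : ℂ, ω ≠ 0 → y2' ω 0 = -Complex.I * ω)
    (a : ℂ → ℂ)
    (ha : ∀ ω : ℂ, ω ≠ 0 →
      a ω = -(1 / (2 * Complex.I * ω)) * (y1' ω 0 * y2 ω 0 - y1 ω 0 * y2' ω 0))
    (f0 f0' f1 f1' : ℝ → ℂ)
    (hf0 : ∀ x, HasDerivAt f0 (f0' x) x)
    (hf0' : ∀ x, HasDerivAt f0' ((q x : ℂ) * f0 x) x)
    (hf00 : f0 0 = 1) (hf00' : f0' 0 = 0)
    (hf1 : ∀ x, HasDerivAt f1 (f1' x) x)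
    (hf1' : ∀ x, HasDerivAt f1' ((q x : ℂ) * f1 x) x)
    (hf10 : f1 0 = 0) (hf10' : f1' 0 = 1) :
    (fun ω : ℂ =>
        a ω - (f0' d / (2 * Complex.I * ω) - (1 / 2) * (f0 d - (d : ℂ) * f0' d + f1' d)))
      =O[𝓝[≠] 0] (fun ω : ℂ => ω) ∧
    ((∃ L : ℂ, L ≠ 0 ∧ Tendsto (fun ω : ℂ => ω * a ω) (𝓝[≠] 0) (𝓝 L)) ↔ f0' d ≠ 0) ∧
    (f0' d ≠ 0 ↔
      ¬ ∃ (u u' : ℝ → ℂ), (∀ x, HasDerivAt u (u' x) x) ∧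
        (∀ x, HasDerivAt u' ((q x : ℂ) * u x) x) ∧
        u' 0 = 0 ∧ u' d = 0 ∧ ∃ x ∈ Set.Icc 0 d, u x ≠ 0) := by
  -- bound on q
  obtain ⟨Kq, hKq0, hKq⟩ : ∃ K : ℝ, 0 ≤ K ∧ ∀ x : ℝ, ‖(q x : ℂ)‖ ≤ K := by
    obtain ⟨C, hC⟩ := (isCompact_Icc (a := (0:ℝ)) (b := d)).exists_bound_of_continuousOn
      hq.continuousOn
    refine ⟨max C 0, le_max_right _ _, fun x => ?_⟩
    by_cases hx : x ∈ Set.Icc 0 d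
    · calc ‖(q x : ℂ)‖ = ‖q x‖ := Complex.norm_real _
        _ ≤ C := hC x hx
        _ ≤ max C 0 := le_max_left _ _
    · simp [hqsupp x hx]
  obtain ⟨M, hM1, hMq⟩ : ∃ M : ℝ, 1 ≤ M ∧ ∀ x : ℝ, ‖(q x : ℂ)‖ + 1 ≤ M :=
    ⟨Kq + 2, by linarith, fun x => by have := hKq x; linarith⟩
  have hM0 : 0 < M := by linarith
  obtain ⟨Bd, hBd1, hBdeq⟩ : ∃ B : ℝ, 1 ≤ B ∧ B = Real.exp (M * d) :=
    ⟨_, Real.one_le_exp (by positivity), rfl⟩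
  have hBd0 : 0 < Bd := by linarith
  -- bound on y2
  have key1 : ∀ ω : ℂ, ω ≠ 0 → ‖ω‖ ≤ 1 → ∀ x ∈ Set.Icc (0:ℝ) d,
      max ‖y2 ω x‖ ‖y2' ω x‖ ≤ Bd := by
    intro ω hω hω1 x hx
    have hgr := pair_gronwall M 0 1 hM1 le_rfl (y2 ω) (y2' ω)
      (fun x => ((q x : ℂ) - ω ^ 2) * y2 ω x) (hy2 ω hω) (hy2'' ω hω) d
      (fun t ht => ?_) ?_ x hx
    · calc max ‖y2 ω x‖ ‖y2' ω x‖ ≤ gronwallBound 1 M 0 x := hgr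
        _ = Real.exp (M * x) := by rw [gronwallBound_ε0]; ring
        _ ≤ Bd := by rw [hBdeq]; exact Real.exp_le_exp.2 (by nlinarith [hx.1, hx.2])
    · have h1 : ‖((q t : ℂ) - ω ^ 2) * y2 ω t‖ ≤ M * ‖y2 ω t‖ := by
        rw [norm_mul]
        have h2 : ‖(q t : ℂ) - ω ^ 2‖ ≤ M := by
          calc ‖(q t : ℂ) - ω ^ 2‖ ≤ ‖(q t : ℂ)‖ + ‖ω ^ 2‖ := norm_sub_le _ _
            _ ≤ M := by
                have h3 : ‖ω ^ 2‖ ≤ 1 := by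
                  rw [norm_pow]
                  nlinarith [norm_nonneg ω]
                have := hMq t
                linarith
        exact mul_le_mul_of_nonneg_right h2 (norm_nonneg _)
      have h2 : ‖y2 ω t‖ ≤ max ‖y2 ω t‖ ‖y2' ω t‖ := le_max_left _ _
      nlinarith [norm_nonneg (y2 ω t), norm_nonneg (y2' ω t)]
    · rw [hy20 ω hω, hy20' ω hω]
      simp only [norm_one, norm_mul, norm_neg, Complex.norm_I, one_mul]
      exact max_le le_rfl hω1
  obtain ⟨Cz, hCz0, hCzeq⟩ : ∃ Cz : ℝ, 0 ≤ Cz ∧ Cz = Bd * Bd / M :=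
    ⟨_, div_nonneg (mul_nonneg hBd0.le hBd0.le) hM0.le, rfl⟩
  -- second-order approximation of y2 at d
  have key2 : ∀ ω : ℂ, ω ≠ 0 → ‖ω‖ ≤ 1 →
      ‖y2 ω d - (f0 d - Complex.I * ω * f1 d)‖ ≤ Cz * ‖ω‖ ^ 2 ∧
      ‖y2' ω d - (f0' d - Complex.I * ω * f1' d)‖ ≤ Cz * ‖ω‖ ^ 2 := by
    intro ω hω hω1
    set w : ℝ → ℂ := fun x => y2 ω x - f0 x + Complex.I * ω * f1 x with hwdef
    set w' : ℝ → ℂ := fun x => y2' ω x - f0' x + Complex.I * ω * f1' x with hw'def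
    have hw : ∀ x, HasDerivAt w (w' x) x := fun x =>
      ((hy2 ω hω x).sub (hf0 x)).add ((hf1 x).const_mul (Complex.I * ω))
    have hw' : ∀ x, HasDerivAt w' ((q x : ℂ) * w x - ω ^ 2 * y2 ω x) x := by
      intro x
      have h := ((hy2'' ω hω x).sub (hf0' x)).add ((hf1' x).const_mul (Complex.I * ω))
      refine h.congr_deriv ?_
      simp only [w]
      ring
    have hgr := pair_gronwall M (‖ω‖ ^ 2 * Bd) 0 hM1 (by positivity) w w'
      (fun x => (q x : ℂ) * w x - ω ^ 2 * y2 ω x) hw hw' d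
      (fun t ht => ?_) ?_ d ⟨le_of_lt hd, le_rfl⟩
    · have hb : gronwallBound 0 M (‖ω‖ ^ 2 * Bd) d ≤ Cz * ‖ω‖ ^ 2 := by
        rw [gronwallBound_of_K_ne_0 (ne_of_gt hM0)]
        simp only [zero_mul, zero_add]
        rw [hCzeq, ← hBdeq]
        rw [div_mul_eq_mul_div, div_mul_eq_mul_div, div_le_div_iff₀ hM0 hM0]
        nlinarith [sq_nonneg ‖ω‖, hM0.le, hBd0.le,
          mul_nonneg (mul_nonneg (sq_nonneg ‖ω‖) hBd0.le) hM0.le]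
      constructor
      · calc ‖y2 ω d - (f0 d - Complex.I * ω * f1 d)‖ = ‖w d‖ := by
              simp only [hwdef]; ring_nf
          _ ≤ max ‖w d‖ ‖w' d‖ := le_max_left _ _
          _ ≤ _ := le_trans hgr hb
      · calc ‖y2' ω d - (f0' d - Complex.I * ω * f1' d)‖ = ‖w' d‖ := by
              simp only [hw'def]; ring_nf
          _ ≤ max ‖w d‖ ‖w' d‖ := le_max_right _ _
          _ ≤ _ := le_trans hgr hb
    · have hqM : ‖(q t : ℂ)‖ ≤ M := by have := hMq t; linarith
      have h2 : ‖y2 ω t‖ ≤ Bd :=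
        le_trans (le_max_left _ _) (key1 ω hω hω1 t ht)
      calc ‖(q t : ℂ) * w t - ω ^ 2 * y2 ω t‖
          ≤ ‖(q t : ℂ) * w t‖ + ‖ω ^ 2 * y2 ω t‖ := norm_sub_le _ _
        _ = ‖(q t : ℂ)‖ * ‖w t‖ + ‖ω‖ ^ 2 * ‖y2 ω t‖ := by
            rw [norm_mul, norm_mul, norm_pow]
        _ ≤ M * max ‖w t‖ ‖w' t‖ + ‖ω‖ ^ 2 * Bd := by
            gcongr
            exact le_max_left _ _
    · have hw0 : w 0 = 0 := by simp [hwdef, hy20 ω hω, hf00, hf10]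
      have hw'0 : w' 0 = 0 := by
        simp only [hw'def, hy20' ω hω, hf00', hf10']
        ring
      simp [hw0, hw'0]
  -- formula for a via Wronskian at d
  have hform : ∀ ω : ℂ, ω ≠ 0 →
      a ω = -(1 / (2 * Complex.I * ω)) *
        (Complex.I * ω * Complex.exp (Complex.I * ω * d) * y2 ω d
          - Complex.exp (Complex.I * ω * d) * y2' ω d) := by
    intro ω hω
    set W : ℝ → ℂ := fun x => y1' ω x * y2 ω x - y1 ω x * y2' ω x with hWdef
    have hW : ∀ x, HasDerivAt W 0 x := by
      intro x
      have hWeq : HasDerivAt W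
          ((((q x : ℂ) - ω ^ 2) * y1 ω x * y2 ω x + y1' ω x * y2' ω x)
            - (y1' ω x * y2' ω x + y1 ω x * (((q x : ℂ) - ω ^ 2) * y2 ω x))) x :=
        ((hy1'' ω hω x).mul (hy2 ω hω x)).sub ((hy1 ω hω x).mul (hy2'' ω hω x))
      convert hWeq using 1
      ring
    have hWc : W 0 = W d := by
      have hdif : Differentiable ℝ W := fun x => (hW x).differentiableAt
      exact is_const_of_deriv_eq_zero hdif (fun x => (hW x).deriv) 0 d
    rw [ha ω hω]
    have hW0 : y1' ω 0 * y2 ω 0 - y1 ω 0 * y2' ω 0 = W d := hWc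
    rw [hW0]
    simp only [hWdef, hy1d ω hω, hy1d' ω hω]
  -- the big-O statement
  have hO : (fun ω : ℂ =>
      a ω - (f0' d / (2 * Complex.I * ω) - (1 / 2) * (f0 d - (d : ℂ) * f0' d + f1' d)))
      =O[𝓝[≠] (0:ℂ)] (fun ω : ℂ => ω) := by
    rw [Asymptotics.isBigO_iff]
    obtain ⟨Ed, hEd0, hEdeq⟩ : ∃ E : ℝ, 0 < E ∧ E = Real.exp d := ⟨_, Real.exp_pos d, rfl⟩
    refine ⟨‖f0' d‖ * d ^ 2 / 2 + ‖f0 d + f1' d‖ * d + Ed * Cz / 2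
      + Ed * (‖f1 d‖ + Cz) / 2, ?_⟩
    have hδ0 : (0:ℝ) < min 1 (1 / (d + 1)) := by positivity
    have hball : ∀ᶠ ω in 𝓝[≠] (0:ℂ), ‖ω‖ < min 1 (1 / (d + 1)) := by
      apply eventually_nhdsWithin_of_eventually_nhds
      filter_upwards [Metric.ball_mem_nhds (0:ℂ) hδ0] with ω hω
      simpa [Metric.mem_ball, dist_eq_norm] using hω
    filter_upwards [hball, eventually_mem_nhdsWithin] with ω hωs hωmem
    have hω : ω ≠ 0 := hωmem
    have hω1 : ‖ω‖ ≤ 1 := le_of_lt (lt_of_lt_of_le hωs (min_le_left _ _))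
    have hωd : ‖ω‖ * d ≤ 1 := by
      have h2 : ‖ω‖ ≤ 1 / (d + 1) := le_of_lt (lt_of_lt_of_le hωs (min_le_right _ _))
      rw [le_div_iff₀ (by linarith)] at h2
      nlinarith
    have hωpos : 0 < ‖ω‖ := norm_pos_iff.2 hω
    set E : ℂ := Complex.exp (Complex.I * ω * d) with hEdef
    set r : ℂ := y2 ω d - (f0 d - Complex.I * ω * f1 d) with hrdef
    set s : ℂ := y2' ω d - (f0' d - Complex.I * ω * f1' d) with hsdef
    obtain ⟨hr, hs⟩ := key2 ω hω hω1
    -- norm facts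
    have hnormIωd : ‖Complex.I * ω * (d : ℂ)‖ = ‖ω‖ * d := by
      simp [norm_mul, Complex.norm_real, abs_of_pos hd]
    have hnE : ‖E‖ ≤ Ed := by
      rw [hEdef, Complex.norm_exp, hEdeq]
      apply Real.exp_le_exp.2
      have hre : (Complex.I * ω * (d:ℂ)).re = -ω.im * d := by
        simp [Complex.mul_re, Complex.mul_im]
      rw [hre]
      have him : |ω.im| ≤ ‖ω‖ := by
        exact Complex.abs_im_le_norm ω
      nlinarith [neg_abs_le ω.im, hd.le]
    have hnE1 : ‖E - 1‖ ≤ 2 * (‖ω‖ * d) := by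
      rw [← hnormIωd]
      have h := Complex.norm_exp_sub_one_le (x := Complex.I * ω * (d:ℂ))
        (by rw [hnormIωd]; exact hωd)
      exact h
    have hnE2 : ‖E - 1 - Complex.I * ω * d‖ ≤ (‖ω‖ * d) ^ 2 := by
      have h := Complex.norm_exp_sub_one_sub_id_le (x := Complex.I * ω * (d:ℂ))
        (by rw [hnormIωd]; exact hωd)
      calc ‖E - 1 - Complex.I * ω * d‖ = ‖
            (Complex.exp (Complex.I * ω * (d:ℂ)) - 1 - Complex.I * ω * (d:ℂ))‖ := by
            rw [hEdef]
        _ ≤ ‖(Complex.I * ω * (d:ℂ))‖ ^ 2 := h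
        _ = (‖ω‖ * d) ^ 2 := by rw [hnormIωd]
    -- the algebraic identity
    have hid : a ω - (f0' d / (2 * Complex.I * ω)
        - (1 / 2) * (f0 d - (d : ℂ) * f0' d + f1' d))
        = f0' d * (E - 1 - Complex.I * ω * d) / (2 * Complex.I * ω)
          - (E - 1) * (f0 d + f1' d) / 2
          + E * s / (2 * Complex.I * ω)
          + E / 2 * (Complex.I * ω * f1 d - r) := by
      rw [hform ω hω, ← hEdef]
      exact aux_identity E (y2 ω d) (y2' ω d) (f0 d) (f0' d) (f1 d) (f1' d) r s ω d
        hω hrdef hsdef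
    rw [hid]
    have h2C : ‖(2:ℂ)‖ = 2 := by norm_num
    have hn2Iω : ‖2 * Complex.I * ω‖ = 2 * ‖ω‖ := by
      rw [norm_mul, norm_mul, h2C, Complex.norm_I, mul_one]
    -- bound each term
    have ht1 : ‖f0' d * (E - 1 - Complex.I * ω * d) / (2 * Complex.I * ω)‖
        ≤ ‖f0' d‖ * d ^ 2 / 2 * ‖ω‖ := by
      rw [norm_div, norm_mul, hn2Iω, div_le_iff₀ (by positivity)]
      nlinarith [norm_nonneg (f0' d), hnE2, norm_nonneg (E - 1 - Complex.I * ω * (d:ℂ))]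
    have ht2 : ‖(E - 1) * (f0 d + f1' d) / 2‖ ≤ ‖f0 d + f1' d‖ * d * ‖ω‖ := by
      rw [norm_div, norm_mul, h2C, div_le_iff₀ (by norm_num : (0:ℝ) < 2)]
      nlinarith [norm_nonneg (f0 d + f1' d), norm_nonneg (E - 1)]
    have ht3 : ‖E * s / (2 * Complex.I * ω)‖ ≤ Ed * Cz / 2 * ‖ω‖ := by
      rw [norm_div, norm_mul, hn2Iω, div_le_iff₀ (by positivity)]
      nlinarith [norm_nonneg s, norm_nonneg E, sq_nonneg ‖ω‖]
    have ht4 : ‖E / 2 * (Complex.I * ω * f1 d - r)‖ ≤ Ed * (‖f1 d‖ + Cz) / 2 * ‖ω‖ := by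
      rw [norm_mul, norm_div, h2C]
      have hsub : ‖Complex.I * ω * f1 d - r‖ ≤ ‖ω‖ * ‖f1 d‖ + Cz * ‖ω‖ ^ 2 := by
        calc ‖Complex.I * ω * f1 d - r‖ ≤ ‖Complex.I * ω * f1 d‖ + ‖r‖ := norm_sub_le _ _
          _ ≤ ‖ω‖ * ‖f1 d‖ + Cz * ‖ω‖ ^ 2 := by
              rw [norm_mul, norm_mul, Complex.norm_I, one_mul]
              exact add_le_add le_rfl hr
      have hsq : ‖ω‖ ^ 2 ≤ ‖ω‖ := by nlinarith
      have hstep : ‖E‖ / 2 * ‖Complex.I * ω * f1 d - r‖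
          ≤ Ed / 2 * (‖ω‖ * ‖f1 d‖ + Cz * ‖ω‖ ^ 2) := by
        gcongr
      refine le_trans hstep ?_
      nlinarith [hEd0.le, hCz0, norm_nonneg (f1 d),
        mul_nonneg (mul_nonneg hEd0.le hCz0) (sub_nonneg.2 hsq)]
    have hfinal : ‖f0' d * (E - 1 - Complex.I * ω * d) / (2 * Complex.I * ω)
          - (E - 1) * (f0 d + f1' d) / 2
          + E * s / (2 * Complex.I * ω)
          + E / 2 * (Complex.I * ω * f1 d - r)‖
        ≤ (‖f0' d‖ * d ^ 2 / 2 + ‖f0 d + f1' d‖ * d + Ed * Cz / 2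
          + Ed * (‖f1 d‖ + Cz) / 2) * ‖ω‖ := by
      calc ‖f0' d * (E - 1 - Complex.I * ω * d) / (2 * Complex.I * ω)
            - (E - 1) * (f0 d + f1' d) / 2
            + E * s / (2 * Complex.I * ω)
            + E / 2 * (Complex.I * ω * f1 d - r)‖
          ≤ ‖f0' d * (E - 1 - Complex.I * ω * d) / (2 * Complex.I * ω)
            - (E - 1) * (f0 d + f1' d) / 2
            + E * s / (2 * Complex.I * ω)‖ + ‖E / 2 * (Complex.I * ω * f1 d - r)‖ :=
            norm_add_le _ _
        _ ≤ (‖f0' d * (E - 1 - Complex.I * ω * d) / (2 * Complex.I * ω)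
            - (E - 1) * (f0 d + f1' d) / 2‖ + ‖E * s / (2 * Complex.I * ω)‖)
            + ‖E / 2 * (Complex.I * ω * f1 d - r)‖ := by
            gcongr
            exact norm_add_le _ _
        _ ≤ ((‖f0' d * (E - 1 - Complex.I * ω * d) / (2 * Complex.I * ω)‖
            + ‖(E - 1) * (f0 d + f1' d) / 2‖) + ‖E * s / (2 * Complex.I * ω)‖)
            + ‖E / 2 * (Complex.I * ω * f1 d - r)‖ := by
            gcongr
            exact norm_sub_le _ _
        _ ≤ (‖f0' d‖ * d ^ 2 / 2 + ‖f0 d + f1' d‖ * d + Ed * Cz / 2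
            + Ed * (‖f1 d‖ + Cz) / 2) * ‖ω‖ := by
            rw [add_mul, add_mul, add_mul]
            exact add_le_add (add_le_add (add_le_add ht1 ht2) ht3) ht4
    simpa using hfinal
  refine ⟨hO, ?_, ?_⟩
  · -- limit of ω * a ω
    have htend : Tendsto (fun ω : ℂ => ω * a ω) (𝓝[≠] 0)
        (𝓝 (f0' d / (2 * Complex.I))) := by
      have h1 : Tendsto (fun ω : ℂ => ω *
          (a ω - (f0' d / (2 * Complex.I * ω)
            - (1 / 2) * (f0 d - (d : ℂ) * f0' d + f1' d)))) (𝓝[≠] 0) (𝓝 0) := by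
        have hbig : (fun ω : ℂ => ω *
            (a ω - (f0' d / (2 * Complex.I * ω)
              - (1 / 2) * (f0 d - (d : ℂ) * f0' d + f1' d))))
            =O[𝓝[≠] (0:ℂ)] (fun ω : ℂ => ω * ω) :=
          (isBigO_refl (fun ω : ℂ => ω) _).mul hO
        have hsq : Tendsto (fun ω : ℂ => ω * ω) (𝓝[≠] (0:ℂ)) (𝓝 0) := by
          have h := (continuous_id.mul continuous_id).tendsto (0:ℂ)
          simp only [Pi.mul_apply, id, mul_zero] at h
          exact h.mono_left nhdsWithin_le_nhds
        exact hbig.trans_tendsto hsq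
      have h2 : Tendsto (fun ω : ℂ =>
          ω * ((1 / 2) * (f0 d - (d : ℂ) * f0' d + f1' d))) (𝓝[≠] (0:ℂ)) (𝓝 0) := by
        have h := (continuous_id.mul
          (continuous_const (y := (1 / 2) * (f0 d - (d : ℂ) * f0' d + f1' d)))).tendsto (0:ℂ)
        simp only [Pi.mul_apply, id, zero_mul] at h
        exact h.mono_left nhdsWithin_le_nhds
      have h3 : Tendsto (fun ω : ℂ => f0' d / (2 * Complex.I)
          + (ω * (a ω - (f0' d / (2 * Complex.I * ω)
            - (1 / 2) * (f0 d - (d : ℂ) * f0' d + f1' d)))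
          - ω * ((1 / 2) * (f0 d - (d : ℂ) * f0' d + f1' d)))) (𝓝[≠] (0:ℂ))
          (𝓝 (f0' d / (2 * Complex.I))) := by
        simpa using (tendsto_const_nhds (α := ℂ)
          (x := f0' d / (2 * Complex.I)) (f := 𝓝[≠] (0:ℂ))).add (h1.sub h2)
      apply h3.congr'
      filter_upwards [eventually_mem_nhdsWithin] with ω hωmem
      have hω : ω ≠ 0 := hωmem
      have hkey : ω * (f0' d / (2 * Complex.I * ω)) = f0' d / (2 * Complex.I) := by
        calc ω * (f0' d / (2 * Complex.I * ω))
            = ω * f0' d / (2 * Complex.I * ω) := (mul_div_assoc _ _ _).symm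
          _ = ω * f0' d / (ω * (2 * Complex.I)) := by rw [mul_comm (2 * Complex.I) ω]
          _ = f0' d / (2 * Complex.I) := mul_div_mul_left _ _ hω
      rw [mul_sub, mul_sub, hkey]
      ring
    constructor
    · rintro ⟨L, hL0, hLt⟩
      have hLeq : L = f0' d / (2 * Complex.I) := tendsto_nhds_unique hLt htend
      intro hcon
      rw [hcon] at hLeq
      simp at hLeq
      exact hL0 hLeq
    · intro h
      refine ⟨f0' d / (2 * Complex.I), div_ne_zero h ?_, htend⟩
      simp [Complex.I_ne_zero]
  · -- Neumann eigenvalue characterization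
    constructor
    · rintro h ⟨u, u', hu, hu', hu'0, hu'd, x0, hx0, hux0⟩
      set c : ℂ := u 0 with hcdef
      set w : ℝ → ℂ := fun x => u x - c * f0 x with hwdef
      set w' : ℝ → ℂ := fun x => u' x - c * f0' x with hw'def
      have hw : ∀ x, HasDerivAt w (w' x) x := fun x =>
        (hu x).sub ((hf0 x).const_mul c)
      have hwd : ∀ x, HasDerivAt w' ((q x : ℂ) * w x) x := by
        intro x
        have h2 := (hu' x).sub ((hf0' x).const_mul c)
        refine h2.congr_deriv ?_
        simp only [w]
        ring
      have hgr := pair_gronwall M 0 0 hM1 le_rfl w w'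
        (fun x => (q x : ℂ) * w x) hw hwd d
        (fun t ht => ?_) ?_
      · have hzero : ∀ x ∈ Set.Icc (0:ℝ) d, w x = 0 ∧ w' x = 0 := by
          intro x hx
          have hb := hgr x hx
          rw [gronwallBound_ε0] at hb
          simp only [zero_mul] at hb
          constructor
          · have h4 := le_trans (le_max_left ‖w x‖ ‖w' x‖) hb
            simpa using le_antisymm h4 (norm_nonneg _)
          · have h4 := le_trans (le_max_right ‖w x‖ ‖w' x‖) hb
            simpa using le_antisymm h4 (norm_nonneg _)
        have hwd0 : w' d = 0 := (hzero d ⟨hd.le, le_rfl⟩).2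
        have hc0 : c = 0 := by
          have h5 : u' d - c * f0' d = 0 := hwd0
          rw [hu'd] at h5
          have h6 : c * f0' d = 0 := by linear_combination -h5
          rcases mul_eq_zero.1 h6 with h7 | h7
          · exact h7
          · exact absurd h7 h
        have h8 : w x0 = 0 := (hzero x0 hx0).1
        rw [hwdef] at h8
        simp only [hc0, zero_mul, sub_zero] at h8
        exact hux0 h8
      · have hqM : ‖(q t : ℂ)‖ ≤ M := by have := hMq t; linarith
        calc ‖(q t : ℂ) * w t‖ = ‖(q t : ℂ)‖ * ‖w t‖ := norm_mul _ _
          _ ≤ M * max ‖w t‖ ‖w' t‖ + 0 := by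
              rw [add_zero]
              gcongr
              exact le_max_left _ _
      · have hw0 : w 0 = 0 := by simp [hwdef, hcdef, hf00]
        have hw'0 : w' 0 = 0 := by simp [hw'def, hu'0, hf00']
        simp [hw0, hw'0]
    · intro hne
      by_contra h0
      exact hne ⟨f0, f0', hf0, hf0', hf00', h0, 0, ⟨le_rfl, hd.le⟩, by
        rw [hf00]; exact one_ne_zero⟩
end

section
/- If f0'(d) ≠ 0, then for every x ∈ ℝ the generalized eigenfunctions vanish at the origin of the spectral parameter: lim_{ω → 0⁺} y1(x,ω)/(√(2π)·a(ω)) = 0 and lim_{ω → 0⁺} y2(x,ω)/(√(2π)·a(ω)) = 0, where the limit is taken over real ω > 0. -/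
open Complex Filter Topology Asymptotics


private lemma mul_conj_re (z : ℂ) : (z * (starRingEnd ℂ) z).re = ‖z‖^2 := by
  rw [Complex.mul_conj, Complex.ofReal_re, Complex.normSq_eq_norm_sq]

private lemma energy_bound (y y' c : ℝ → ℂ) (K : ℝ)
    (hy : ∀ t, HasDerivAt y (y' t) t) (hy' : ∀ t, HasDerivAt y' (c t * y t) t)
    (hc : ∀ t, ‖c t‖ + 1 ≤ K) (s t : ℝ) :
    ‖y t‖ ^ 2 + ‖y' t‖ ^ 2 ≤ (‖y s‖ ^ 2 + ‖y' s‖ ^ 2) * Real.exp (K * |t - s|) := by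
  set E : ℝ → ℝ := fun u => ‖y u‖ ^ 2 + ‖y' u‖ ^ 2 with hEdef
  set E' : ℝ → ℝ := fun u => (y' u * (starRingEnd ℂ) (y u) + y u * (starRingEnd ℂ) (y' u)).re
        + (c u * y u * (starRingEnd ℂ) (y' u) + y' u * (starRingEnd ℂ) (c u * y u)).re with hE'def
  have hE : ∀ u, HasDerivAt E (E' u) u := by
    intro u
    have h1 : HasDerivAt (fun v => (y v * (starRingEnd ℂ) (y v)).re)
        ((y' u * (starRingEnd ℂ) (y u) + y u * (starRingEnd ℂ) (y' u)).re) u :=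
      (Complex.reCLM.hasFDerivAt.comp_hasDerivAt u (((hy u).mul (hy u).star)))
    have h2 : HasDerivAt (fun v => (y' v * (starRingEnd ℂ) (y' v)).re)
        ((c u * y u * (starRingEnd ℂ) (y' u) + y' u * (starRingEnd ℂ) (c u * y u)).re) u :=
      (Complex.reCLM.hasFDerivAt.comp_hasDerivAt u (((hy' u).mul (hy' u).star)))
    have h := h1.add h2
    have heq : (fun v => (y v * (starRingEnd ℂ) (y v)).re + (y' v * (starRingEnd ℂ) (y' v)).re)
        = E := by
      funext v; rw [mul_conj_re, mul_conj_re]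
    have h' : HasDerivAt (fun v => (y v * (starRingEnd ℂ) (y v)).re + (y' v * (starRingEnd ℂ) (y' v)).re) _ u := h
    rwa [heq] at h'
  have hEnn : ∀ u, 0 ≤ E u := fun u => by positivity
  have hK1 : (1:ℝ) ≤ K := le_trans (by have := norm_nonneg (c 0); linarith) (hc 0)
  have hK0 : (0:ℝ) ≤ K := le_trans zero_le_one hK1
  have hbound : ∀ u, |E' u| ≤ K * E u := by
    intro u
    have e1 : |(y' u * (starRingEnd ℂ) (y u) + y u * (starRingEnd ℂ) (y' u)).re|
        ≤ 2 * (‖y u‖ * ‖y' u‖) := by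
      calc |(y' u * (starRingEnd ℂ) (y u) + y u * (starRingEnd ℂ) (y' u)).re|
          ≤ ‖y' u * (starRingEnd ℂ) (y u) + y u * (starRingEnd ℂ) (y' u)‖ :=
            Complex.abs_re_le_norm _
        _ ≤ ‖y' u * (starRingEnd ℂ) (y u)‖ + ‖y u * (starRingEnd ℂ) (y' u)‖ := norm_add_le _ _
        _ = 2 * (‖y u‖ * ‖y' u‖) := by
            rw [norm_mul, norm_mul, RingHomIsometric.norm_map, RingHomIsometric.norm_map]; ring
    have e2 : |(c u * y u * (starRingEnd ℂ) (y' u) + y' u * (starRingEnd ℂ) (c u * y u)).re|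
        ≤ ‖c u‖ * (2 * (‖y u‖ * ‖y' u‖)) := by
      calc |(c u * y u * (starRingEnd ℂ) (y' u) + y' u * (starRingEnd ℂ) (c u * y u)).re|
          ≤ ‖c u * y u * (starRingEnd ℂ) (y' u) + y' u * (starRingEnd ℂ) (c u * y u)‖ :=
            Complex.abs_re_le_norm _
        _ ≤ ‖c u * y u * (starRingEnd ℂ) (y' u)‖ + ‖y' u * (starRingEnd ℂ) (c u * y u)‖ :=
            norm_add_le _ _
        _ = ‖c u‖ * (2 * (‖y u‖ * ‖y' u‖)) := by
            rw [norm_mul, norm_mul, norm_mul, RingHomIsometric.norm_map, RingHomIsometric.norm_map,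
              norm_mul]; ring
    have e3 : 2 * (‖y u‖ * ‖y' u‖) ≤ E u := by
      have := two_mul_le_add_sq ‖y u‖ ‖y' u‖
      simpa [hEdef, mul_assoc] using this
    calc |E' u| ≤ |(y' u * (starRingEnd ℂ) (y u) + y u * (starRingEnd ℂ) (y' u)).re|
          + |(c u * y u * (starRingEnd ℂ) (y' u) + y' u * (starRingEnd ℂ) (c u * y u)).re| :=
          abs_add_le _ _
      _ ≤ 2 * (‖y u‖ * ‖y' u‖) + ‖c u‖ * (2 * (‖y u‖ * ‖y' u‖)) := add_le_add e1 e2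
      _ = (‖c u‖ + 1) * (2 * (‖y u‖ * ‖y' u‖)) := by ring
      _ ≤ K * E u := by
          apply mul_le_mul (hc u) e3 (by positivity)
          exact hK0
  -- forward and backward estimates
  have forward : ∀ u v : ℝ, u ≤ v → E v ≤ E u * Real.exp (K * (v - u)) := by
    intro u v huv
    set g : ℝ → ℝ := fun w => E w * Real.exp (-K * w) with hgdef
    have hg : ∀ w, HasDerivAt g ((E' w - K * E w) * Real.exp (-K * w)) w := by
      intro w
      have hexp : HasDerivAt (fun w : ℝ => Real.exp (-K * w)) (Real.exp (-K * w) * (-K)) w :=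
        (Real.hasDerivAt_exp (-K * w)).comp w (by simpa using (hasDerivAt_id w).const_mul (-K) : HasDerivAt (fun w : ℝ => -K * w) (-K) w)
      have : HasDerivAt (fun w => E w * Real.exp (-K * w)) _ w := (hE w).mul hexp
      convert this using 1
      ring
    have hanti : Antitone g := by
      apply antitone_of_deriv_nonpos (fun w => (hg w).differentiableAt)
      intro w
      rw [(hg w).deriv]
      apply mul_nonpos_of_nonpos_of_nonneg
      · have := (abs_le.mp (hbound w)).2
        linarith
      · exact (Real.exp_pos _).le
    have h := hanti huv
    have h2 := mul_le_mul_of_nonneg_right h (Real.exp_pos (K * v)).le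
    calc E v = E v * Real.exp (-K * v) * Real.exp (K * v) := by
          rw [mul_assoc, ← Real.exp_add]; simp
      _ ≤ E u * Real.exp (-K * u) * Real.exp (K * v) := h2
      _ = E u * Real.exp (K * (v - u)) := by
          rw [mul_assoc, ← Real.exp_add]; ring_nf
  have backward : ∀ u v : ℝ, u ≤ v → E u ≤ E v * Real.exp (K * (v - u)) := by
    intro u v huv
    set g : ℝ → ℝ := fun w => E w * Real.exp (K * w) with hgdef
    have hg : ∀ w, HasDerivAt g ((E' w + K * E w) * Real.exp (K * w)) w := by
      intro w
      have hexp : HasDerivAt (fun w : ℝ => Real.exp (K * w)) (Real.exp (K * w) * K) w :=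
        (Real.hasDerivAt_exp (K * w)).comp w (by simpa using (hasDerivAt_id w).const_mul K : HasDerivAt (fun w : ℝ => K * w) K w)
      have : HasDerivAt (fun w => E w * Real.exp (K * w)) _ w := (hE w).mul hexp
      convert this using 1
      ring
    have hmono : Monotone g := by
      apply monotone_of_deriv_nonneg (fun w => (hg w).differentiableAt)
      intro w
      rw [(hg w).deriv]
      apply mul_nonneg _ (Real.exp_pos _).le
      have := (abs_le.mp (hbound w)).1
      linarith
    have h := hmono huv
    have h2 := mul_le_mul_of_nonneg_right h (Real.exp_pos (-K * u)).le
    calc E u = E u * Real.exp (K * u) * Real.exp (-K * u) := by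
          rw [mul_assoc, ← Real.exp_add]; simp
      _ ≤ E v * Real.exp (K * v) * Real.exp (-K * u) := h2
      _ = E v * Real.exp (K * (v - u)) := by
          rw [mul_assoc, ← Real.exp_add]; ring_nf
  rcases le_total s t with h | h
  · rw [_root_.abs_of_nonneg (by linarith : (0:ℝ) ≤ t - s)]
    exact forward s t h
  · rw [_root_.abs_of_nonpos (by linarith : t - s ≤ (0:ℝ)), neg_sub]
    exact backward t s h

/-- If `f0'(d) ≠ 0`, then for every `x`,
`lim_{ω → 0⁺} y1(x,ω)/(√(2π)·a(ω)) = 0` and `lim_{ω → 0⁺} y2(x,ω)/(√(2π)·a(ω)) = 0`,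
where the limit is taken over real `ω > 0`. -/
theorem generalized_eigenfunctions_vanish_at_zero
    (d : ℝ) (hd : 0 < d) (q : ℝ → ℝ) (hq : Continuous q)
    (hqsupp : ∀ x : ℝ, x ∉ Set.Icc 0 d → q x = 0)
    (y1 y1' y2 y2' : ℂ → ℝ → ℂ)
    (hy1 : ∀ ω : ℂ, ω ≠ 0 → ∀ x, HasDerivAt (y1 ω) (y1' ω x) x)
    (hy1'' : ∀ ω : ℂ, ω ≠ 0 → ∀ x, HasDerivAt (y1' ω) (((q x : ℂ) - ω ^ 2) * y1 ω x) x)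
    (hy1d : ∀ ω : ℂ, ω ≠ 0 → y1 ω d = Complex.exp (Complex.I * ω * d))
    (hy1d' : ∀ ω : ℂ, ω ≠ 0 → y1' ω d = Complex.I * ω * Complex.exp (Complex.I * ω * d))
    (hy2 : ∀ ω : ℂ, ω ≠ 0 → ∀ x, HasDerivAt (y2 ω) (y2' ω x) x)
    (hy2'' : ∀ ω : ℂ, ω ≠ 0 → ∀ x, HasDerivAt (y2' ω) (((q x : ℂ) - ω ^ 2) * y2 ω x) x)
    (hy20 : ∀ ω : ℂ, ω ≠ 0 → y2 ω 0 = 1)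
    (hy20' : ∀ ω : ℂ, ω ≠ 0 → y2' ω 0 = -Complex.I * ω)
    (a : ℂ → ℂ)
    (ha : ∀ ω : ℂ, ω ≠ 0 →
      a ω = -(1 / (2 * Complex.I * ω)) * (y1' ω 0 * y2 ω 0 - y1 ω 0 * y2' ω 0))
    (f0 f0' : ℝ → ℂ)
    (hf0 : ∀ x, HasDerivAt f0 (f0' x) x)
    (hf0' : ∀ x, HasDerivAt f0' ((q x : ℂ) * f0 x) x)
    (hf00 : f0 0 = 1) (hf00' : f0' 0 = 0)
    (hf0d : f0' d ≠ 0) :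
    ∀ x : ℝ,
      Tendsto (fun ω : ℝ => y1 (ω : ℂ) x / ((Real.sqrt (2 * Real.pi) : ℂ) * a (ω : ℂ)))
        (𝓝[>] 0) (𝓝 0) ∧
      Tendsto (fun ω : ℝ => y2 (ω : ℂ) x / ((Real.sqrt (2 * Real.pi) : ℂ) * a (ω : ℂ)))
        (𝓝[>] 0) (𝓝 0) := by
  -- bound on q
  obtain ⟨Cq0, hCq0⟩ := (isCompact_Icc (a := (0:ℝ)) (b := d)).exists_bound_of_continuousOn
    hq.continuousOn
  set Cq : ℝ := max Cq0 0 with hCqdef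
  have hCq0' : (0:ℝ) ≤ Cq := le_max_right _ _
  have hqb : ∀ t : ℝ, |q t| ≤ Cq := by
    intro t
    by_cases ht : t ∈ Set.Icc 0 d
    · exact le_trans (hCq0 t ht) (le_max_left _ _)
    · rw [hqsupp t ht]; simpa using hCq0'
  set K : ℝ := Cq + 2 with hKdef
  have hK0 : (0:ℝ) ≤ K := by positivity
  -- coefficient bound
  have hcb : ∀ r : ℝ, 0 < r → r ≤ 1 → ∀ t : ℝ, ‖(q t : ℂ) - ((r:ℂ))^2‖ + 1 ≤ K := by
    intro r hr hr1 t
    have h1 : ‖(q t : ℂ) - ((r:ℂ))^2‖ ≤ ‖(q t : ℂ)‖ + ‖((r:ℂ))^2‖ := norm_sub_le _ _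
    have h2 : ‖(q t : ℂ)‖ = |q t| := Complex.norm_real _
    have h3 : ‖((r:ℂ))^2‖ = r^2 := by
      rw [norm_pow, Complex.norm_real, Real.norm_eq_abs, _root_.abs_of_pos hr]
    have h4 : r^2 ≤ 1 := by nlinarith
    have := hqb t
    rw [h2, h3] at h1
    simp only [hKdef]
    linarith
  -- energy bounds for y1 (anchored at d) and y2 (anchored at 0)
  have hy1b : ∀ r : ℝ, 0 < r → r ≤ 1 → ∀ t : ℝ,
      ‖y1 (r:ℂ) t‖ ^ 2 ≤ 2 * Real.exp (K * |t - d|) := by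
    intro r hr hr1 t
    have hrne : ((r:ℂ)) ≠ 0 := by exact_mod_cast hr.ne'
    have hE := energy_bound (y1 (r:ℂ)) (y1' (r:ℂ)) (fun u => (q u : ℂ) - ((r:ℂ))^2) K
      (hy1 _ hrne) (hy1'' _ hrne) (hcb r hr hr1) d t
    have hEd : ‖y1 (r:ℂ) d‖ ^ 2 + ‖y1' (r:ℂ) d‖ ^ 2 ≤ 2 := by
      rw [hy1d _ hrne, hy1d' _ hrne]
      have hexp : ‖Complex.exp (Complex.I * (r:ℂ) * (d:ℂ))‖ = 1 := by
        rw [Complex.norm_exp]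
        simp
      simp only [norm_mul, hexp, Complex.norm_I, Complex.norm_real, Real.norm_eq_abs]
      rw [_root_.abs_of_pos hr]
      nlinarith
    have h2 : ‖y1 (r:ℂ) t‖ ^ 2 ≤ ‖y1 (r:ℂ) t‖ ^ 2 + ‖y1' (r:ℂ) t‖ ^ 2 :=
      le_add_of_nonneg_right (by positivity)
    have h3 : (‖y1 (r:ℂ) d‖ ^ 2 + ‖y1' (r:ℂ) d‖ ^ 2) * Real.exp (K * |t - d|)
        ≤ 2 * Real.exp (K * |t - d|) :=
      mul_le_mul_of_nonneg_right hEd (Real.exp_pos _).le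
    linarith
  have hy2b : ∀ r : ℝ, 0 < r → r ≤ 1 → ∀ t : ℝ,
      ‖y2 (r:ℂ) t‖ ^ 2 ≤ 2 * Real.exp (K * |t|) := by
    intro r hr hr1 t
    have hrne : ((r:ℂ)) ≠ 0 := by exact_mod_cast hr.ne'
    have hE := energy_bound (y2 (r:ℂ)) (y2' (r:ℂ)) (fun u => (q u : ℂ) - ((r:ℂ))^2) K
      (hy2 _ hrne) (hy2'' _ hrne) (hcb r hr hr1) 0 t
    have hEd : ‖y2 (r:ℂ) 0‖ ^ 2 + ‖y2' (r:ℂ) 0‖ ^ 2 ≤ 2 := by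
      rw [hy20 _ hrne, hy20' _ hrne]
      simp only [norm_mul, norm_neg, Complex.norm_I, Complex.norm_real, Real.norm_eq_abs,
        norm_one, one_mul]
      rw [_root_.abs_of_pos hr]
      nlinarith
    have h2 : ‖y2 (r:ℂ) t‖ ^ 2 ≤ ‖y2 (r:ℂ) t‖ ^ 2 + ‖y2' (r:ℂ) t‖ ^ 2 :=
      le_add_of_nonneg_right (by positivity)
    have h3 : (‖y2 (r:ℂ) 0‖ ^ 2 + ‖y2' (r:ℂ) 0‖ ^ 2) * Real.exp (K * |t - 0|)
        ≤ 2 * Real.exp (K * |t - 0|) :=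
      mul_le_mul_of_nonneg_right hEd (Real.exp_pos _).le
    rw [sub_zero] at h3 hE
    linarith
  -- pointwise sqrt bounds
  have hsq : ∀ (z : ℂ) (B : ℝ), ‖z‖ ^ 2 ≤ 2 * Real.exp B → ‖z‖ ≤ Real.sqrt (2 * Real.exp B) := by
    intro z B h
    rw [Real.le_sqrt (norm_nonneg _) (by positivity)]
    exact h
  set C1 : ℝ := Real.sqrt (2 * Real.exp (K * d)) with hC1def
  have hC1nn : 0 ≤ C1 := Real.sqrt_nonneg _
  have hy1bd : ∀ r : ℝ, 0 < r → r ≤ 1 → ∀ t ∈ Set.Icc (0:ℝ) d, ‖y1 (r:ℂ) t‖ ≤ C1 := by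
    intro r hr hr1 t ht
    apply hsq
    refine le_trans (hy1b r hr hr1 t) ?_
    have : |t - d| ≤ d := by
      rw [abs_le]; constructor <;> [linarith [ht.1]; linarith [ht.2, hd.le]]
    have h1 : K * |t - d| ≤ K * d := mul_le_mul_of_nonneg_left this hK0
    have h2 := Real.exp_le_exp.mpr h1
    linarith
  -- continuity of relevant functions
  have hf0cont : Continuous f0 := by
    rw [continuous_iff_continuousAt]; exact fun t => (hf0 t).continuousAt
  obtain ⟨Cf0, hCf0⟩ := (isCompact_Icc (a := (0:ℝ)) (b := d)).exists_bound_of_continuousOn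
    hf0cont.continuousOn
  set Cf : ℝ := max Cf0 0 with hCfdef
  have hCfnn : (0:ℝ) ≤ Cf := le_max_right _ _
  have hf0b : ∀ t ∈ Set.Icc (0:ℝ) d, ‖f0 t‖ ≤ Cf := fun t ht =>
    le_trans (hCf0 t ht) (le_max_left _ _)
  -- Wronskian identity
  have hW : ∀ r : ℝ, 0 < r →
      y1' (r:ℂ) 0 = Complex.I * (r:ℂ) * Complex.exp (Complex.I * (r:ℂ) * d) * f0 d
        - Complex.exp (Complex.I * (r:ℂ) * d) * f0' d
        + ((r:ℂ))^2 * ∫ t in (0:ℝ)..d, y1 (r:ℂ) t * f0 t := by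
    intro r hr
    have hrne : ((r:ℂ)) ≠ 0 := by exact_mod_cast hr.ne'
    set W : ℝ → ℂ := fun t => y1' (r:ℂ) t * f0 t - y1 (r:ℂ) t * f0' t with hWdef
    have hWd : ∀ t : ℝ, HasDerivAt W (-(((r:ℂ))^2) * (y1 (r:ℂ) t * f0 t)) t := by
      intro t
      have h := ((hy1'' _ hrne t).mul (hf0 t)).add ((hy1 _ hrne t).mul (hf0' t))
      have h2 := ((hy1 _ hrne t).mul (hf0' t)).add
        ((hy1 _ hrne t).mul (hf0' t))
      have hder := (((hy1'' _ hrne t).mul (hf0 t)).add ((hy1 _ hrne t).mul (hf0' t))).sub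
        (((hy1 _ hrne t).mul (hf0' t)).add ((hy1 _ hrne t).mul (hf0' t)))
      -- compute directly
      have hW1 : HasDerivAt (fun u => y1' (r:ℂ) u * f0 u)
          (((q t : ℂ) - ((r:ℂ))^2) * y1 (r:ℂ) t * f0 t + y1' (r:ℂ) t * f0' t) t :=
        (hy1'' _ hrne t).mul (hf0 t)
      have hW2 : HasDerivAt (fun u => y1 (r:ℂ) u * f0' u)
          (y1' (r:ℂ) t * f0' t + y1 (r:ℂ) t * ((q t : ℂ) * f0 t)) t :=
        (hy1 _ hrne t).mul (hf0' t)
      have : HasDerivAt (fun u => y1' (r:ℂ) u * f0 u - y1 (r:ℂ) u * f0' u) _ t := hW1.sub hW2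
      convert this using 1
      ring
    have hcont : Continuous (fun t : ℝ => -(((r:ℂ))^2) * (y1 (r:ℂ) t * f0 t)) := by
      apply Continuous.mul continuous_const
      apply Continuous.mul _ hf0cont
      rw [continuous_iff_continuousAt]
      exact fun t => (hy1 _ hrne t).continuousAt
    have hftc := intervalIntegral.integral_eq_sub_of_hasDerivAt
      (f := W) (f' := fun t => -(((r:ℂ))^2) * (y1 (r:ℂ) t * f0 t))
      (fun t _ => hWd t) (hcont.intervalIntegrable 0 d)
    have hW0 : W 0 = y1' (r:ℂ) 0 := by
      simp [hWdef, hf00, hf00']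
    have hWdval : W d = Complex.I * (r:ℂ) * Complex.exp (Complex.I * (r:ℂ) * d) * f0 d
        - Complex.exp (Complex.I * (r:ℂ) * d) * f0' d := by
      simp [hWdef, hy1d _ hrne, hy1d' _ hrne]
    rw [intervalIntegral.integral_const_mul, hW0, hWdval] at hftc
    linear_combination hftc
  -- integral bound
  have hIb : ∀ r : ℝ, 0 < r → r ≤ 1 →
      ‖∫ t in (0:ℝ)..d, y1 (r:ℂ) t * f0 t‖ ≤ C1 * Cf * d := by
    intro r hr hr1
    have h := intervalIntegral.norm_integral_le_of_norm_le_const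
      (C := C1 * Cf) (f := fun t => y1 (r:ℂ) t * f0 t) (a := (0:ℝ)) (b := d) ?_
    · rwa [sub_zero, _root_.abs_of_pos hd] at h
    · intro t ht
      rw [Set.uIoc_of_le hd.le] at ht
      have ht' : t ∈ Set.Icc (0:ℝ) d := ⟨ht.1.le, ht.2⟩
      rw [norm_mul]
      exact mul_le_mul (hy1bd r hr hr1 t ht') (hf0b t ht') (norm_nonneg _) hC1nn
  -- the function D
  set D : ℝ → ℂ := fun r => y1' (r:ℂ) 0 + Complex.I * (r:ℂ) * y1 (r:ℂ) 0 with hDdef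
  have hsmall : ∀ᶠ r in 𝓝[>] (0:ℝ), r ∈ Set.Ioc (0:ℝ) 1 :=
    Ioc_mem_nhdsGT_of_mem ⟨le_refl _, one_pos⟩
  have hDlim : Tendsto D (𝓝[>] (0:ℝ)) (𝓝 (-f0' d)) := by
    have hmain : Tendsto (fun r : ℝ =>
        Complex.I * (r:ℂ) * Complex.exp (Complex.I * (r:ℂ) * d) * f0 d
          - Complex.exp (Complex.I * (r:ℂ) * d) * f0' d) (𝓝[>] (0:ℝ)) (𝓝 (-f0' d)) := by
      have hcont : Continuous (fun r : ℝ =>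
          Complex.I * (r:ℂ) * Complex.exp (Complex.I * (r:ℂ) * d) * f0 d
            - Complex.exp (Complex.I * (r:ℂ) * d) * f0' d) := by
        fun_prop
      have := hcont.tendsto 0
      simp only [Complex.ofReal_zero, mul_zero, zero_mul, Complex.exp_zero] at this
      norm_num at this
      exact this.mono_left nhdsWithin_le_nhds
    have hrest : Tendsto (fun r : ℝ =>
        ((r:ℂ))^2 * (∫ t in (0:ℝ)..d, y1 (r:ℂ) t * f0 t) + Complex.I * (r:ℂ) * y1 (r:ℂ) 0)
        (𝓝[>] (0:ℝ)) (𝓝 0) := by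
      apply squeeze_zero_norm' (a := fun r : ℝ => r^2 * (C1 * Cf * d) + r * C1)
      · filter_upwards [hsmall] with r hr
        have hr0 := hr.1
        have hr1 := hr.2
        have h1 : ‖((r:ℂ))^2 * (∫ t in (0:ℝ)..d, y1 (r:ℂ) t * f0 t)‖ ≤ r^2 * (C1 * Cf * d) := by
          rw [norm_mul, norm_pow, Complex.norm_real, Real.norm_eq_abs, _root_.abs_of_pos hr0]
          exact mul_le_mul_of_nonneg_left (hIb r hr0 hr1) (by positivity)
        have h2 : ‖Complex.I * (r:ℂ) * y1 (r:ℂ) 0‖ ≤ r * C1 := by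
          rw [norm_mul, norm_mul, Complex.norm_I, one_mul, Complex.norm_real,
            Real.norm_eq_abs, _root_.abs_of_pos hr0]
          apply mul_le_mul_of_nonneg_left _ hr0.le
          exact hy1bd r hr0 hr1 0 ⟨le_refl _, hd.le⟩
        calc ‖((r:ℂ))^2 * (∫ t in (0:ℝ)..d, y1 (r:ℂ) t * f0 t)
              + Complex.I * (r:ℂ) * y1 (r:ℂ) 0‖
            ≤ ‖((r:ℂ))^2 * (∫ t in (0:ℝ)..d, y1 (r:ℂ) t * f0 t)‖
              + ‖Complex.I * (r:ℂ) * y1 (r:ℂ) 0‖ := norm_add_le _ _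
          _ ≤ r^2 * (C1 * Cf * d) + r * C1 := add_le_add h1 h2
      · have : Continuous (fun r : ℝ => r^2 * (C1 * Cf * d) + r * C1) := by fun_prop
        have h := this.tendsto 0
        norm_num at h
        exact h.mono_left nhdsWithin_le_nhds
    have heq : ∀ᶠ r in 𝓝[>] (0:ℝ), (fun r : ℝ =>
        (Complex.I * (r:ℂ) * Complex.exp (Complex.I * (r:ℂ) * d) * f0 d
          - Complex.exp (Complex.I * (r:ℂ) * d) * f0' d)
        + (((r:ℂ))^2 * (∫ t in (0:ℝ)..d, y1 (r:ℂ) t * f0 t)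
          + Complex.I * (r:ℂ) * y1 (r:ℂ) 0)) r = D r := by
      filter_upwards [hsmall] with r hr
      rw [hDdef]
      simp only
      rw [hW r hr.1]
      ring
    have := hmain.add hrest
    rw [add_zero] at this
    exact Tendsto.congr' heq this
  -- a in terms of D
  have hDa : ∀ r : ℝ, 0 < r → a ((r:ℂ)) = -D r / (2 * Complex.I * (r:ℂ)) := by
    intro r hr
    have hrne : ((r:ℂ)) ≠ 0 := by exact_mod_cast hr.ne'
    rw [ha _ hrne, hy20 _ hrne, hy20' _ hrne, hDdef]
    simp only
    field_simp
    ring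
  -- nonzero limit of denominator
  have hs2pi : (0:ℝ) < Real.sqrt (2 * Real.pi) := Real.sqrt_pos.mpr (by positivity)
  have hsne : ((Real.sqrt (2 * Real.pi) : ℝ) : ℂ) ≠ 0 := by
    exact_mod_cast hs2pi.ne'
  have hden : Tendsto (fun r : ℝ => ((Real.sqrt (2 * Real.pi) : ℝ) : ℂ) * D r)
      (𝓝[>] (0:ℝ)) (𝓝 (((Real.sqrt (2 * Real.pi) : ℝ) : ℂ) * (-f0' d))) :=
    tendsto_const_nhds.mul hDlim
  have hdenne : ((Real.sqrt (2 * Real.pi) : ℝ) : ℂ) * (-f0' d) ≠ 0 :=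
    mul_ne_zero hsne (neg_ne_zero.mpr hf0d)
  -- main conclusion
  intro x
  have key : ∀ (Y : ℂ → ℝ → ℂ) (B : ℝ), 0 ≤ B →
      (∀ r : ℝ, 0 < r → r ≤ 1 → ‖Y (r:ℂ) x‖ ≤ B) →
      Tendsto (fun ω : ℝ => Y (ω : ℂ) x / ((Real.sqrt (2 * Real.pi) : ℂ) * a (ω : ℂ)))
        (𝓝[>] 0) (𝓝 0) := by
    intro Y B hB hYb
    have hnum : Tendsto (fun r : ℝ => -(2 * Complex.I * (r:ℂ)) * Y (r:ℂ) x)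
        (𝓝[>] (0:ℝ)) (𝓝 0) := by
      apply squeeze_zero_norm' (a := fun r : ℝ => 2 * r * B)
      · filter_upwards [hsmall] with r hr
        have hnrm : ‖-(2 * Complex.I * (r:ℂ)) * Y (r:ℂ) x‖ = 2 * r * ‖Y (r:ℂ) x‖ := by
          rw [norm_mul, norm_neg, norm_mul, norm_mul, Complex.norm_I, Complex.norm_real,
            Real.norm_eq_abs, _root_.abs_of_pos hr.1]
          norm_num
        rw [hnrm]
        have h2r : (0:ℝ) ≤ 2 * r := by linarith [hr.1]
        exact mul_le_mul_of_nonneg_left (hYb r hr.1 hr.2) h2r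
      · have : Continuous (fun r : ℝ => 2 * r * B) := by fun_prop
        have h := this.tendsto 0
        norm_num at h
        exact h.mono_left nhdsWithin_le_nhds
    have hdiv := hnum.div hden hdenne
    rw [zero_div] at hdiv
    apply Tendsto.congr' _ hdiv
    filter_upwards [self_mem_nhdsWithin] with r hr
    have hr0 : (0:ℝ) < r := hr
    have hrne : ((r:ℂ)) ≠ 0 := by exact_mod_cast hr0.ne'
    simp only [Pi.div_apply]
    rw [hDa r hr0]
    have hrw : ((Real.sqrt (2 * Real.pi) : ℝ) : ℂ) * (-D r / (2 * Complex.I * (r:ℂ)))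
        = (((Real.sqrt (2 * Real.pi) : ℝ) : ℂ) * D r) / (-(2 * Complex.I * (r:ℂ))) := by
      rw [div_neg, neg_div, mul_neg, mul_div_assoc]
    rw [hrw, div_div_eq_mul_div]
    ring
  constructor
  · apply key y1 (Real.sqrt (2 * Real.exp (K * |x - d|))) (Real.sqrt_nonneg _)
    intro r hr hr1
    exact hsq _ _ (hy1b r hr hr1 x)
  · apply key y2 (Real.sqrt (2 * Real.exp (K * |x|))) (Real.sqrt_nonneg _)
    intro r hr hr1
    exact hsq _ _ (hy2b r hr hr1 x)
end

section
/- If f0'(d) = 0, then f1'(d) = 1/f0(d) (in particular f0(d) ≠ 0), the quantity f0(d) + f1'(d) = f0(d) + 1/f0(d) is nonzero, and as ω → 0 (ω ≠ 0) the transmission coefficient satisfies a(ω) = −(1/2)·( f0(d) + f1'(d) ) + O(ω). -/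
open Complex Filter Topology Asymptotics

lemma ode_pair_bound (a b : ℝ) (u u' w : ℝ → ℂ)
    (hu : ∀ t, HasDerivAt u (u' t) t)
    (hu' : ∀ t, HasDerivAt u' (w t) t)
    (K ε : ℝ) (hK : 1 ≤ K) (hε : 0 ≤ ε)
    (hw : ∀ t ∈ Set.Icc a b, ‖w t‖ ≤ K * ‖u t‖ + ε)
    (ha0 : u a = 0) (ha0' : u' a = 0) :
    ∀ x ∈ Set.Icc a b, ‖u x‖ ≤ ε / K * (Real.exp (K * (b - a)) - 1) ∧
      ‖u' x‖ ≤ ε / K * (Real.exp (K * (b - a)) - 1) := by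
  have hK0 : (0:ℝ) < K := lt_of_lt_of_le one_pos hK
  set f : ℝ → ℂ × ℂ := fun t => (u t, u' t) with hfdef
  have hf : ∀ t, HasDerivAt f (u' t, w t) t := fun t => (hu t).prodMk (hu' t)
  have key : ∀ x ∈ Set.Icc a b, ‖f x‖ ≤ gronwallBound 0 K ε (x - a) := by
    apply norm_le_gronwallBound_of_norm_deriv_right_le
    · exact fun x _ => ((hf x).continuousAt).continuousWithinAt
    · exact fun x _ => ((hf x).hasDerivWithinAt)
    · simp [hfdef, ha0, ha0', Prod.norm_def]
    · intro x hx
      have hx' : x ∈ Set.Icc a b := Set.mem_of_mem_of_subset hx Set.Ico_subset_Icc_self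
      have h1 : ‖u' x‖ ≤ K * max ‖u x‖ ‖u' x‖ + ε := by
        calc ‖u' x‖ ≤ max ‖u x‖ ‖u' x‖ := le_max_right _ _
        _ ≤ K * max ‖u x‖ ‖u' x‖ := le_mul_of_one_le_left (le_max_of_le_right (norm_nonneg _)) hK
        _ ≤ K * max ‖u x‖ ‖u' x‖ + ε := le_add_of_nonneg_right hε
      have h2 : ‖w x‖ ≤ K * max ‖u x‖ ‖u' x‖ + ε := by
        refine le_trans (hw x hx') ?_
        have : K * ‖u x‖ ≤ K * max ‖u x‖ ‖u' x‖ :=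
          mul_le_mul_of_nonneg_left (le_max_left _ _) hK0.le
        linarith
      simpa [Prod.norm_def] using max_le h1 h2
  intro x hx
  have hb : gronwallBound 0 K ε (x - a) ≤ ε / K * (Real.exp (K * (b - a)) - 1) := by
    rw [gronwallBound_of_K_ne_0 hK0.ne']
    have h1 : Real.exp (K * (x - a)) ≤ Real.exp (K * (b - a)) :=
      Real.exp_le_exp.2 (mul_le_mul_of_nonneg_left (by linarith [hx.2]) hK0.le)
    have h2 : (0:ℝ) ≤ ε / K := div_nonneg hε hK0.le
    nlinarith
  have := le_trans (key x hx) hb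
  rw [Prod.norm_def] at this
  exact ⟨le_trans (le_max_left _ _) this, le_trans (le_max_right _ _) this⟩

/-- Reversed version: data at `b`. -/
lemma ode_pair_bound_rev (a b : ℝ) (u u' w : ℝ → ℂ)
    (hu : ∀ t, HasDerivAt u (u' t) t)
    (hu' : ∀ t, HasDerivAt u' (w t) t)
    (K ε : ℝ) (hK : 1 ≤ K) (hε : 0 ≤ ε)
    (hw : ∀ t ∈ Set.Icc a b, ‖w t‖ ≤ K * ‖u t‖ + ε)
    (hb0 : u b = 0) (hb0' : u' b = 0) :
    ∀ x ∈ Set.Icc a b, ‖u x‖ ≤ ε / K * (Real.exp (K * (b - a)) - 1) ∧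
      ‖u' x‖ ≤ ε / K * (Real.exp (K * (b - a)) - 1) := by
  intro x hx
  have hinner : ∀ t : ℝ, HasDerivAt (fun s : ℝ => a + b - s) (-1 : ℝ) t := by
    intro t
    simpa using (hasDerivAt_id t).const_sub (a + b)
  set U : ℝ → ℂ := fun t => u (a + b - t) with hU
  set U' : ℝ → ℂ := fun t => -(u' (a + b - t)) with hU'
  set W : ℝ → ℂ := fun t => w (a + b - t) with hW
  have hU1 : ∀ t, HasDerivAt U (U' t) t := by
    intro t
    have := (hu (a + b - t)).scomp t (hinner t)
    simpa [hU, hU', Function.comp_def, mul_comm] using this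
  have hU2 : ∀ t, HasDerivAt U' (W t) t := by
    intro t
    have h1 := (hu' (a + b - t)).scomp t (hinner t)
    have h2 := h1.neg
    simpa [hU', hW, Function.comp_def, Pi.neg_def] using h2
  have hWb : ∀ t ∈ Set.Icc a b, ‖W t‖ ≤ K * ‖U t‖ + ε := by
    intro t ht
    have ht' : a + b - t ∈ Set.Icc a b := by
      constructor <;> [linarith [ht.2]; linarith [ht.1]]
    simpa [hW, hU] using hw _ ht'
  have hUa : U a = 0 := by simpa [hU] using hb0
  have hUa' : U' a = 0 := by simp [hU', hb0']
  have hx' : a + b - x ∈ Set.Icc a b := by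
    constructor <;> [linarith [hx.2]; linarith [hx.1]]
  have := ode_pair_bound a b U U' W hU1 hU2 K ε hK hε hWb hUa hUa' (a + b - x) hx'
  constructor
  · simpa [hU] using this.1
  · simpa [hU'] using this.2

set_option maxHeartbeats 2000000 in
/-- If `f0'(d) = 0`, then `f0(d) ≠ 0`, `f1'(d) = 1/f0(d)`,
`f0(d) + f1'(d) ≠ 0`, and as `ω → 0` (`ω ≠ 0`),
`a(ω) = −(1/2)·(f0(d) + f1'(d)) + O(ω)`. -/
theorem transmission_coefficient_neumann_case
    (d : ℝ) (hd : 0 < d) (q : ℝ → ℝ) (hq : Continuous q)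
    (hqsupp : ∀ x : ℝ, x ∉ Set.Icc 0 d → q x = 0)
    (y1 y1' y2 y2' : ℂ → ℝ → ℂ)
    (hy1 : ∀ ω : ℂ, ω ≠ 0 → ∀ x, HasDerivAt (y1 ω) (y1' ω x) x)
    (hy1'' : ∀ ω : ℂ, ω ≠ 0 → ∀ x, HasDerivAt (y1' ω) (((q x : ℂ) - ω ^ 2) * y1 ω x) x)
    (hy1d : ∀ ω : ℂ, ω ≠ 0 → y1 ω d = Complex.exp (Complex.I * ω * d))
    (hy1d' : ∀ ω : ℂ, ω ≠ 0 → y1' ω d = Complex.I * ω * Complex.exp (Complex.I * ω * d))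
    (hy2 : ∀ ω : ℂ, ω ≠ 0 → ∀ x, HasDerivAt (y2 ω) (y2' ω x) x)
    (hy2'' : ∀ ω : ℂ, ω ≠ 0 → ∀ x, HasDerivAt (y2' ω) (((q x : ℂ) - ω ^ 2) * y2 ω x) x)
    (hy20 : ∀ ω : ℂ, ω ≠ 0 → y2 ω 0 = 1)
    (hy20' : ∀ ω : ℂ, ω ≠ 0 → y2' ω 0 = -Complex.I * ω)
    (a : ℂ → ℂ)
    (ha : ∀ ω : ℂ, ω ≠ 0 →
      a ω = -(1 / (2 * Complex.I * ω)) * (y1' ω 0 * y2 ω 0 - y1 ω 0 * y2' ω 0))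
    (f0 f0' f1 f1' : ℝ → ℂ)
    (hf0 : ∀ x, HasDerivAt f0 (f0' x) x)
    (hf0' : ∀ x, HasDerivAt f0' ((q x : ℂ) * f0 x) x)
    (hf00 : f0 0 = 1) (hf00' : f0' 0 = 0)
    (hf1 : ∀ x, HasDerivAt f1 (f1' x) x)
    (hf1' : ∀ x, HasDerivAt f1' ((q x : ℂ) * f1 x) x)
    (hf10 : f1 0 = 0) (hf10' : f1' 0 = 1)
    (hf0d : f0' d = 0) :
    f0 d ≠ 0 ∧ f1' d = 1 / f0 d ∧ f0 d + f1' d ≠ 0 ∧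
    (fun ω : ℂ => a ω - (-(1 / 2) * (f0 d + f1' d)))
      =O[𝓝[≠] 0] (fun ω : ℂ => ω) := by
  -- bound on q
  obtain ⟨Q0, hQ0⟩ := (isCompact_Icc (a := (0:ℝ)) (b := d)).exists_bound_of_continuousOn
    hq.continuousOn
  set Q : ℝ := max Q0 0 with hQdef
  have hQnn : 0 ≤ Q := le_max_right _ _
  have hQ : ∀ x : ℝ, |q x| ≤ Q := by
    intro x
    by_cases hx : x ∈ Set.Icc 0 d
    · exact le_trans (hQ0 x hx) (le_max_left _ _)
    · simp [hqsupp x hx, hQnn]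
  -- Wronskian is constant = 1
  have hWd : ∀ x, HasDerivAt (fun x => f0 x * f1' x - f1 x * f0' x) 0 x := by
    intro x
    have h := ((hf0 x).mul (hf1' x)).sub ((hf1 x).mul (hf0' x))
    convert h using 1
    · rfl
    · rfl
    ring
  have hWconst : ∀ x : ℝ, f0 x * f1' x - f1 x * f0' x = 1 := by
    have hcst : ∀ x y : ℝ, (fun x => f0 x * f1' x - f1 x * f0' x) x
        = (fun x => f0 x * f1' x - f1 x * f0' x) y := by
      have hdiff : Differentiable ℝ (fun x => f0 x * f1' x - f1 x * f0' x) :=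
        fun x => (hWd x).differentiableAt
      have hderiv : ∀ x, deriv (fun x => f0 x * f1' x - f1 x * f0' x) x = 0 :=
        fun x => (hWd x).deriv
      intro x y
      exact is_const_of_deriv_eq_zero hdiff hderiv x y
    intro x
    have := hcst x 0
    simpa [hf00, hf00', hf10, hf10'] using this
  have hWd1 : f0 d * f1' d = 1 := by
    have := hWconst d
    simpa [hf0d] using this
  have hc : f0 d ≠ 0 := left_ne_zero_of_mul_eq_one hWd1
  have hf1d : f1' d = 1 / f0 d := by
    field_simp
    linear_combination hWd1
  -- realness of f0 d via uniqueness (Gronwall with ε = 0)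
  have hreal : (starRingEnd ℂ) (f0 d) = f0 d := by
    set D : ℝ → ℂ := fun x => f0 x - (starRingEnd ℂ) (f0 x) with hDdef
    set D' : ℝ → ℂ := fun x => f0' x - (starRingEnd ℂ) (f0' x) with hD'def
    have hD1 : ∀ t, HasDerivAt D (D' t) t := fun t => (hf0 t).sub (hf0 t).star
    have hD2 : ∀ t, HasDerivAt D' ((q t : ℂ) * D t) t := by
      intro t
      have h := (hf0' t).sub (hf0' t).star
      convert h using 1
      · rfl
      · rfl
      simp [hDdef, map_mul, Complex.conj_ofReal]
      ring
    have hbnd : ∀ t ∈ Set.Icc 0 d, ‖(q t : ℂ) * D t‖ ≤ (Q + 1) * ‖D t‖ + 0 := by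
      intro t ht
      rw [norm_mul, add_zero, Complex.norm_real, Real.norm_eq_abs]
      have := hQ t
      have h0 : (0:ℝ) ≤ ‖D t‖ := norm_nonneg _
      nlinarith [abs_nonneg (q t)]
    have hD0 : D 0 = 0 := by simp [hDdef, hf00]
    have hD0' : D' 0 = 0 := by simp [hD'def, hf00']
    have := (ode_pair_bound 0 d D D' (fun t => (q t : ℂ) * D t) hD1 hD2 (Q + 1) 0
      (by linarith) le_rfl hbnd hD0 hD0' d (by constructor <;> linarith)).1
    have hzero : D d = 0 := by
      have h0 : (0:ℝ) / (Q+1) * (Real.exp ((Q+1)*(d-0)) - 1) = 0 := by ring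
      rw [h0] at this
      simpa using le_antisymm this (norm_nonneg _)
    have := sub_eq_zero.1 (by simpa [hDdef] using hzero)
    exact this.symm
  -- f0 d is real with nonzero real part
  obtain ⟨r, hr⟩ : ∃ r : ℝ, f0 d = (r : ℂ) := ⟨(f0 d).re, (Complex.conj_eq_iff_re.1 hreal).symm⟩
  have hrne : r ≠ 0 := by
    intro h; apply hc; rw [hr, h]; simp
  have hsum : f0 d + f1' d ≠ 0 := by
    rw [hf1d, hr]
    intro h
    have hrC : (r:ℂ) ≠ 0 := by exact_mod_cast hrne
    have h3 : (r:ℂ)^2 + 1 = 0 := by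
      field_simp [hrC] at h
      linear_combination h
    have h4 : r^2 + 1 = 0 := by exact_mod_cast h3
    nlinarith
  refine ⟨hc, hf1d, hsum, ?_⟩
  -- continuity bounds for f0, f1 on [0, d]
  have hf0cont : Continuous f0 := by
    rw [continuous_iff_continuousAt]; exact fun x => (hf0 x).continuousAt
  have hf1cont : Continuous f1 := by
    rw [continuous_iff_continuousAt]; exact fun x => (hf1 x).continuousAt
  obtain ⟨B0', hB0'⟩ := (isCompact_Icc (a := (0:ℝ)) (b := d)).exists_bound_of_continuousOn
    hf0cont.continuousOn
  obtain ⟨B1', hB1'⟩ := (isCompact_Icc (a := (0:ℝ)) (b := d)).exists_bound_of_continuousOn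
    hf1cont.continuousOn
  set B0 : ℝ := max B0' 0 with hB0def
  set B1 : ℝ := max B1' 0 with hB1def
  have hB0 : ∀ x ∈ Set.Icc 0 d, ‖f0 x‖ ≤ B0 := fun x hx => le_trans (hB0' x hx) (le_max_left _ _)
  have hB1 : ∀ x ∈ Set.Icc 0 d, ‖f1 x‖ ≤ B1 := fun x hx => le_trans (hB1' x hx) (le_max_left _ _)
  have hB0nn : 0 ≤ B0 := le_max_right _ _
  have hB1nn : 0 ≤ B1 := le_max_right _ _
  have hcpos : 0 < ‖f0 d‖ := norm_pos_iff.2 hc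
  set K : ℝ := Q + 2 with hKdef
  have hKge : (1:ℝ) ≤ K := by simp only [hKdef]; linarith
  have hKpos : (0:ℝ) < K := lt_of_lt_of_le one_pos hKge
  set M : ℝ := Real.exp d * (B0 * ‖f1' d‖ + (‖f0 d‖ * B1 + ‖f1 d‖ * B0)) with hMdef
  have hMnn : 0 ≤ M := by positivity
  set C2 : ℝ := M / K * (Real.exp (K * d) - 1) with hC2def
  have hC2nn : 0 ≤ C2 := by
    have h1 : (1:ℝ) ≤ Real.exp (K * d) := Real.one_le_exp (by positivity)
    have : 0 ≤ M / K := by positivity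
    nlinarith
  set δ : ℝ := min 1 d⁻¹ with hδdef
  have hδpos : 0 < δ := lt_min one_pos (by positivity)
  set Ctot : ℝ := d * ‖f0 d + f1' d‖ + Real.exp d * ‖f1 d‖ / 2 + C2 / 2 + C2 / 2 with hCtotdef
  have hmain : ∀ ω : ℂ, ω ≠ 0 → ‖ω‖ ≤ δ →
      ‖a ω - (-(1 / 2) * (f0 d + f1' d))‖ ≤ Ctot * ‖ω‖ := by
    intro ω hω hωδ
    have hω1 : ‖ω‖ ≤ 1 := le_trans hωδ (min_le_left _ _)
    have hωd : ‖ω‖ * d ≤ 1 := by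
      have h1 : ‖ω‖ ≤ d⁻¹ := le_trans hωδ (min_le_right _ _)
      calc ‖ω‖ * d ≤ d⁻¹ * d := mul_le_mul_of_nonneg_right h1 hd.le
      _ = 1 := inv_mul_cancel₀ hd.ne'
    set e : ℂ := Complex.exp (I * ω * d) with hedef
    have hednorm : ‖e‖ ≤ Real.exp d := by
      rw [hedef, Complex.norm_exp]
      apply Real.exp_le_exp.2
      have hre : (I * ω * (d:ℂ)).re = -ω.im * d := by
        simp [Complex.mul_re, Complex.mul_im]
      rw [hre]
      have h2 : |ω.im| ≤ ‖ω‖ := by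
        exact Complex.abs_im_le_norm ω
      have h3 := abs_le.1 h2
      nlinarith
    set g : ℝ → ℂ := fun x => e * (f0 x * f1' d + I * ω * (f0 d * f1 x - f1 d * f0 x))
      with hgdef
    set g' : ℝ → ℂ := fun x => e * (f0' x * f1' d + I * ω * (f0 d * f1' x - f1 d * f0' x))
      with hg'def
    have hg1 : ∀ x, HasDerivAt g (g' x) x := fun x =>
      (((hf0 x).mul_const (f1' d)).add
        ((((hf1 x).const_mul (f0 d)).sub ((hf0 x).const_mul (f1 d))).const_mul
          (I * ω))).const_mul e
    have hg2 : ∀ x, HasDerivAt g' ((q x : ℂ) * g x) x := by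
      intro x
      have h := (((hf0' x).mul_const (f1' d)).add
        ((((hf1' x).const_mul (f0 d)).sub ((hf0' x).const_mul (f1 d))).const_mul
          (I * ω))).const_mul e
      convert h using 1
      · rfl
      · rfl
      simp only [hgdef]
      ring
    set E : ℝ → ℂ := fun x => y1 ω x - g x with hEdef
    set E' : ℝ → ℂ := fun x => y1' ω x - g' x with hE'def
    have hE1 : ∀ x, HasDerivAt E (E' x) x := fun x => (hy1 ω hω x).sub (hg1 x)
    set w : ℝ → ℂ := fun x => ((q x : ℂ) - ω ^ 2) * E x - ω ^ 2 * g x with hwdef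
    have hE2 : ∀ x, HasDerivAt E' (w x) x := by
      intro x
      have h := (hy1'' ω hω x).sub (hg2 x)
      convert h using 1
      · rfl
      · rfl
      simp only [hwdef, hEdef]
      ring
    have hgd : g d = e := by
      simp only [hgdef]
      rw [hWd1]
      ring
    have hgd' : g' d = I * ω * e := by
      simp only [hg'def, hf0d]
      rw [zero_mul, mul_zero]
      rw [hWd1]
      ring
    have hEd : E d = 0 := by
      simp only [hEdef]
      rw [hy1d ω hω, hgd, hedef, sub_self]
    have hEd' : E' d = 0 := by
      simp only [hE'def]
      rw [hy1d' ω hω, hgd', hedef, sub_self]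
    have hgb : ∀ t ∈ Set.Icc 0 d, ‖g t‖ ≤ M := by
      intro t ht
      have h1 : ‖f0 t * f1' d + I * ω * (f0 d * f1 t - f1 d * f0 t)‖ ≤
          B0 * ‖f1' d‖ + (‖f0 d‖ * B1 + ‖f1 d‖ * B0) := by
        calc ‖f0 t * f1' d + I * ω * (f0 d * f1 t - f1 d * f0 t)‖
            ≤ ‖f0 t * f1' d‖ + ‖I * ω * (f0 d * f1 t - f1 d * f0 t)‖ := norm_add_le _ _
        _ = ‖f0 t‖ * ‖f1' d‖ + ‖ω‖ * ‖f0 d * f1 t - f1 d * f0 t‖ := by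
            rw [norm_mul, norm_mul, norm_mul, Complex.norm_I, one_mul]
        _ ≤ B0 * ‖f1' d‖ + 1 * (‖f0 d‖ * B1 + ‖f1 d‖ * B0) := by
            have h2 : ‖f0 d * f1 t - f1 d * f0 t‖ ≤ ‖f0 d‖ * B1 + ‖f1 d‖ * B0 := by
              calc ‖f0 d * f1 t - f1 d * f0 t‖ ≤ ‖f0 d * f1 t‖ + ‖f1 d * f0 t‖ :=
                    norm_sub_le _ _
              _ = ‖f0 d‖ * ‖f1 t‖ + ‖f1 d‖ * ‖f0 t‖ := by rw [norm_mul, norm_mul]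
              _ ≤ ‖f0 d‖ * B1 + ‖f1 d‖ * B0 := by
                  have := hB0 t ht; have := hB1 t ht
                  gcongr
            have h3 : ‖ω‖ * ‖f0 d * f1 t - f1 d * f0 t‖ ≤ 1 * (‖f0 d‖ * B1 + ‖f1 d‖ * B0) :=
              mul_le_mul hω1 h2 (norm_nonneg _) one_pos.le
            have h4 : ‖f0 t‖ * ‖f1' d‖ ≤ B0 * ‖f1' d‖ :=
              mul_le_mul_of_nonneg_right (hB0 t ht) (norm_nonneg _)
            linarith
        _ = B0 * ‖f1' d‖ + (‖f0 d‖ * B1 + ‖f1 d‖ * B0) := by ring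
      calc ‖g t‖ = ‖e‖ * ‖f0 t * f1' d + I * ω * (f0 d * f1 t - f1 d * f0 t)‖ := by
            rw [hgdef]; exact norm_mul _ _
      _ ≤ Real.exp d * (B0 * ‖f1' d‖ + (‖f0 d‖ * B1 + ‖f1 d‖ * B0)) :=
          mul_le_mul hednorm h1 (norm_nonneg _) (Real.exp_pos _).le
      _ = M := hMdef.symm
    have hwb : ∀ t ∈ Set.Icc 0 d, ‖w t‖ ≤ K * ‖E t‖ + ‖ω‖ ^ 2 * M := by
      intro t ht
      calc ‖w t‖ ≤ ‖((q t : ℂ) - ω ^ 2) * E t‖ + ‖ω ^ 2 * g t‖ := norm_sub_le _ _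
      _ = ‖(q t : ℂ) - ω ^ 2‖ * ‖E t‖ + ‖ω‖ ^ 2 * ‖g t‖ := by
          rw [norm_mul, norm_mul, norm_pow]
      _ ≤ K * ‖E t‖ + ‖ω‖ ^ 2 * M := by
          have h1 : ‖(q t : ℂ) - ω ^ 2‖ ≤ K := by
            calc ‖(q t : ℂ) - ω ^ 2‖ ≤ ‖(q t : ℂ)‖ + ‖ω ^ 2‖ := norm_sub_le _ _
            _ = |q t| + ‖ω‖ ^ 2 := by
                rw [Complex.norm_real, Real.norm_eq_abs, norm_pow]
            _ ≤ K := by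
                have := hQ t
                have h2 : ‖ω‖ ^ 2 ≤ 1 := by nlinarith [norm_nonneg ω]
                simp only [hKdef]; linarith
          have h2 := mul_le_mul_of_nonneg_right h1 (norm_nonneg (E t))
          have h3 := mul_le_mul_of_nonneg_left (hgb t ht) (sq_nonneg ‖ω‖)
          linarith
    have hεnn : 0 ≤ ‖ω‖ ^ 2 * M := by positivity
    have hbd := ode_pair_bound_rev 0 d E E' w hE1 hE2 K (‖ω‖ ^ 2 * M) hKge hεnn hwb hEd hEd'
      0 ⟨le_rfl, hd.le⟩
    have hCeq : ‖ω‖ ^ 2 * M / K * (Real.exp (K * (d - 0)) - 1) = C2 * ‖ω‖ ^ 2 := by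
      rw [sub_zero, hC2def]; ring
    have hE0 : ‖E 0‖ ≤ C2 * ‖ω‖ ^ 2 := by rw [← hCeq]; exact hbd.1
    have hE0' : ‖E' 0‖ ≤ C2 * ‖ω‖ ^ 2 := by rw [← hCeq]; exact hbd.2
    -- key algebraic identity
    have hkey : a ω - (-(1 / 2) * (f0 d + f1' d)) =
        (1 - e) * ((f0 d + f1' d) / 2) + e * (I * ω * f1 d) / 2
          - E' 0 / (2 * I * ω) - E 0 / 2 := by
      rw [ha ω hω, hy20 ω hω, hy20' ω hω]
      have hg0 : g 0 = e * (f1' d - I * ω * f1 d) := by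
        simp only [hgdef, hf00, hf10]; ring
      have hg0' : g' 0 = e * (I * ω * f0 d) := by
        simp only [hg'def, hf00', hf10']; ring
      simp only [hEdef, hE'def]
      rw [hg0, hg0']
      have h2 : (2 * I * ω : ℂ) ≠ 0 := by simp [hω, Complex.I_ne_zero]
      apply mul_left_cancel₀ h2
      field_simp [h2]
      ring
    have hωn : (0:ℝ) < ‖ω‖ := norm_pos_iff.2 hω
    have t1 : ‖(1 - e) * ((f0 d + f1' d) / 2)‖ ≤ d * ‖f0 d + f1' d‖ * ‖ω‖ := by
      have h1 : ‖1 - e‖ ≤ 2 * (‖ω‖ * d) := by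
        rw [norm_sub_rev, hedef]
        have h2 : ‖I * ω * (d:ℂ)‖ = ‖ω‖ * d := by
          rw [norm_mul, norm_mul, Complex.norm_I, one_mul, Complex.norm_real,
            Real.norm_eq_abs, _root_.abs_of_nonneg hd.le]
        have h3 : ‖I * ω * (d:ℂ)‖ ≤ 1 := by
          rw [h2]; exact hωd
        have h4 := Complex.norm_exp_sub_one_le h3
        rw [h2] at h4
        exact h4
      calc ‖(1 - e) * ((f0 d + f1' d) / 2)‖ = ‖1 - e‖ * (‖f0 d + f1' d‖ / 2) := by
            rw [norm_mul, norm_div]; norm_num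
      _ ≤ 2 * (‖ω‖ * d) * (‖f0 d + f1' d‖ / 2) :=
          mul_le_mul_of_nonneg_right h1 (by positivity)
      _ = d * ‖f0 d + f1' d‖ * ‖ω‖ := by ring
    have t2 : ‖e * (I * ω * f1 d) / 2‖ ≤ Real.exp d * ‖f1 d‖ / 2 * ‖ω‖ := by
      rw [norm_div, norm_mul, norm_mul, norm_mul, Complex.norm_I, one_mul]
      have : ‖(2:ℂ)‖ = 2 := by norm_num
      rw [this]
      have h1 : ‖e‖ * (‖ω‖ * ‖f1 d‖) ≤ Real.exp d * (‖ω‖ * ‖f1 d‖) :=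
        mul_le_mul_of_nonneg_right hednorm (by positivity)
      calc ‖e‖ * (‖ω‖ * ‖f1 d‖) / 2 ≤ Real.exp d * (‖ω‖ * ‖f1 d‖) / 2 := by linarith
      _ = Real.exp d * ‖f1 d‖ / 2 * ‖ω‖ := by ring
    have t3 : ‖E' 0 / (2 * I * ω)‖ ≤ C2 / 2 * ‖ω‖ := by
      rw [norm_div]
      have h1 : ‖2 * I * ω‖ = 2 * ‖ω‖ := by
        simp [norm_mul, Complex.norm_I]
      rw [h1]
      have h2 : ‖E' 0‖ / (2 * ‖ω‖) ≤ C2 * ‖ω‖ ^ 2 / (2 * ‖ω‖) := by gcongr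
      calc ‖E' 0‖ / (2 * ‖ω‖) ≤ C2 * ‖ω‖ ^ 2 / (2 * ‖ω‖) := h2
      _ = C2 / 2 * ‖ω‖ := by
          rw [div_eq_iff (mul_pos two_pos hωn).ne']
          ring
    have t4 : ‖E 0 / 2‖ ≤ C2 / 2 * ‖ω‖ := by
      rw [norm_div]
      have : ‖(2:ℂ)‖ = 2 := by norm_num
      rw [this]
      have h2 : ‖ω‖ ^ 2 ≤ ‖ω‖ := by nlinarith
      nlinarith
    rw [hkey]
    calc ‖(1 - e) * ((f0 d + f1' d) / 2) + e * (I * ω * f1 d) / 2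
          - E' 0 / (2 * I * ω) - E 0 / 2‖
        ≤ ‖(1 - e) * ((f0 d + f1' d) / 2) + e * (I * ω * f1 d) / 2
          - E' 0 / (2 * I * ω)‖ + ‖E 0 / 2‖ := norm_sub_le _ _
    _ ≤ ‖(1 - e) * ((f0 d + f1' d) / 2) + e * (I * ω * f1 d) / 2‖
          + ‖E' 0 / (2 * I * ω)‖ + ‖E 0 / 2‖ := by
        have := norm_sub_le ((1 - e) * ((f0 d + f1' d) / 2) + e * (I * ω * f1 d) / 2)
          (E' 0 / (2 * I * ω))
        linarith
    _ ≤ ‖(1 - e) * ((f0 d + f1' d) / 2)‖ + ‖e * (I * ω * f1 d) / 2‖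
          + ‖E' 0 / (2 * I * ω)‖ + ‖E 0 / 2‖ := by
        have := norm_add_le ((1 - e) * ((f0 d + f1' d) / 2)) (e * (I * ω * f1 d) / 2)
        linarith
    _ ≤ d * ‖f0 d + f1' d‖ * ‖ω‖ + Real.exp d * ‖f1 d‖ / 2 * ‖ω‖
          + C2 / 2 * ‖ω‖ + C2 / 2 * ‖ω‖ := by linarith
    _ = Ctot * ‖ω‖ := by rw [hCtotdef]; ring
  rw [Asymptotics.isBigO_iff]
  refine ⟨Ctot, ?_⟩
  have h1 : ∀ᶠ ω : ℂ in 𝓝[≠] 0, ‖ω‖ ≤ δ := by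
    have h2 : ∀ᶠ ω : ℂ in 𝓝 0, ‖ω‖ ≤ δ := by
      filter_upwards [Metric.closedBall_mem_nhds (0:ℂ) hδpos] with x hx
      simpa [Metric.mem_closedBall, dist_zero_right] using hx
    exact h2.filter_mono nhdsWithin_le_nhds
  filter_upwards [h1, self_mem_nhdsWithin] with ω hωδ hωne
  exact hmain ω hωne hωδ
end

section
/- If f0'(d) = 0, then for every x ∈ ℝ: lim_{ω → 0⁺} y1(x,ω)/(√(2π)·a(ω)) = −√(2/π)·f0(x)/(f0(d)² + 1) and lim_{ω → 0⁺} y2(x,ω)/(√(2π)·a(ω)) = −√(2/π)·f0(x)·f0(d)/(f0(d)² + 1), where the limits are taken over real ω > 0. -/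
open Complex Filter Topology Asymptotics

lemma gronwallBound_smul (c δ K ε x : ℝ) :
    gronwallBound (c*δ) K (c*ε) x = c * gronwallBound δ K ε x := by
  unfold gronwallBound; split <;> ring

lemma pair_gronwall_fwd {y y' f : ℝ → ℂ}
    (hy : ∀ t, HasDerivAt y (y' t) t) (hy' : ∀ t, HasDerivAt y' (f t) t)
    {K ε : ℝ} (hK : 1 ≤ K) (hε : 0 ≤ ε) {t0 x : ℝ} (hle : t0 ≤ x)
    (hbd : ∀ t ∈ Set.Icc t0 x, ‖f t‖ ≤ K * max ‖y t‖ ‖y' t‖ + ε) :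
    max ‖y x‖ ‖y' x‖ ≤ gronwallBound (max ‖y t0‖ ‖y' t0‖) K ε (x - t0) := by
  set Z : ℝ → ℂ × ℂ := fun t => (y t, y' t) with hZ
  have hZd : ∀ t, HasDerivAt Z (y' t, f t) t := fun t => (hy t).prodMk (hy' t)
  have hnorm : ∀ t, ‖Z t‖ = max ‖y t‖ ‖y' t‖ := fun t => rfl
  have := norm_le_gronwallBound_of_norm_deriv_right_le (f := Z) (f' := fun t => (y' t, f t))
    (a := t0) (b := x) (δ := max ‖y t0‖ ‖y' t0‖) (K := K) (ε := ε)
    (fun t _ => ((hZd t).continuousAt).continuousWithinAt)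
    (fun t _ => (hZd t).hasDerivWithinAt)
    (le_of_eq (hnorm t0))
    ?_ x ⟨hle, le_refl x⟩
  · rw [hnorm x] at this; exact this
  · intro t ht
    have h1 : ‖((y' t, f t) : ℂ × ℂ)‖ = max ‖y' t‖ ‖f t‖ := rfl
    rw [h1, hnorm t]
    have h2 : ‖y' t‖ ≤ K * max ‖y t‖ ‖y' t‖ + ε := by
      have : ‖y' t‖ ≤ max ‖y t‖ ‖y' t‖ := le_max_right _ _
      nlinarith [norm_nonneg (y t), norm_nonneg (y' t), le_max_left ‖y t‖ ‖y' t‖]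
    exact max_le h2 (hbd t (Set.mem_Icc.mpr ⟨ht.1, ht.2.le⟩))

lemma pair_gronwall_s9 {y y' f : ℝ → ℂ}
    (hy : ∀ t, HasDerivAt y (y' t) t) (hy' : ∀ t, HasDerivAt y' (f t) t)
    {K ε : ℝ} (hK : 1 ≤ K) (hε : 0 ≤ ε) (t0 x : ℝ)
    (hbd : ∀ t ∈ Set.uIcc t0 x, ‖f t‖ ≤ K * max ‖y t‖ ‖y' t‖ + ε) :
    max ‖y x‖ ‖y' x‖ ≤ gronwallBound (max ‖y t0‖ ‖y' t0‖) K ε |x - t0| := by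
  rcases le_total t0 x with h | h
  · rw [_root_.abs_of_nonneg (by linarith : (0:ℝ) ≤ x - t0)]
    exact pair_gronwall_fwd hy hy' hK hε h
      (fun t ht => hbd t (by rw [Set.uIcc_of_le h]; exact ht))
  · -- reflect
    rw [abs_of_nonpos (by linarith : x - t0 ≤ 0), neg_sub]
    set u := t0 + x with hu
    have hyr : ∀ t, HasDerivAt (fun s => y (u - s)) (-(y' (u - t))) t := by
      intro t
      have h2 : HasDerivAt (fun s : ℝ => u - s) (-1) t := by
        simpa using (hasDerivAt_id' t).const_sub u
      have := HasDerivAt.scomp t (by exact hy (u - t)) h2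
      exact (by simpa using this : HasDerivAt (y ∘ fun s => u - s) (-(y' (u - t))) t)
    have hyr' : ∀ t, HasDerivAt (fun s => -(y' (u - s))) (f (u - t)) t := by
      intro t
      have h2 : HasDerivAt (fun s : ℝ => u - s) (-1) t := by
        simpa using (hasDerivAt_id' t).const_sub u
      have := (HasDerivAt.scomp t (by exact hy' (u - t)) h2).neg
      exact (by simpa using this : HasDerivAt (-y' ∘ fun s => u - s) (f (u - t)) t)
    have key := pair_gronwall_fwd (y := fun s => y (u - s)) (y' := fun s => -(y' (u - s)))
      (f := fun s => f (u - s)) hyr hyr' hK hε (t0 := x) (x := t0) h ?_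
    · simp only [norm_neg] at key
      have e1 : u - t0 = x := by rw [hu]; ring
      have e2 : u - x = t0 := by rw [hu]; ring
      rw [e1, e2] at key
      exact key
    · intro t ht
      have hmem : u - t ∈ Set.uIcc t0 x := by
        rw [Set.uIcc_of_ge h]
        constructor
        · simp only [hu]; linarith [ht.2]
        · simp only [hu]; linarith [ht.1]
      have := hbd (u - t) hmem
      simpa [norm_neg] using this

lemma gronwallBound_le_of_le {δ δ' K ε ε' x : ℝ} (hδ : δ ≤ δ') (hε : ε ≤ ε')
    (hx : 0 ≤ x) (hK : 0 ≤ K) : gronwallBound δ K ε x ≤ gronwallBound δ' K ε' x := by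
  unfold gronwallBound
  split
  · nlinarith
  · rename_i hKne
    have hKpos : 0 < K := lt_of_le_of_ne hK (Ne.symm hKne)
    have h1 : 1 ≤ Real.exp (K * x) := Real.one_le_exp (by positivity)
    have h2 : ε / K ≤ ε' / K := by gcongr
    nlinarith

lemma sol_bound {Q : ℝ → ℂ} {M K : ℝ} (hM : ∀ t, ‖Q t‖ ≤ M) (hKM : M + 1 ≤ K) (hK1 : 1 ≤ K)
    {ω : ℂ} (hω : ‖ω‖ ≤ 1) {y y' : ℝ → ℂ}
    (hy : ∀ t, HasDerivAt y (y' t) t) (hy' : ∀ t, HasDerivAt y' ((Q t - ω^2) * y t) t)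
    (t0 : ℝ) (t : ℝ) :
    max ‖y t‖ ‖y' t‖ ≤ (max ‖y t0‖ ‖y' t0‖) * Real.exp (K * |t - t0|) := by
  have h := pair_gronwall_s9 hy hy' hK1 (le_refl (0:ℝ)) t0 t ?_
  · rwa [gronwallBound_ε0] at h
  · intro s _
    have h1 : ‖(Q s - ω^2) * y s‖ ≤ (M + 1) * ‖y s‖ := by
      rw [norm_mul]
      have : ‖Q s - ω^2‖ ≤ M + 1 := by
        calc ‖Q s - ω^2‖ ≤ ‖Q s‖ + ‖ω^2‖ := norm_sub_le _ _
        _ ≤ M + 1 := by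
            have := hM s
            have h2 : ‖ω^2‖ ≤ 1 := by
              rw [norm_pow]
              exact pow_le_one₀ (norm_nonneg _) hω
            linarith
      exact mul_le_mul_of_nonneg_right this (norm_nonneg _)
    have h2 : ‖y s‖ ≤ max ‖y s‖ ‖y' s‖ := le_max_left _ _
    have hM0 : 0 ≤ M := le_trans (norm_nonneg _) (hM 0)
    nlinarith [norm_nonneg (y s), norm_nonneg (y' s), le_max_left ‖y s‖ ‖y' s‖]

lemma sol_diff_bound {Q : ℝ → ℂ} {M K B : ℝ} (hM : ∀ t, ‖Q t‖ ≤ M) (hKM : M + 1 ≤ K)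
    (hK1 : 1 ≤ K)
    {ω : ℂ} {y y' z z' : ℝ → ℂ}
    (hy : ∀ t, HasDerivAt y (y' t) t) (hy' : ∀ t, HasDerivAt y' ((Q t - ω^2) * y t) t)
    (hz : ∀ t, HasDerivAt z (z' t) t) (hz' : ∀ t, HasDerivAt z' (Q t * z t) t)
    (t0 x : ℝ) (hB : ∀ s ∈ Set.uIcc t0 x, ‖y s‖ ≤ B) :
    ‖y x - z x‖ ≤ gronwallBound (max ‖y t0 - z t0‖ ‖y' t0 - z' t0‖) K (‖ω‖^2 * B) |x - t0| := by
  have hε : 0 ≤ ‖ω‖^2 * B := by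
    obtain ⟨s, hs⟩ := Set.nonempty_uIcc (a := t0) (b := x)
    have := le_trans (norm_nonneg (y s)) (hB s hs)
    positivity
  have h := pair_gronwall_s9 (y := fun s => y s - z s) (y' := fun s => y' s - z' s)
    (f := fun s => Q s * (y s - z s) - ω^2 * y s)
    (fun s => (hy s).sub (hz s))
    (fun s => by
      have := (hy' s).sub (hz' s)
      exact this.congr_deriv (by ring)) hK1 hε t0 x ?_
  · exact le_trans (le_max_left _ _) h
  · intro s hs
    have h1 : ‖Q s * (y s - z s) - ω^2 * y s‖ ≤ M * ‖y s - z s‖ + ‖ω‖^2 * B := by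
      calc ‖Q s * (y s - z s) - ω^2 * y s‖ ≤ ‖Q s * (y s - z s)‖ + ‖ω^2 * y s‖ := norm_sub_le _ _
      _ ≤ M * ‖y s - z s‖ + ‖ω‖^2 * B := by
          rw [norm_mul, norm_mul, norm_pow]
          have := hM s
          have := hB s hs
          have h3 : ‖Q s‖ * ‖y s - z s‖ ≤ M * ‖y s - z s‖ :=
            mul_le_mul_of_nonneg_right (hM s) (norm_nonneg _)
          have h4 : ‖ω‖^2 * ‖y s‖ ≤ ‖ω‖^2 * B :=
            mul_le_mul_of_nonneg_left (hB s hs) (by positivity)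
          linarith
    have hM0 : 0 ≤ M := le_trans (norm_nonneg _) (hM 0)
    have h2 : ‖y s - z s‖ ≤ max ‖y s - z s‖ ‖y' s - z' s‖ := le_max_left _ _
    nlinarith [norm_nonneg (y s - z s), norm_nonneg (y' s - z' s)]

lemma tendsto_of_linear_bound {g : ℝ → ℂ} {L : ℂ} {C : ℝ}
    (h : ∀ᶠ w in 𝓝[>] (0:ℝ), ‖g w - L‖ ≤ C * w) :
    Tendsto g (𝓝[>] (0:ℝ)) (𝓝 L) := by
  have hC : Tendsto (fun w : ℝ => C * w) (𝓝[>] (0:ℝ)) (𝓝 0) := by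
    have : Tendsto (fun w : ℝ => C * w) (𝓝 (0:ℝ)) (𝓝 (C * 0)) :=
      (continuous_const.mul continuous_id).tendsto 0
    simpa using this.mono_left nhdsWithin_le_nhds
  have h0 : Tendsto (fun w => g w - L) (𝓝[>] (0:ℝ)) (𝓝 0) :=
    squeeze_zero_norm' h hC
  have := h0.add_const L
  simpa using this

/-- If `f0'(d) = 0`, then for every `x`,
`lim_{ω → 0⁺} y1(x,ω)/(√(2π)·a(ω)) = −√(2/π)·f0(x)/(f0(d)² + 1)` and
`lim_{ω → 0⁺} y2(x,ω)/(√(2π)·a(ω)) = −√(2/π)·f0(x)·f0(d)/(f0(d)² + 1)`,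
where the limits are over real `ω > 0`. -/
theorem generalized_eigenfunctions_at_zero_neumann_case
    (d : ℝ) (hd : 0 < d) (q : ℝ → ℝ) (hq : Continuous q)
    (hqsupp : ∀ x : ℝ, x ∉ Set.Icc 0 d → q x = 0)
    (y1 y1' y2 y2' : ℂ → ℝ → ℂ)
    (hy1 : ∀ ω : ℂ, ω ≠ 0 → ∀ x, HasDerivAt (y1 ω) (y1' ω x) x)
    (hy1'' : ∀ ω : ℂ, ω ≠ 0 → ∀ x, HasDerivAt (y1' ω) (((q x : ℂ) - ω ^ 2) * y1 ω x) x)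
    (hy1d : ∀ ω : ℂ, ω ≠ 0 → y1 ω d = Complex.exp (Complex.I * ω * d))
    (hy1d' : ∀ ω : ℂ, ω ≠ 0 → y1' ω d = Complex.I * ω * Complex.exp (Complex.I * ω * d))
    (hy2 : ∀ ω : ℂ, ω ≠ 0 → ∀ x, HasDerivAt (y2 ω) (y2' ω x) x)
    (hy2'' : ∀ ω : ℂ, ω ≠ 0 → ∀ x, HasDerivAt (y2' ω) (((q x : ℂ) - ω ^ 2) * y2 ω x) x)
    (hy20 : ∀ ω : ℂ, ω ≠ 0 → y2 ω 0 = 1)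
    (hy20' : ∀ ω : ℂ, ω ≠ 0 → y2' ω 0 = -Complex.I * ω)
    (a : ℂ → ℂ)
    (ha : ∀ ω : ℂ, ω ≠ 0 →
      a ω = -(1 / (2 * Complex.I * ω)) * (y1' ω 0 * y2 ω 0 - y1 ω 0 * y2' ω 0))
    (f0 f0' : ℝ → ℂ)
    (hf0 : ∀ x, HasDerivAt f0 (f0' x) x)
    (hf0' : ∀ x, HasDerivAt f0' ((q x : ℂ) * f0 x) x)
    (hf00 : f0 0 = 1) (hf00' : f0' 0 = 0)
    (hf0d : f0' d = 0) :
    ∀ x : ℝ,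
      Tendsto (fun ω : ℝ => y1 (ω : ℂ) x / ((Real.sqrt (2 * Real.pi) : ℂ) * a (ω : ℂ)))
        (𝓝[>] 0)
        (𝓝 (-(Real.sqrt (2 / Real.pi) : ℂ) * f0 x / (f0 d ^ 2 + 1))) ∧
      Tendsto (fun ω : ℝ => y2 (ω : ℂ) x / ((Real.sqrt (2 * Real.pi) : ℂ) * a (ω : ℂ)))
        (𝓝[>] 0)
        (𝓝 (-(Real.sqrt (2 / Real.pi) : ℂ) * f0 x * f0 d / (f0 d ^ 2 + 1))) := by
  -- bound on q
  obtain ⟨M0, hM0⟩ := (isCompact_Icc (a := (0:ℝ)) (b := d)).exists_bound_of_continuousOn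
      hq.continuousOn
  set M : ℝ := max M0 0 with hMdef
  have hM : ∀ t : ℝ, ‖((q t : ℝ) : ℂ)‖ ≤ M := by
    intro t
    rw [Complex.norm_real]
    by_cases ht : t ∈ Set.Icc (0:ℝ) d
    · exact le_trans (hM0 t ht) (le_max_left _ _)
    · rw [hqsupp t ht]; simp only [norm_zero]; exact le_max_right M0 0
  have hMnn : (0:ℝ) ≤ M := le_max_right _ _
  set K : ℝ := M + 2 with hKdef
  have hK1 : (1:ℝ) ≤ K := by rw [hKdef]; linarith
  have hKM : M + 1 ≤ K := by rw [hKdef]; linarith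
  have hK0 : (0:ℝ) < K := by linarith
  -- continuity
  have hf0c : Continuous f0 := by
    rw [continuous_iff_continuousAt]; exact fun t => (hf0 t).continuousAt
  -- f0 is real-valued
  have hf0conj : ∀ t, (starRingEnd ℂ) (f0 t) = f0 t := by
    have hg : ∀ s, HasDerivAt (fun r => (starRingEnd ℂ) (f0 r)) ((starRingEnd ℂ) (f0' s)) s :=
      fun s => Complex.conjCLE.toContinuousLinearMap.hasFDerivAt.comp_hasDerivAt s (hf0 s)
    have hg' : ∀ s, HasDerivAt (fun r => (starRingEnd ℂ) (f0' r))
        ((starRingEnd ℂ) ((q s : ℂ) * f0 s)) s :=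
      fun s => Complex.conjCLE.toContinuousLinearMap.hasFDerivAt.comp_hasDerivAt s (hf0' s)
    have hw : ∀ s, HasDerivAt (fun r => f0 r - (starRingEnd ℂ) (f0 r))
        (f0' s - (starRingEnd ℂ) (f0' s)) s := fun s => (hf0 s).sub (hg s)
    have hw' : ∀ s, HasDerivAt (fun r => f0' r - (starRingEnd ℂ) (f0' r))
        (((q s : ℂ) - (0:ℂ)^2) * (f0 s - (starRingEnd ℂ) (f0 s))) s := by
      intro s
      have h := (hf0' s).sub (hg' s)
      refine h.congr_deriv ?_
      rw [map_mul, Complex.conj_ofReal]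
      ring
    intro t
    have hb := sol_bound hM hKM hK1 (ω := (0:ℂ)) (by simp) hw hw' 0 t
    simp only [hf00, hf00', map_one, map_zero, sub_self, norm_zero, max_self, zero_mul] at hb
    have h1 : ‖f0 t - (starRingEnd ℂ) (f0 t)‖ ≤ 0 := le_trans (le_max_left _ _) hb
    have h2 : f0 t - (starRingEnd ℂ) (f0 t) = 0 :=
      norm_le_zero_iff.mp h1
    exact (sub_eq_zero.mp h2).symm
  -- f0 d ≠ 0
  have hf0d_ne : f0 d ≠ 0 := by
    intro h0
    have hw' : ∀ s, HasDerivAt f0' (((q s : ℂ) - (0:ℂ)^2) * f0 s) s := by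
      intro s; convert hf0' s using 1; ring
    have hb := sol_bound hM hKM hK1 (ω := (0:ℂ)) (by simp) hf0 hw' d 0
    rw [hf00, hf00', h0, hf0d] at hb
    simp only [norm_one, norm_zero, max_self, zero_mul] at hb
    have : (1:ℝ) ≤ 0 := le_trans (le_max_left _ _) hb
    linarith
  have hne : f0 d ^ 2 + 1 ≠ 0 := by
    intro h
    have h1 : ((f0 d).re : ℂ) = f0 d := Complex.conj_eq_iff_re.mp (hf0conj d)
    rw [← h1] at h
    have h2 : (((f0 d).re ^ 2 + 1 : ℝ) : ℂ) = 0 := by push_cast; exact_mod_cast h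
    have h3 : ((f0 d).re ^ 2 + 1 : ℝ) = 0 := by exact_mod_cast h2
    nlinarith [sq_nonneg (f0 d).re]
  -- solution bounds
  have hwne : ∀ w : ℝ, 0 < w → ((w:ℝ):ℂ) ≠ 0 := fun w hw => Complex.ofReal_ne_zero.mpr hw.ne'
  have hwnorm : ∀ w : ℝ, 0 < w → ‖((w:ℝ):ℂ)‖ = w := fun w hw => by
    rw [Complex.norm_real, Real.norm_eq_abs, abs_of_pos hw]
  have hexpnorm : ∀ w : ℝ, ‖Complex.exp (Complex.I * (w:ℂ) * (d:ℝ))‖ = 1 := by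
    intro w
    rw [Complex.norm_exp]
    have : (Complex.I * (w:ℂ) * (d:ℝ)).re = 0 := by simp
    rw [this, Real.exp_zero]
  have KEY2 : ∀ w : ℝ, 0 < w → w ≤ 1 → ∀ t,
      max ‖y2 (w:ℂ) t‖ ‖y2' (w:ℂ) t‖ ≤ Real.exp (K * |t|) := by
    intro w hw hw1 t
    have hb := sol_bound hM hKM hK1 (ω := ((w:ℝ):ℂ)) (by rw [hwnorm w hw]; exact hw1)
      (hy2 _ (hwne w hw)) (hy2'' _ (hwne w hw)) 0 t
    have hinit : max ‖y2 (w:ℂ) 0‖ ‖y2' (w:ℂ) 0‖ ≤ 1 := by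
      rw [hy20 _ (hwne w hw), hy20' _ (hwne w hw)]
      apply max_le
      · simp
      · rw [norm_mul, norm_neg, Complex.norm_I, one_mul, hwnorm w hw]; exact hw1
    calc max ‖y2 (w:ℂ) t‖ ‖y2' (w:ℂ) t‖
        ≤ (max ‖y2 (w:ℂ) 0‖ ‖y2' (w:ℂ) 0‖) * Real.exp (K * |t - 0|) := hb
      _ ≤ 1 * Real.exp (K * |t|) := by
          rw [sub_zero]; exact mul_le_mul_of_nonneg_right hinit (Real.exp_nonneg _)
      _ = Real.exp (K * |t|) := one_mul _
  have KEY1 : ∀ w : ℝ, 0 < w → w ≤ 1 → ∀ t,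
      max ‖y1 (w:ℂ) t‖ ‖y1' (w:ℂ) t‖ ≤ Real.exp (K * |t - d|) := by
    intro w hw hw1 t
    have hb := sol_bound hM hKM hK1 (ω := ((w:ℝ):ℂ)) (by rw [hwnorm w hw]; exact hw1)
      (hy1 _ (hwne w hw)) (hy1'' _ (hwne w hw)) d t
    have hinit : max ‖y1 (w:ℂ) d‖ ‖y1' (w:ℂ) d‖ ≤ 1 := by
      rw [hy1d _ (hwne w hw), hy1d' _ (hwne w hw)]
      apply max_le
      · rw [hexpnorm w]
      · rw [norm_mul, norm_mul, Complex.norm_I, one_mul, hwnorm w hw, hexpnorm w, mul_one]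
        exact hw1
    calc max ‖y1 (w:ℂ) t‖ ‖y1' (w:ℂ) t‖
        ≤ (max ‖y1 (w:ℂ) d‖ ‖y1' (w:ℂ) d‖) * Real.exp (K * |t - d|) := hb
      _ ≤ 1 * Real.exp (K * |t - d|) :=
          mul_le_mul_of_nonneg_right hinit (Real.exp_nonneg _)
      _ = Real.exp (K * |t - d|) := one_mul _
  have habs_uIcc0 : ∀ t s : ℝ, s ∈ Set.uIcc 0 t → |s| ≤ |t| := by
    intro t s hs
    rcases Set.mem_uIcc.mp hs with ⟨h1, h2⟩ | ⟨h1, h2⟩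
    · rw [_root_.abs_of_nonneg h1]; exact le_trans h2 (le_abs_self t)
    · rw [_root_.abs_of_nonpos h2]
      calc -s ≤ -t := by linarith
        _ ≤ |t| := neg_le_abs t
  have habs_uIccd : ∀ t s : ℝ, s ∈ Set.uIcc d t → |s - d| ≤ |t - d| := by
    intro t s hs
    rcases Set.mem_uIcc.mp hs with ⟨h1, h2⟩ | ⟨h1, h2⟩
    · rw [_root_.abs_of_nonneg (by linarith)]
      calc s - d ≤ t - d := by linarith
        _ ≤ |t - d| := le_abs_self _
    · rw [_root_.abs_of_nonpos (by linarith)]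
      calc -(s - d) ≤ -(t - d) := by linarith
        _ ≤ |t - d| := neg_le_abs _
  have KEY2d : ∀ w : ℝ, 0 < w → w ≤ 1 → ∀ t,
      ‖y2 (w:ℂ) t - f0 t‖ ≤ w * gronwallBound 1 K (Real.exp (K*|t|)) |t| := by
    intro w hw hw1 t
    have hB : ∀ s ∈ Set.uIcc (0:ℝ) t, ‖y2 (w:ℂ) s‖ ≤ Real.exp (K*|t|) := by
      intro s hs
      calc ‖y2 (w:ℂ) s‖ ≤ max ‖y2 (w:ℂ) s‖ ‖y2' (w:ℂ) s‖ := le_max_left _ _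
        _ ≤ Real.exp (K * |s|) := KEY2 w hw hw1 s
        _ ≤ Real.exp (K * |t|) :=
            Real.exp_le_exp.mpr (mul_le_mul_of_nonneg_left (habs_uIcc0 t s hs) hK0.le)
    have hb := sol_diff_bound hM hKM hK1 (hy2 _ (hwne w hw)) (hy2'' _ (hwne w hw))
      hf0 hf0' 0 t hB
    rw [hy20 _ (hwne w hw), hy20' _ (hwne w hw), hf00, hf00', sub_self, norm_zero,
      sub_zero, sub_zero] at hb
    have hn : ‖-Complex.I * (w:ℂ)‖ = w := by
      rw [norm_mul, norm_neg, Complex.norm_I, one_mul, hwnorm w hw]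
    rw [hn, hwnorm w hw] at hb
    have hmax : max 0 w = w := max_eq_right hw.le
    rw [hmax] at hb
    calc ‖y2 (w:ℂ) t - f0 t‖
        ≤ gronwallBound w K (w^2 * Real.exp (K*|t|)) |t| := hb
      _ ≤ gronwallBound (w*1) K (w * Real.exp (K*|t|)) |t| :=
          gronwallBound_le_of_le (by rw [mul_one])
            (mul_le_mul_of_nonneg_right (by nlinarith) (Real.exp_nonneg _))
            (abs_nonneg _) hK0.le
      _ = w * gronwallBound 1 K (Real.exp (K*|t|)) |t| := gronwallBound_smul _ _ _ _ _
  have KEY1d : ∀ w : ℝ, 0 < w → w ≤ 1 → w * d ≤ 1 → ∀ t,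
      ‖y1 (w:ℂ) t - f0 t / f0 d‖ ≤
        w * gronwallBound (2*d+1) K (Real.exp (K*|t - d|)) |t - d| := by
    intro w hw hw1 hwd t
    have hB : ∀ s ∈ Set.uIcc d t, ‖y1 (w:ℂ) s‖ ≤ Real.exp (K*|t - d|) := by
      intro s hs
      calc ‖y1 (w:ℂ) s‖ ≤ max ‖y1 (w:ℂ) s‖ ‖y1' (w:ℂ) s‖ := le_max_left _ _
        _ ≤ Real.exp (K * |s - d|) := KEY1 w hw hw1 s
        _ ≤ Real.exp (K * |t - d|) :=
            Real.exp_le_exp.mpr (mul_le_mul_of_nonneg_left (habs_uIccd t s hs) hK0.le)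
    have hz : ∀ s, HasDerivAt (fun r => f0 r / f0 d) (f0' s / f0 d) s :=
      fun s => (hf0 s).div_const _
    have hz' : ∀ s, HasDerivAt (fun r => f0' r / f0 d) ((q s : ℂ) * (f0 s / f0 d)) s := by
      intro s
      have := (hf0' s).div_const (f0 d)
      exact this.congr_deriv (by ring)
    have hb := sol_diff_bound hM hKM hK1 (hy1 _ (hwne w hw)) (hy1'' _ (hwne w hw))
      hz hz' d t hB
    have hinit : max ‖y1 (w:ℂ) d - f0 d / f0 d‖ ‖y1' (w:ℂ) d - f0' d / f0 d‖
        ≤ (2*d+1) * w := by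
      apply max_le
      · rw [hy1d _ (hwne w hw), div_self hf0d_ne]
        have h1 : ‖Complex.I * (w:ℂ) * (d:ℝ)‖ = w * d := by
          rw [norm_mul, norm_mul, Complex.norm_I, one_mul, Complex.norm_real,
            Complex.norm_real, Real.norm_of_nonneg hw.le, Real.norm_of_nonneg hd.le]
        have h2 := Complex.norm_exp_sub_one_le (x := Complex.I * (w:ℂ) * (d:ℝ))
          (by rw [h1]; exact hwd)
        rw [h1] at h2
        calc ‖(Complex.exp (Complex.I * (w:ℂ) * (d:ℝ)) - 1)‖ ≤ 2 * (w * d) := h2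
          _ ≤ (2*d+1) * w := by nlinarith
      · rw [hy1d' _ (hwne w hw), hf0d, zero_div, sub_zero, norm_mul, norm_mul,
          Complex.norm_I, one_mul, hwnorm w hw, hexpnorm w, mul_one]
        nlinarith
    calc ‖y1 (w:ℂ) t - f0 t / f0 d‖
        ≤ gronwallBound (max ‖y1 (w:ℂ) d - f0 d / f0 d‖ ‖y1' (w:ℂ) d - f0' d / f0 d‖) K
            (‖((w:ℝ):ℂ)‖^2 * Real.exp (K*|t - d|)) |t - d| := hb
      _ ≤ gronwallBound (w * (2*d+1)) K (w * Real.exp (K*|t - d|)) |t - d| := by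
          apply gronwallBound_le_of_le (by rw [mul_comm]; exact hinit) ?_ (abs_nonneg _) hK0.le
          rw [hwnorm w hw]
          exact mul_le_mul_of_nonneg_right (by nlinarith) (Real.exp_nonneg _)
      _ = w * gronwallBound (2*d+1) K (Real.exp (K*|t - d|)) |t - d| :=
          gronwallBound_smul _ _ _ _ _
  -- Wronskian identity
  have KEYW : ∀ w : ℝ, 0 < w →
      f0 d * y2' (w:ℂ) d
        = -Complex.I * w - (w:ℂ)^2 * ∫ s in (0:ℝ)..d, f0 s * y2 (w:ℂ) s := by
    intro w hw
    have hy2c : Continuous (y2 (w:ℂ)) :=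
      continuous_iff_continuousAt.mpr fun s => (hy2 _ (hwne w hw) s).continuousAt
    have hder : ∀ s ∈ Set.uIcc (0:ℝ) d, HasDerivAt
        (fun r => f0 r * y2' (w:ℂ) r - f0' r * y2 (w:ℂ) r)
        (-(((w:ℝ):ℂ)^2) * (f0 s * y2 (w:ℂ) s)) s := by
      intro s _
      have h := ((hf0 s).mul (hy2'' _ (hwne w hw) s)).sub ((hf0' s).mul (hy2 _ (hwne w hw) s))
      exact h.congr_deriv (by ring)
    have hint : IntervalIntegrable (fun s => -(((w:ℝ):ℂ)^2) * (f0 s * y2 (w:ℂ) s))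
        MeasureTheory.volume 0 d :=
      (continuous_const.mul (hf0c.mul hy2c)).intervalIntegrable _ _
    have heq := intervalIntegral.integral_eq_sub_of_hasDerivAt hder hint
    rw [intervalIntegral.integral_const_mul] at heq
    rw [hf00, hf00', hf0d, hy20 _ (hwne w hw), hy20' _ (hwne w hw)] at heq
    linear_combination -heq
  -- integral bound
  obtain ⟨F0, hF0⟩ := (isCompact_Icc (a := (0:ℝ)) (b := d)).exists_bound_of_continuousOn
      hf0c.continuousOn
  set CI : ℝ := (max F0 0) * Real.exp (K*d) * d with hCIdef
  have KEYJ : ∀ w : ℝ, 0 < w → w ≤ 1 →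
      ‖∫ s in (0:ℝ)..d, f0 s * y2 (w:ℂ) s‖ ≤ CI := by
    intro w hw hw1
    have hC : ∀ s ∈ Set.uIoc (0:ℝ) d, ‖f0 s * y2 (w:ℂ) s‖ ≤ (max F0 0) * Real.exp (K*d) := by
      intro s hs
      rw [Set.uIoc_of_le hd.le] at hs
      rw [norm_mul]
      have h1 : ‖f0 s‖ ≤ max F0 0 := le_trans (hF0 s ⟨hs.1.le, hs.2⟩) (le_max_left _ _)
      have h2 : ‖y2 (w:ℂ) s‖ ≤ Real.exp (K*d) := by
        calc ‖y2 (w:ℂ) s‖ ≤ max ‖y2 (w:ℂ) s‖ ‖y2' (w:ℂ) s‖ := le_max_left _ _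
          _ ≤ Real.exp (K * |s|) := KEY2 w hw hw1 s
          _ ≤ Real.exp (K*d) := Real.exp_le_exp.mpr
              (mul_le_mul_of_nonneg_left (by rw [_root_.abs_of_pos hs.1]; exact hs.2) hK0.le)
      exact mul_le_mul h1 h2 (norm_nonneg _) (le_max_right F0 0)
    calc ‖∫ s in (0:ℝ)..d, f0 s * y2 (w:ℂ) s‖
        ≤ (max F0 0 * Real.exp (K*d)) * |d - 0| :=
          intervalIntegral.norm_integral_le_of_norm_le_const hC
      _ = CI := by rw [sub_zero, _root_.abs_of_pos hd, hCIdef]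
  -- formula for a
  have KEYa : ∀ w : ℝ, 0 < w → a (w:ℂ)
      = -Complex.exp (Complex.I * w * d) *
          (y2 (w:ℂ) d / 2 + 1/(2 * f0 d)
            - Complex.I * w * (∫ s in (0:ℝ)..d, f0 s * y2 (w:ℂ) s) / (2 * f0 d)) := by
    intro w hw
    have hconstW : y1' (w:ℂ) 0 * y2 (w:ℂ) 0 - y1 (w:ℂ) 0 * y2' (w:ℂ) 0
        = y1' (w:ℂ) d * y2 (w:ℂ) d - y1 (w:ℂ) d * y2' (w:ℂ) d := by
      have hder : ∀ s, HasDerivAt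
          (fun r => y1' (w:ℂ) r * y2 (w:ℂ) r - y1 (w:ℂ) r * y2' (w:ℂ) r) 0 s := by
        intro s
        have h := ((hy1'' _ (hwne w hw) s).mul (hy2 _ (hwne w hw) s)).sub
          ((hy1 _ (hwne w hw) s).mul (hy2'' _ (hwne w hw) s))
        exact h.congr_deriv (by ring)
      exact is_const_of_deriv_eq_zero (fun s => (hder s).differentiableAt)
        (fun s => (hder s).deriv) 0 d
    have hW := KEYW w hw
    have hy2d' : y2' (w:ℂ) d
        = (-Complex.I * w - (w:ℂ)^2 * ∫ s in (0:ℝ)..d, f0 s * y2 (w:ℂ) s) / f0 d := by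
      rw [eq_div_iff hf0d_ne]; linear_combination hW
    rw [ha _ (hwne w hw), hconstW, hy1d _ (hwne w hw), hy1d' _ (hwne w hw), hy2d']
    have hIne : Complex.I ≠ 0 := Complex.I_ne_zero
    have hwcne : ((w:ℝ):ℂ) ≠ 0 := hwne w hw
    field_simp
    linear_combination (-((w:ℝ):ℂ) *
      (∫ s in (0:ℝ)..d, f0 s * y2 (w:ℂ) s)) * Complex.I_sq
  -- basic filter facts
  have hIoo : Set.Ioo (0:ℝ) 1 ∈ 𝓝[>] (0:ℝ) := Ioo_mem_nhdsGT_of_mem ⟨le_refl _, one_pos⟩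
  -- limits of y2, y1
  have T2 : ∀ t, Tendsto (fun w : ℝ => y2 (w:ℂ) t) (𝓝[>] (0:ℝ)) (𝓝 (f0 t)) := by
    intro t
    apply tendsto_of_linear_bound (C := gronwallBound 1 K (Real.exp (K*|t|)) |t|)
    filter_upwards [hIoo] with w hw
    rw [mul_comm]; exact KEY2d w hw.1 hw.2.le t
  have T1 : ∀ t, Tendsto (fun w : ℝ => y1 (w:ℂ) t) (𝓝[>] (0:ℝ)) (𝓝 (f0 t / f0 d)) := by
    intro t
    apply tendsto_of_linear_bound (C := gronwallBound (2*d+1) K (Real.exp (K*|t - d|)) |t - d|)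
    have hm : Set.Ioo (0:ℝ) (min 1 (1/(d+1))) ∈ 𝓝[>] (0:ℝ) :=
      Ioo_mem_nhdsGT_of_mem ⟨le_refl _, by positivity⟩
    filter_upwards [hm] with w hw
    have hw1 : w ≤ 1 := le_trans hw.2.le (min_le_left _ _)
    have hwd : w * d ≤ 1 := by
      have h2 : w ≤ 1/(d+1) := le_trans hw.2.le (min_le_right _ _)
      have : w * d ≤ (1/(d+1)) * d := mul_le_mul_of_nonneg_right h2 hd.le
      calc w * d ≤ (1/(d+1)) * d := this
      _ ≤ 1 := by rw [div_mul_eq_mul_div, one_mul, div_le_one (by linarith)]; linarith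
    rw [mul_comm]; exact KEY1d w hw.1 hw1 hwd t
  -- limit of a
  set LA : ℂ := -(f0 d/2 + 1/(2 * f0 d)) with hLAdef
  have Ta : Tendsto (fun w : ℝ => a (w:ℂ)) (𝓝[>] (0:ℝ)) (𝓝 LA) := by
    have hterm : Tendsto (fun w : ℝ => Complex.I * (w:ℂ) *
        (∫ s in (0:ℝ)..d, f0 s * y2 (w:ℂ) s) / (2 * f0 d)) (𝓝[>] (0:ℝ)) (𝓝 0) := by
      apply tendsto_of_linear_bound (C := CI / ‖2 * f0 d‖)
      filter_upwards [hIoo] with w hw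
      rw [sub_zero, norm_div, norm_mul, norm_mul, Complex.norm_I, one_mul, hwnorm w hw.1]
      have h2d : (0:ℝ) < ‖(2:ℂ) * f0 d‖ :=
        norm_pos_iff.mpr (mul_ne_zero two_ne_zero hf0d_ne)
      calc w * ‖∫ s in (0:ℝ)..d, f0 s * y2 (w:ℂ) s‖ / ‖(2:ℂ) * f0 d‖
          = (‖∫ s in (0:ℝ)..d, f0 s * y2 (w:ℂ) s‖ / ‖(2:ℂ) * f0 d‖) * w := by ring
        _ ≤ (CI / ‖(2:ℂ) * f0 d‖) * w := by
            have := KEYJ w hw.1 hw.2.le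
            gcongr
            exact hw.1.le
    have hexp : Tendsto (fun w : ℝ => Complex.exp (Complex.I * (w:ℂ) * (d:ℝ)))
        (𝓝[>] (0:ℝ)) (𝓝 1) := by
      have hc : Continuous fun w : ℝ => Complex.exp (Complex.I * (w:ℂ) * (d:ℝ)) :=
        Complex.continuous_exp.comp
          ((continuous_const.mul Complex.continuous_ofReal).mul continuous_const)
      have h0 := hc.tendsto 0
      simp only [Complex.ofReal_zero, mul_zero, zero_mul, Complex.exp_zero] at h0
      exact h0.mono_left nhdsWithin_le_nhds
    have hmain := ((hexp.neg).mul ((((T2 d).div_const 2).add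
      (tendsto_const_nhds (x := 1/(2 * f0 d)))).sub hterm))
    have hval : -(1:ℂ) * (f0 d / 2 + 1/(2 * f0 d) - 0) = LA := by rw [hLAdef]; ring
    rw [hval] at hmain
    apply Tendsto.congr' ?_ hmain
    filter_upwards [self_mem_nhdsWithin] with w hw
    exact (KEYa w hw).symm
  -- nonvanishing of the limit
  have hLAform : LA = -((f0 d^2 + 1)/(2 * f0 d)) := by
    rw [hLAdef]; field_simp
  have hsne : ((Real.sqrt (2 * Real.pi) : ℝ) : ℂ) ≠ 0 := by
    rw [Complex.ofReal_ne_zero]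
    exact Real.sqrt_ne_zero'.mpr (by positivity)
  have hLAne : LA ≠ 0 := by
    rw [hLAform]
    exact neg_ne_zero.mpr (div_ne_zero hne (by simp [hf0d_ne]))
  have hdenne : ((Real.sqrt (2 * Real.pi) : ℝ) : ℂ) * LA ≠ 0 := mul_ne_zero hsne hLAne
  have hden : Tendsto (fun w : ℝ => ((Real.sqrt (2 * Real.pi) : ℝ) : ℂ) * a (w:ℂ))
      (𝓝[>] (0:ℝ)) (𝓝 (((Real.sqrt (2 * Real.pi) : ℝ) : ℂ) * LA)) :=
    tendsto_const_nhds.mul Ta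
  have hkey : ((Real.sqrt (2 / Real.pi) : ℝ) : ℂ) * ((Real.sqrt (2 * Real.pi) : ℝ) : ℂ) = 2 := by
    have hr : Real.sqrt (2 / Real.pi) * Real.sqrt (2 * Real.pi) = 2 := by
      rw [← Real.sqrt_mul (by positivity)]
      have h4 : 2 / Real.pi * (2 * Real.pi) = 4 := by
        field_simp
        ring
      rw [h4, show (4:ℝ) = 2^2 by norm_num, Real.sqrt_sq (by norm_num)]
    rw [← Complex.ofReal_mul, hr]
    norm_num
  set S1 : ℂ := ((Real.sqrt (2 / Real.pi) : ℝ) : ℂ) with hS1def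
  set S2 : ℂ := ((Real.sqrt (2 * Real.pi) : ℝ) : ℂ) with hS2def
  intro x
  constructor
  · have h := (T1 x).div hden hdenne
    have hS2ne : S2 ≠ 0 := hsne
    have heqv : (f0 x / f0 d) / (S2 * LA) = -S1 * f0 x / (f0 d ^ 2 + 1) := by
      rw [hLAform, div_eq_div_iff (mul_ne_zero hS2ne (neg_ne_zero.mpr
        (div_ne_zero hne (mul_ne_zero two_ne_zero hf0d_ne)))) hne]
      field_simp
      linear_combination (-(f0 x)) * hkey
    rw [heqv] at h
    exact h
  · have h := (T2 x).div hden hdenne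
    have hS2ne : S2 ≠ 0 := hsne
    have heqv : f0 x / (S2 * LA) = -S1 * f0 x * f0 d / (f0 d ^ 2 + 1) := by
      rw [hLAform, div_eq_div_iff (mul_ne_zero hS2ne (neg_ne_zero.mpr
        (div_ne_zero hne (mul_ne_zero two_ne_zero hf0d_ne)))) hne]
      field_simp
      linear_combination (-(f0 x)) * hkey
    rw [heqv] at h
    exact h
end

section
/- For the constant compactly supported potential and for all ω with ω² ≠ C, ω ≠ 0, the transmission coefficient equals a(ω) = −e^{iωd}·( cos(αd) + ((ω² + α²)/(2iωα))·sin(αd) ), where α is a square root of ω² − C. -/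
open Complex Filter Topology Asymptotics

/-- For the constant potential `q = C` on `[0,d]` (zero outside), for `ω ≠ 0`
with `ω² ≠ C`, the transmission coefficient equals
`a(ω) = −e^{iωd}(cos(αd) + ((ω² + α²)/(2iωα))sin(αd))`, where `α² = ω² − C`.
Here `a(ω)` is given by the Wronskian of the Jost solutions (taken at `x = 0`). -/
theorem transmission_coefficient_constant_potential
    (d : ℝ) (hd : 0 < d) (C : ℝ)
    (ω : ℂ) (hω : ω ≠ 0) (hωC : ω ^ 2 ≠ (C : ℂ))
    (α : ℂ) (hα : α ^ 2 = ω ^ 2 - C)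
    (y1 y1' y2 y2' : ℝ → ℂ)
    (hy1 : ∀ x, HasDerivAt y1 (y1' x) x)
    (hy1' : ∀ x : ℝ, y1' x = y1' d +
      ∫ t in d..x, (((if t ∈ Set.Icc 0 d then C else 0 : ℝ) : ℂ) - ω ^ 2) * y1 t)
    (hy1d : y1 d = Complex.exp (Complex.I * ω * d))
    (hy1d' : y1' d = Complex.I * ω * Complex.exp (Complex.I * ω * d))
    (hy2 : ∀ x, HasDerivAt y2 (y2' x) x)
    (hy2' : ∀ x : ℝ, y2' x = y2' 0 +
      ∫ t in (0 : ℝ)..x, (((if t ∈ Set.Icc 0 d then C else 0 : ℝ) : ℂ) - ω ^ 2) * y2 t)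
    (hy20 : y2 0 = 1) (hy20' : y2' 0 = -Complex.I * ω)
    (a : ℂ)
    (ha : a = -(1 / (2 * Complex.I * ω)) * (y1' 0 * y2 0 - y1 0 * y2' 0)) :
    a = -Complex.exp (Complex.I * ω * d) *
        (Complex.cos (α * d) +
          ((ω ^ 2 + α ^ 2) / (2 * Complex.I * ω * α)) * Complex.sin (α * d)) := by
  classical
  have hα0 : α ≠ 0 := by
    intro h
    apply hωC
    have h0 : ω ^ 2 - (C:ℂ) = 0 := by rw [← hα, h]; ring
    exact sub_eq_zero.mp h0
  set E := Complex.exp (Complex.I * ω * d) with hE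
  set f : ℝ → ℂ := fun t =>
    (((if t ∈ Set.Icc (0:ℝ) d then C else 0 : ℝ) : ℂ) - ω ^ 2) * y1 t with hf_def
  have hy1cont : Continuous y1 := by
    rw [continuous_iff_continuousAt]
    exact fun x => (hy1 x).continuousAt
  have hmeas : MeasureTheory.AEStronglyMeasurable f MeasureTheory.volume := by
    have m1 : Measurable fun t : ℝ => (if t ∈ Set.Icc (0:ℝ) d then (C:ℝ) else 0) :=
      Measurable.ite measurableSet_Icc measurable_const measurable_const
    exact (((Complex.measurable_ofReal.comp m1).sub measurable_const).mul
      hy1cont.measurable).aestronglyMeasurable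
  have h_int : ∀ a b : ℝ, IntervalIntegrable f MeasureTheory.volume a b := by
    intro a b
    have hg : IntervalIntegrable (fun t => (|C| + ‖ω‖^2) * ‖y1 t‖) MeasureTheory.volume a b :=
      (continuous_const.mul hy1cont.norm).intervalIntegrable a b
    refine hg.mono_fun' hmeas.restrict ?_
    refine MeasureTheory.ae_of_all _ fun t => ?_
    have h1 : ‖(((if t ∈ Set.Icc (0:ℝ) d then C else 0 : ℝ) : ℂ) - ω ^ 2)‖ ≤ |C| + ‖ω‖^2 := by
      refine (norm_sub_le _ _).trans ?_
      have hle : ‖(((if t ∈ Set.Icc (0:ℝ) d then C else 0 : ℝ)) : ℂ)‖ ≤ |C| := by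
        split <;> simp [abs_nonneg]
      have hω2 : ‖ω ^ 2‖ = ‖ω‖^2 := by simp [norm_pow]
      rw [hω2]
      exact add_le_add hle le_rfl
    calc ‖f t‖ = ‖(((if t ∈ Set.Icc (0:ℝ) d then C else 0 : ℝ) : ℂ) - ω ^ 2)‖ * ‖y1 t‖ := by
          simp [hf_def]
      _ ≤ (|C| + ‖ω‖^2) * ‖y1 t‖ := by
          exact mul_le_mul_of_nonneg_right h1 (norm_nonneg _)
  have hy1'eq : y1' = fun x => y1' d + ∫ t in d..x, f t := funext hy1'
  have hy1'cont : Continuous y1' := by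
    rw [hy1'eq]
    exact continuous_const.add (intervalIntegral.continuous_primitive h_int d)
  -- right derivative of y1' on [0, d)
  have hy1'deriv : ∀ x ∈ Set.Ico (0:ℝ) d,
      HasDerivWithinAt y1' (-α^2 * y1 x) (Set.Ici x) x := by
    intro x hx
    have hmem : ∀ᶠ t in nhdsWithin x (Set.Ioi x), t ∈ Set.Icc (0:ℝ) d := by
      have h1 : ∀ᶠ t in nhdsWithin x (Set.Ioi x), t ≤ d :=
        Filter.Eventually.filter_mono nhdsWithin_le_nhds (eventually_le_nhds hx.2)
      have h2 : ∀ᶠ t in nhdsWithin x (Set.Ioi x), t ∈ Set.Ioi x := eventually_mem_nhdsWithin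
      filter_upwards [h1, h2] with t h1t h2t
      exact ⟨le_trans hx.1 (le_of_lt h2t), h1t⟩
    have hcw : ContinuousWithinAt f (Set.Ioi x) x := by
      have hcw0 : ContinuousWithinAt (fun t => ((C:ℂ) - ω^2) * y1 t) (Set.Ioi x) x :=
        ((continuous_const.mul hy1cont).continuousAt).continuousWithinAt
      refine hcw0.congr_of_eventuallyEq ?_ ?_
      · filter_upwards [hmem] with t ht
        simp only [hf_def]
        rw [if_pos ht]
      · simp only [hf_def]
        rw [if_pos (Set.mem_Icc.mpr ⟨hx.1, le_of_lt hx.2⟩)]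
    have hmf : StronglyMeasurableAtFilter f (nhdsWithin x (Set.Ioi x)) MeasureTheory.volume :=
      ⟨Set.univ, Filter.univ_mem, by simpa using hmeas⟩
    have hD : HasDerivWithinAt (fun u => ∫ t in d..u, f t) (f x) (Set.Ici x) x :=
      intervalIntegral.integral_hasDerivWithinAt_right (h_int d x) hmf hcw
    have hfx : f x = -α^2 * y1 x := by
      have hxm : x ∈ Set.Icc (0:ℝ) d := ⟨hx.1, le_of_lt hx.2⟩
      simp only [hf_def, if_pos hxm]
      rw [hα]; ring
    rw [hy1'eq, ← hfx]
    exact hD.const_add _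
  -- Wronskian constancy
  have key : ∀ φ φD : ℝ → ℂ, (∀ x, HasDerivAt φ (φD x) x) →
      (∀ x, HasDerivAt φD (-α^2 * φ x) x) →
      y1' d * φ d - y1 d * φD d = y1' 0 * φ 0 - y1 0 * φD 0 := by
    intro φ φD hφ hφD
    set u : ℝ → ℂ := fun x => y1' x * φ x - y1 x * φD x with hu
    have hφc : Continuous φ := by
      rw [continuous_iff_continuousAt]; exact fun x => (hφ x).continuousAt
    have hφDc : Continuous φD := by
      rw [continuous_iff_continuousAt]; exact fun x => (hφD x).continuousAt
    have hucont : ContinuousOn u (Set.Icc 0 d) :=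
      (((hy1'cont.mul hφc).sub (hy1cont.mul hφDc)).continuousOn)
    have huD : ∀ x ∈ Set.Ico (0:ℝ) d, HasDerivWithinAt u 0 (Set.Ici x) x := by
      intro x hx
      have h1 : HasDerivWithinAt (fun t => y1' t * φ t)
          ((-α^2 * y1 x) * φ x + y1' x * φD x) (Set.Ici x) x :=
        (hy1'deriv x hx).mul ((hφ x).hasDerivWithinAt)
      have h2 : HasDerivWithinAt (fun t => y1 t * φD t)
          (y1' x * φD x + y1 x * (-α^2 * φ x)) (Set.Ici x) x :=
        ((hy1 x).hasDerivWithinAt).mul ((hφD x).hasDerivWithinAt)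
      have h3 := h1.sub h2
      exact h3.congr_deriv (by ring)
    have := constant_of_has_deriv_right_zero hucont huD d ⟨le_of_lt hd, le_refl d⟩
    simpa [hu] using this
  -- explicit solutions
  have hcosD : ∀ x : ℝ, HasDerivAt (fun x : ℝ => Complex.cos (α * ((x:ℂ) - d)))
      (-(α * Complex.sin (α * ((x:ℂ) - d)))) x := by
    intro x
    have hlin : HasDerivAt (fun z : ℂ => α * (z - d)) α (x:ℂ) := by
      simpa using ((hasDerivAt_id (x:ℂ)).sub_const (d:ℂ)).const_mul α
    have h1 := (Complex.hasDerivAt_cos (α * ((x:ℂ) - d))).comp (x:ℂ) hlin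
    have h2 := h1.comp_ofReal
    exact h2.congr_deriv (by ring)
  have hsinD : ∀ x : ℝ, HasDerivAt (fun x : ℝ => Complex.sin (α * ((x:ℂ) - d)))
      (α * Complex.cos (α * ((x:ℂ) - d))) x := by
    intro x
    have hlin : HasDerivAt (fun z : ℂ => α * (z - d)) α (x:ℂ) := by
      simpa using ((hasDerivAt_id (x:ℂ)).sub_const (d:ℂ)).const_mul α
    have h1 := (Complex.hasDerivAt_sin (α * ((x:ℂ) - d))).comp (x:ℂ) hlin
    have h2 := h1.comp_ofReal
    exact h2.congr_deriv (by ring)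
  have eq1 := key (fun x : ℝ => Complex.cos (α * ((x:ℂ) - d)))
      (fun x : ℝ => -(α * Complex.sin (α * ((x:ℂ) - d)))) hcosD (by
        intro x
        have h1 := ((hsinD x).const_mul α).neg
        exact h1.congr_deriv (by ring))
  have eq2 := key (fun x : ℝ => Complex.sin (α * ((x:ℂ) - d)))
      (fun x : ℝ => α * Complex.cos (α * ((x:ℂ) - d))) hsinD (by
        intro x
        have h1 := (hcosD x).const_mul α
        exact h1.congr_deriv (by ring))
  -- evaluate
  simp only [hy1d, hy1d'] at eq1 eq2
  simp only [Complex.ofReal_zero, zero_sub, sub_self, mul_zero, mul_neg, Complex.cos_neg,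
    Complex.sin_neg, Complex.cos_zero, Complex.sin_zero, mul_one, neg_neg, neg_zero,
    sub_zero, zero_mul] at eq1 eq2
  have pyth := Complex.sin_sq_add_cos_sq (α * d)
  have hQ : y1' 0 = Complex.I * ω * E * Complex.cos (α * d) + α * E * Complex.sin (α * d) := by
    linear_combination (-(Complex.cos (α*(d:ℂ)))) * eq1 + (Complex.sin (α*(d:ℂ))) * eq2 +
      (-(y1' 0)) * pyth
  have hP : α * y1 0 = α * E * Complex.cos (α * d) - Complex.I * ω * E * Complex.sin (α * d) := by
    linear_combination (Complex.sin (α*(d:ℂ))) * eq1 + (Complex.cos (α*(d:ℂ))) * eq2 -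
      (α * y1 0) * pyth
  have hne : (2:ℂ) * Complex.I * ω * α ≠ 0 :=
    mul_ne_zero (mul_ne_zero (mul_ne_zero two_ne_zero Complex.I_ne_zero) hω) hα0
  apply mul_left_cancel₀ hne
  have hlhs : ((2:ℂ) * Complex.I * ω * α) * a = -α * (y1' 0 + Complex.I * ω * y1 0) := by
    rw [ha, hy20, hy20']
    field_simp
    ring
  have hrhs : ((2:ℂ) * Complex.I * ω * α) *
      (-E * (Complex.cos (α * d) +
        ((ω ^ 2 + α ^ 2) / (2 * Complex.I * ω * α)) * Complex.sin (α * d))) =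
      -2 * Complex.I * ω * α * E * Complex.cos (α * d) -
        (ω ^ 2 + α ^ 2) * E * Complex.sin (α * d) := by
    field_simp
    ring
  rw [hlhs, hrhs]
  linear_combination (-α) * hQ + (-(Complex.I * ω)) * hP +
    (ω ^ 2 * E * Complex.sin (α * (d:ℂ))) * Complex.I_sq
end

section
/- For the constant compactly supported potential, lim_{ω → 0, ω ≠ 0} 2iω·a(ω) = −α₀·sin(α₀ d), where α₀ is a square root of −C. Consequently: if C > 0 the limit equals √C·sinh(√C·d) ≠ 0, so a(ω) has a simple pole at the origin; if C < 0 the limit equals −√(−C)·sin(√(−C)·d), which vanishes if and only if √(−C)·d = nπ for some n ∈ ℤ. Thus a(ω) fails to have a simple pole at the origin only if C ≤ 0 and √(−C)·d ∈ πℤ. -/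
open Complex Filter Topology Asymptotics intervalIntegral

lemma my_wronskian_eq (d : ℝ) (hd : 0 < d) (k : ℂ) (y y' : ℝ → ℂ)
    (hy : ∀ x, HasDerivAt y (y' x) x)
    (hy' : ∀ x ∈ Set.Icc (0:ℝ) d, y' x = y' d + ∫ t in d..x, k * y t)
    (v v' : ℝ → ℂ) (hv : ∀ x, HasDerivAt v (v' x) x)
    (hv' : ∀ x, HasDerivAt v' (k * v x) x) :
    y' 0 * v 0 - y 0 * v' 0 = y' d * v d - y d * v' d := by
  have hycont : Continuous y := by
    rw [continuous_iff_continuousAt]; exact fun x => (hy x).continuousAt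
  have hg : Continuous fun t => k * y t := continuous_const.mul hycont
  set Φ : ℝ → ℂ := fun x => y' d + ∫ t in d..x, k * y t with hΦdef
  have hΦ : ∀ x, HasDerivAt Φ (k * y x) x := by
    intro x
    have := integral_hasDerivAt_right (f := fun t => k * y t) (a := d) (b := x)
      ((hg.intervalIntegrable _ _)) hg.stronglyMeasurable.stronglyMeasurableAtFilter
      hg.continuousAt
    exact this.const_add _
  set W : ℝ → ℂ := fun x => Φ x * v x - y x * v' x with hWdef
  have hW : ∀ x ∈ Set.Icc (0:ℝ) d, HasDerivAt W 0 x := by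
    intro x hx
    have h1 : HasDerivAt (fun x => Φ x * v x) (k * y x * v x + Φ x * v' x) x :=
      (hΦ x).mul (hv x)
    have h2 : HasDerivAt (fun x => y x * v' x) (y' x * v' x + y x * (k * v x)) x :=
      (hy x).mul (hv' x)
    have h3 := h1.sub h2
    have hx' : Φ x = y' x := (hy' x hx).symm
    refine h3.congr_deriv ?_
    rw [hx']; ring
  have hcont : ContinuousOn W (Set.Icc 0 d) := fun x hx =>
    (hW x hx).continuousAt.continuousWithinAt
  have hconst := constant_of_has_deriv_right_zero hcont
    (fun x hx => (hW x (Set.mem_Icc_of_Ico hx)).hasDerivWithinAt)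
  have hWd : W d = W 0 := hconst d (Set.right_mem_Icc.mpr hd.le)
  have hΦ0 : Φ 0 = y' 0 := (hy' 0 (Set.left_mem_Icc.mpr hd.le)).symm
  have hΦd : Φ d = y' d := by simp [hΦdef]
  have := hWd
  simp only [hWdef, hΦ0, hΦd] at this
  exact this.symm

lemma my_key_val (d : ℝ) (hd : 0 < d) (C : ℝ) (ω : ℂ) (hω : ω ≠ 0)
    (y y' : ℝ → ℂ)
    (hy : ∀ x, HasDerivAt y (y' x) x)
    (hy' : ∀ x : ℝ, y' x = y' d +
      ∫ t in d..x, (((if t ∈ Set.Icc 0 d then C else 0 : ℝ) : ℂ) - ω ^ 2) * y t)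
    (hyd : y d = Complex.exp (Complex.I * ω * d))
    (hyd' : y' d = Complex.I * ω * Complex.exp (Complex.I * ω * d))
    (β : ℂ) (hβ : β ≠ 0) (hβ2 : β ^ 2 = ω ^ 2 - C) :
    y' 0 + Complex.I * ω * y 0 =
      Complex.exp (Complex.I * ω * d) *
        (2 * Complex.I * ω * Complex.cos (β * d) +
          (β ^ 2 + ω ^ 2) * (Complex.sin (β * d) / β)) := by
  set k : ℂ := (C : ℂ) - ω ^ 2 with hk
  -- restricted integral equation
  have hy'' : ∀ x ∈ Set.Icc (0:ℝ) d, y' x = y' d + ∫ t in d..x, k * y t := by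
    intro x hx
    rw [hy' x]
    congr 1
    apply intervalIntegral.integral_congr
    intro t ht
    have htmem : t ∈ Set.Icc (0:ℝ) d := by
      have : Set.uIcc d x ⊆ Set.uIcc (0:ℝ) d := by
        apply Set.uIcc_subset_uIcc
        · exact Set.right_mem_uIcc
        · rw [Set.uIcc_of_le hd.le]; exact hx
      have := this ht
      rwa [Set.uIcc_of_le hd.le] at this
    simp [htmem, hk]
  -- inner function derivative
  have hinner : ∀ z : ℂ, HasDerivAt (fun z : ℂ => β * (z - (d:ℂ))) β z := by
    intro z
    simpa using ((hasDerivAt_id z).sub_const (d:ℂ)).const_mul β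
  -- v1 = cos (β (x - d))
  have hv1C : ∀ z : ℂ, HasDerivAt (fun z : ℂ => Complex.cos (β * (z - d)))
      (-(β * Complex.sin (β * (z - d)))) z := by
    intro z
    have := (Complex.hasDerivAt_cos (β * (z - d))).comp z (hinner z)
    refine this.congr_deriv ?_; ring
  have hv1C' : ∀ z : ℂ, HasDerivAt (fun z : ℂ => -(β * Complex.sin (β * (z - d))))
      (k * Complex.cos (β * (z - d))) z := by
    intro z
    have h1 := ((Complex.hasDerivAt_sin (β * (z - d))).comp z (hinner z)).const_mul β
    have h2 := h1.neg
    refine h2.congr_deriv ?_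
    have : k = -β ^ 2 := by rw [hk, hβ2]; ring
    rw [this]; ring
  set v1 : ℝ → ℂ := fun x => Complex.cos (β * ((x:ℂ) - d)) with hv1def
  set v1' : ℝ → ℂ := fun x => -(β * Complex.sin (β * ((x:ℂ) - d))) with hv1'def
  have hv1 : ∀ x : ℝ, HasDerivAt v1 (v1' x) x := fun x => (hv1C x).comp_ofReal
  have hv1' : ∀ x : ℝ, HasDerivAt v1' (k * v1 x) x := fun x => (hv1C' x).comp_ofReal
  -- v2 = sin (β (x - d)) / β
  have hv2C : ∀ z : ℂ, HasDerivAt (fun z : ℂ => Complex.sin (β * (z - d)) / β)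
      (Complex.cos (β * (z - d))) z := by
    intro z
    have h1 := ((Complex.hasDerivAt_sin (β * (z - d))).comp z (hinner z)).div_const β
    refine h1.congr_deriv ?_
    field_simp
  have hv2C' : ∀ z : ℂ, HasDerivAt (fun z : ℂ => Complex.cos (β * (z - d)))
      (k * (Complex.sin (β * (z - d)) / β)) z := by
    intro z
    have := hv1C z
    convert this using 1
    have : k = -β ^ 2 := by rw [hk, hβ2]; ring
    rw [this]; field_simp
  set v2 : ℝ → ℂ := fun x => Complex.sin (β * ((x:ℂ) - d)) / β with hv2def
  set v2' : ℝ → ℂ := fun x => Complex.cos (β * ((x:ℂ) - d)) with hv2'def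
  have hv2 : ∀ x : ℝ, HasDerivAt v2 (v2' x) x := fun x => (hv2C x).comp_ofReal
  have hv2' : ∀ x : ℝ, HasDerivAt v2' (k * v2 x) x := fun x => (hv2C' x).comp_ofReal
  have W1 := my_wronskian_eq d hd k y y' hy hy'' v1 v1' hv1 hv1'
  have W2 := my_wronskian_eq d hd k y y' hy hy'' v2 v2' hv2 hv2'
  -- evaluate
  have hβd : β * (((0:ℝ):ℂ) - d) = -(β * d) := by push_cast; ring
  have hβdd : β * (((d:ℝ):ℂ) - d) = 0 := by push_cast; ring
  simp only [hv1def, hv1'def, hv2def, hv2'def, hβd, hβdd, Complex.cos_neg, Complex.sin_neg,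
    Complex.cos_zero, Complex.sin_zero, hyd, hyd'] at W1 W2
  set E := Complex.exp (Complex.I * ω * d)
  set c := Complex.cos (β * d)
  set s := Complex.sin (β * d)
  -- W1 : y' 0 * c - y 0 * -(β * -s) = I * ω * E * 1 - E * -(β * 0)
  -- W2 : y' 0 * (-s / β) - y 0 * c = I * ω * E * (0/β) - E * 1
  have hpyth : s ^ 2 + c ^ 2 = 1 := Complex.sin_sq_add_cos_sq (β * d)
  have e1 : y' 0 * c - y 0 * β * s = Complex.I * ω * E := by
    linear_combination W1
  have e2 : y' 0 * s + y 0 * β * c = β * E := by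
    field_simp at W2
    linear_combination -W2
  have main : (y' 0 + Complex.I * ω * y 0) * β =
      E * (2 * Complex.I * ω * c * β + (β ^ 2 + ω ^ 2) * s) := by
    linear_combination (β * c - Complex.I * ω * s) * e1 + (β * s + Complex.I * ω * c) * e2 +
      (-(y' 0) * β - Complex.I * ω * y 0 * β) * hpyth - ω ^ 2 * s * E * Complex.I_sq
  field_simp
  linear_combination main

/-- For the constant potential `q = C` on `[0,d]` (zero outside),
`lim_{ω→0, ω≠0} 2iω·a(ω) = −α₀·sin(α₀d)` where `α₀² = −C`. Consequently, for `C > 0` the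
limit equals `√C·sinh(√C·d) ≠ 0` (so `a` has a simple pole at the origin); for `C < 0` the
limit equals `−√(−C)·sin(√(−C)·d)`, which vanishes iff `√(−C)·d = nπ` for some `n ∈ ℤ`.
Thus the limit vanishes (i.e. `a` fails to have a simple pole at the origin) only if
`C ≤ 0` and `√(−C)·d ∈ πℤ`. -/
theorem transmission_pole_constant_potential
    (d : ℝ) (hd : 0 < d) (C : ℝ)
    (α₀ : ℂ) (hα₀ : α₀ ^ 2 = -(C : ℂ))
    (y1 y1' y2 y2' : ℂ → ℝ → ℂ)
    (hy1 : ∀ ω : ℂ, ω ≠ 0 → ∀ x, HasDerivAt (y1 ω) (y1' ω x) x)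
    (hy1' : ∀ ω : ℂ, ω ≠ 0 → ∀ x : ℝ, y1' ω x = y1' ω d +
      ∫ t in d..x, (((if t ∈ Set.Icc 0 d then C else 0 : ℝ) : ℂ) - ω ^ 2) * y1 ω t)
    (hy1d : ∀ ω : ℂ, ω ≠ 0 → y1 ω d = Complex.exp (Complex.I * ω * d))
    (hy1d' : ∀ ω : ℂ, ω ≠ 0 → y1' ω d = Complex.I * ω * Complex.exp (Complex.I * ω * d))
    (hy2 : ∀ ω : ℂ, ω ≠ 0 → ∀ x, HasDerivAt (y2 ω) (y2' ω x) x)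
    (hy2' : ∀ ω : ℂ, ω ≠ 0 → ∀ x : ℝ, y2' ω x = y2' ω 0 +
      ∫ t in (0 : ℝ)..x, (((if t ∈ Set.Icc 0 d then C else 0 : ℝ) : ℂ) - ω ^ 2) * y2 ω t)
    (hy20 : ∀ ω : ℂ, ω ≠ 0 → y2 ω 0 = 1)
    (hy20' : ∀ ω : ℂ, ω ≠ 0 → y2' ω 0 = -Complex.I * ω)
    (a : ℂ → ℂ)
    (ha : ∀ ω : ℂ, ω ≠ 0 →
      a ω = -(1 / (2 * Complex.I * ω)) * (y1' ω 0 * y2 ω 0 - y1 ω 0 * y2' ω 0)) :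
    Tendsto (fun ω : ℂ => 2 * Complex.I * ω * a ω) (𝓝[≠] 0)
      (𝓝 (-α₀ * Complex.sin (α₀ * d))) ∧
    (0 < C →
      -α₀ * Complex.sin (α₀ * d) = (Real.sqrt C * Real.sinh (Real.sqrt C * d) : ℝ) ∧
      -α₀ * Complex.sin (α₀ * d) ≠ 0) ∧
    (C < 0 →
      -α₀ * Complex.sin (α₀ * d) = (-(Real.sqrt (-C)) * Real.sin (Real.sqrt (-C) * d) : ℝ) ∧
      (-α₀ * Complex.sin (α₀ * d) = 0 ↔ ∃ n : ℤ, Real.sqrt (-C) * d = n * Real.pi)) ∧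
    (-α₀ * Complex.sin (α₀ * d) = 0 →
      C ≤ 0 ∧ ∃ n : ℤ, Real.sqrt (-C) * d = n * Real.pi) := by
  -- main algebraic identity
  have keyfull : ∀ ω : ℂ, ω ≠ 0 → ∀ β : ℂ, β ≠ 0 → β ^ 2 = ω ^ 2 - C →
      2 * Complex.I * ω * a ω =
        -(Complex.exp (Complex.I * ω * d) *
          (2 * Complex.I * ω * Complex.cos (β * d) +
            (β ^ 2 + ω ^ 2) * (Complex.sin (β * d) / β))) := by
    intro ω hω β hβ hβ2
    have hk := my_key_val d hd C ω hω (y1 ω) (y1' ω) (hy1 ω hω) (hy1' ω hω)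
      (hy1d ω hω) (hy1d' ω hω) β hβ hβ2
    have h2 : 2 * Complex.I * ω * a ω = -(y1' ω 0 + Complex.I * ω * y1 ω 0) := by
      rw [ha ω hω, hy20 ω hω, hy20' ω hω]
      field_simp
      ring
    rw [h2, hk]
  -- Part 1 : the limit
  have part1 : Tendsto (fun ω : ℂ => 2 * Complex.I * ω * a ω) (𝓝[≠] 0)
      (𝓝 (-α₀ * Complex.sin (α₀ * d))) := by
    by_cases hC : C = 0
    · -- C = 0, α₀ = 0
      have hα : α₀ = 0 := by
        have h := hα₀
        rw [hC] at h
        simpa [pow_eq_zero_iff] using h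
      set H : ℂ → ℂ := fun ω =>
        -(Complex.exp (Complex.I * ω * d) *
          (2 * Complex.I * ω * Complex.cos (ω * d) + 2 * ω * Complex.sin (ω * d))) with hHdef
      have hHcont : Continuous H := by
        apply Continuous.neg
        apply Continuous.mul
        · exact Complex.continuous_exp.comp (by fun_prop)
        · apply Continuous.add
          · exact (by fun_prop : Continuous fun ω : ℂ => 2 * Complex.I * ω).mul
              (Complex.continuous_cos.comp (by fun_prop))
          · exact (by fun_prop : Continuous fun ω : ℂ => 2 * ω).mul
              (Complex.continuous_sin.comp (by fun_prop))
      have hH0 : H 0 = 0 := by simp [hHdef]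
      have hHt : Tendsto H (𝓝[≠] (0:ℂ)) (𝓝 (-α₀ * Complex.sin (α₀ * d))) := by
        have h5 : Tendsto H (𝓝[≠] (0:ℂ)) (𝓝 (H 0)) :=
          (hHcont.tendsto 0).mono_left nhdsWithin_le_nhds
        rw [hH0] at h5
        simpa [hα] using h5
      apply hHt.congr'
      filter_upwards [self_mem_nhdsWithin] with ω hω
      have hβ2 : ω ^ 2 = ω ^ 2 - (C:ℂ) := by rw [hC]; push_cast; ring
      have hk := keyfull ω hω ω hω hβ2
      rw [hHdef]
      simp only
      rw [hk]
      have hωne : ω ≠ 0 := hω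
      field_simp
      ring
    · -- C ≠ 0, α₀ ≠ 0
      have hα0ne : α₀ ≠ 0 := by
        intro h
        rw [h] at hα₀
        have h6 : (C:ℂ) = 0 := by linear_combination hα₀
        exact hC (by exact_mod_cast h6)
      set βf : ℂ → ℂ := fun ω => α₀ * (1 + ω ^ 2 / α₀ ^ 2) ^ ((1:ℂ)/2) with hβfdef
      have hwc : Continuous fun ω : ℂ => 1 + ω ^ 2 / α₀ ^ 2 :=
        continuous_const.add ((continuous_pow 2).div_const _)
      have hw : Tendsto (fun ω : ℂ => 1 + ω ^ 2 / α₀ ^ 2) (𝓝 0) (𝓝 1) := by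
        simpa using hwc.tendsto 0
      have hcp : ContinuousAt (fun z : ℂ => z ^ ((1:ℂ)/2)) 1 :=
        continuousAt_cpow_const Complex.one_mem_slitPlane
      have hβt : Tendsto βf (𝓝 0) (𝓝 α₀) := by
        have h2 := hcp.tendsto.comp hw
        have h3 : Tendsto βf (𝓝 0) (𝓝 (α₀ * (1:ℂ) ^ ((1:ℂ)/2))) :=
          tendsto_const_nhds.mul h2
        simpa using h3
      have t1 : Tendsto (fun ω : ℂ => Complex.exp (Complex.I * ω * d)) (𝓝 0) (𝓝 1) := by
        have hc : Continuous fun ω : ℂ => Complex.exp (Complex.I * ω * d) :=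
          Complex.continuous_exp.comp (by fun_prop)
        simpa using hc.tendsto 0
      have t2 : Tendsto (fun ω : ℂ => 2 * Complex.I * ω) (𝓝 (0:ℂ)) (𝓝 0) := by
        have hc : Continuous fun ω : ℂ => 2 * Complex.I * ω := by fun_prop
        simpa using hc.tendsto 0
      have t3 : Tendsto (fun ω : ℂ => Complex.cos (βf ω * d)) (𝓝 0)
          (𝓝 (Complex.cos (α₀ * d))) :=
        (Complex.continuous_cos.tendsto _).comp (hβt.mul_const _)
      have t4 : Tendsto (fun ω : ℂ => βf ω ^ 2 + ω ^ 2) (𝓝 0) (𝓝 (α₀ ^ 2)) := by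
        have := (hβt.pow 2).add ((continuous_pow 2).tendsto (0:ℂ))
        simpa using this
      have t5 : Tendsto (fun ω : ℂ => Complex.sin (βf ω * d) / βf ω) (𝓝 0)
          (𝓝 (Complex.sin (α₀ * d) / α₀)) :=
        (((Complex.continuous_sin.tendsto _).comp (hβt.mul_const _)).div hβt hα0ne)
      have hGt : Tendsto (fun ω : ℂ =>
          -(Complex.exp (Complex.I * ω * d) *
            (2 * Complex.I * ω * Complex.cos (βf ω * d) +
              (βf ω ^ 2 + ω ^ 2) * (Complex.sin (βf ω * d) / βf ω)))) (𝓝 0)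
          (𝓝 (-(1 * (0 * Complex.cos (α₀ * d) +
              α₀ ^ 2 * (Complex.sin (α₀ * d) / α₀))))) :=
        (t1.mul ((t2.mul t3).add (t4.mul t5))).neg
      have hval : -(1 * ((0:ℂ) * Complex.cos (α₀ * d) +
          α₀ ^ 2 * (Complex.sin (α₀ * d) / α₀))) = -α₀ * Complex.sin (α₀ * d) := by
        field_simp
        ring
      rw [hval] at hGt
      apply (hGt.mono_left nhdsWithin_le_nhds).congr'
      have h1 : ∀ᶠ ω : ℂ in 𝓝 0, 1 + ω ^ 2 / α₀ ^ 2 ≠ 0 := hw.eventually_ne one_ne_zero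
      have h2 : ∀ᶠ ω : ℂ in 𝓝 0, ω ^ 2 - (C:ℂ) ≠ 0 := by
        have hc : Tendsto (fun ω : ℂ => ω ^ 2 - (C:ℂ)) (𝓝 0) (𝓝 (-(C:ℂ))) := by
          have h7 : Continuous fun ω : ℂ => ω ^ 2 - (C:ℂ) :=
            (continuous_pow 2).sub continuous_const
          simpa using h7.tendsto (0:ℂ)
        exact hc.eventually_ne (by simpa using fun h => hC (by exact_mod_cast h))
      filter_upwards [self_mem_nhdsWithin, h1.filter_mono nhdsWithin_le_nhds,
        h2.filter_mono nhdsWithin_le_nhds] with ω hω hw0 hβ20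
      have hwpow : ((1 + ω ^ 2 / α₀ ^ 2) ^ ((1:ℂ)/2)) ^ 2 = 1 + ω ^ 2 / α₀ ^ 2 := by
        rw [sq, ← Complex.cpow_add _ _ hw0]
        norm_num
      have hβ2 : βf ω ^ 2 = ω ^ 2 - C := by
        have e : βf ω ^ 2 = α₀ ^ 2 * (1 + ω ^ 2 / α₀ ^ 2) := by
          rw [hβfdef]; simp only [mul_pow, hwpow]
        rw [e]
        have e2 : α₀ ^ 2 * (1 + ω ^ 2 / α₀ ^ 2) = α₀ ^ 2 + ω ^ 2 := by
          field_simp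
        rw [e2, hα₀]; ring
      have hβne : βf ω ≠ 0 := by
        intro h
        rw [h] at hβ2
        simp at hβ2
        exact hβ20 hβ2.symm
      exact (keyfull ω hω (βf ω) hβne hβ2).symm
  -- evenness helper
  have heven : ∀ γ : ℂ, -(-γ) * Complex.sin (-γ * d) = -γ * Complex.sin (γ * d) := by
    intro γ
    rw [show -γ * (d:ℂ) = -(γ * d) by ring, Complex.sin_neg]
    ring
  -- Part 2
  have part2 : 0 < C →
      -α₀ * Complex.sin (α₀ * d) = (Real.sqrt C * Real.sinh (Real.sqrt C * d) : ℝ) ∧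
      -α₀ * Complex.sin (α₀ * d) ≠ 0 := by
    intro hCpos
    set r := Real.sqrt C with hrdef
    have hr : ((r:ℂ)) ^ 2 = (C:ℂ) := by
      rw [← Complex.ofReal_pow, Real.sq_sqrt hCpos.le]
    have hcases : α₀ = Complex.I * r ∨ α₀ = -(Complex.I * r) := by
      have hz : (α₀ - Complex.I * r) * (α₀ + Complex.I * r) = 0 := by
        linear_combination hα₀ - (r:ℂ) ^ 2 * Complex.I_sq + hr
      rcases mul_eq_zero.mp hz with h | h
      · left; linear_combination h
      · right; linear_combination h
    have hposval : -(Complex.I * (r:ℂ)) * Complex.sin (Complex.I * r * d) =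
        ((r * Real.sinh (r * d) : ℝ) : ℂ) := by
      rw [show Complex.I * (r:ℂ) * (d:ℂ) = (((r * d : ℝ)):ℂ) * Complex.I by push_cast; ring,
        Complex.sin_mul_I]
      push_cast [Complex.ofReal_sinh]
      linear_combination -(r:ℂ) * Complex.sinh ((r:ℂ) * (d:ℂ)) * Complex.I_sq
    have hval : -α₀ * Complex.sin (α₀ * d) = ((r * Real.sinh (r * d) : ℝ) : ℂ) := by
      rcases hcases with h | h
      · rw [h]; exact hposval
      · rw [h, heven]; exact hposval
    refine ⟨hval, ?_⟩
    rw [hval]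
    rw [Complex.ofReal_ne_zero]
    have hrpos : 0 < r := Real.sqrt_pos.mpr hCpos
    exact ne_of_gt (mul_pos hrpos (Real.sinh_pos_iff.mpr (mul_pos hrpos hd)))
  -- Part 3
  have part3 : C < 0 →
      -α₀ * Complex.sin (α₀ * d) = (-(Real.sqrt (-C)) * Real.sin (Real.sqrt (-C) * d) : ℝ) ∧
      (-α₀ * Complex.sin (α₀ * d) = 0 ↔ ∃ n : ℤ, Real.sqrt (-C) * d = n * Real.pi) := by
    intro hCneg
    set r := Real.sqrt (-C) with hrdef
    have hr : ((r:ℂ)) ^ 2 = -(C:ℂ) := by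
      rw [← Complex.ofReal_pow, Real.sq_sqrt (by linarith : (0:ℝ) ≤ -C)]
      push_cast; ring
    have hcases : α₀ = (r:ℂ) ∨ α₀ = -(r:ℂ) := by
      have hz : (α₀ - r) * (α₀ + r) = 0 := by
        linear_combination hα₀ - hr
      rcases mul_eq_zero.mp hz with h | h
      · left; linear_combination h
      · right; linear_combination h
    have hposval : -((r:ℂ)) * Complex.sin ((r:ℂ) * d) =
        ((-r * Real.sin (r * d) : ℝ) : ℂ) := by
      push_cast [Complex.ofReal_sin]
      ring
    have hval : -α₀ * Complex.sin (α₀ * d) = ((-r * Real.sin (r * d) : ℝ) : ℂ) := by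
      rcases hcases with h | h
      · rw [h]; exact hposval
      · rw [h, heven]; exact hposval
    refine ⟨hval, ?_⟩
    rw [hval, Complex.ofReal_eq_zero]
    have hrpos : 0 < r := Real.sqrt_pos.mpr (by linarith)
    constructor
    · intro h
      have hs : Real.sin (r * d) = 0 := by
        rcases mul_eq_zero.mp h with h' | h'
        · exact absurd h' (by simpa using ne_of_gt hrpos)
        · exact h'
      obtain ⟨n, hn⟩ := Real.sin_eq_zero_iff.mp hs
      exact ⟨n, hn.symm⟩
    · rintro ⟨n, hn⟩
      have hs : Real.sin (r * d) = 0 := Real.sin_eq_zero_iff.mpr ⟨n, hn.symm⟩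
      rw [hs]; ring
  refine ⟨part1, part2, part3, ?_⟩
  intro h0
  have hC0 : C ≤ 0 := by
    by_contra h
    exact (part2 (lt_of_not_ge h)).2 h0
  refine ⟨hC0, ?_⟩
  rcases lt_or_eq_of_le hC0 with h | h
  · exact (part3 h).2.mp h0
  · exact ⟨0, by simp [h]⟩
end
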